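/- arXiv:1407.8235 — 10 statements merged into one kernel-verified Lean document; each statement's English description precedes it below -/
import Mathlib

section
/- Let i ≤ j with j ≥ 2i. The map sending the H_{i,j}-orbit of an injection f : [i] → [j] to the triple (f⁻¹[i], f|_{f⁻¹[i]}) is a bijection from the set of H_{i,j}-orbits of injections [i] → [j] onto the set of pairs (U, a) where U ⊆ [i] and a : U → [i] is an injection. -/
/-- Injections `[i] → [j]`. -/
def Inj (i j : ℕ) := {f : Fin i → Fin j // Function.Injective f}

/-- Pairs `(U, a)` where `U ⊆ [i]` and `a : U → [i]` is an injection. -/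
def Pairs (i : ℕ) := Σ U : Finset (Fin i), {a : {x : Fin i // x ∈ U} → Fin i // Function.Injective a}

/-- The map sending an injection `f : [i] → [j]` to the pair
`(f⁻¹[i], f|_{f⁻¹[i]})`. -/
def toPair (i j : ℕ) (f : Inj i j) : Pairs i :=
  ⟨Finset.univ.filter (fun r : Fin i => (f.1 r : ℕ) < i),
   ⟨fun r => ⟨(f.1 r.1 : ℕ), (Finset.mem_filter.mp r.2).2⟩,
    by
      intro a b h
      have h' : (f.1 a.1 : ℕ) = (f.1 b.1 : ℕ) := by simpa using h
      exact Subtype.ext (f.2 (Fin.ext h'))⟩⟩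

lemma pairs_mk_eq {i : ℕ} {U V : Finset (Fin i)}
    {a : {a : {x : Fin i // x ∈ U} → Fin i // Function.Injective a}}
    {b : {a : {x : Fin i // x ∈ V} → Fin i // Function.Injective a}}
    (hUV : U = V)
    (hab : ∀ x (hx : x ∈ U) (hx' : x ∈ V), a.1 ⟨x, hx⟩ = b.1 ⟨x, hx'⟩) :
    (⟨U, a⟩ : Pairs i) = ⟨V, b⟩ := by
  subst hUV
  congr 1
  exact Subtype.ext (funext fun x => hab x.1 x.2 x.2)

lemma pairs_mk_inj {i : ℕ} {U V : Finset (Fin i)}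
    {a : {a : {x : Fin i // x ∈ U} → Fin i // Function.Injective a}}
    {b : {a : {x : Fin i // x ∈ V} → Fin i // Function.Injective a}}
    (h : (⟨U, a⟩ : Pairs i) = ⟨V, b⟩) :
    ∃ hUV : U = V, ∀ x (hx : x ∈ U) (hx' : x ∈ V), a.1 ⟨x, hx⟩ = b.1 ⟨x, hx'⟩ := by
  cases h
  exact ⟨rfl, fun x hx hx' => rfl⟩

/-- for `j ≥ 2i`, the map `f ↦ (f⁻¹[i], f|_{f⁻¹[i]})` induces a
bijection from the set of `H_{i,j}`-orbits of injections `[i] → [j]` onto the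
set of pairs `(U, a)` with `U ⊆ [i]` and `a : U → [i]` injective. -/
theorem stmt_4 (i j : ℕ) (hij : i ≤ j) (h2i : 2 * i ≤ j) :
    (∀ f g : Inj i j,
      toPair i j f = toPair i j g ↔
        ∃ σ : Equiv.Perm (Fin j),
          (∀ r : Fin i, σ (Fin.castLE hij r) = Fin.castLE hij r) ∧ σ ∘ f.1 = g.1) ∧
    Function.Surjective (toPair i j) := by
  classical
  constructor
  · intro f g
    constructor
    · intro h
      obtain ⟨hU, hab⟩ := pairs_mk_inj h
      have hmem : ∀ r : Fin i, (f.1 r : ℕ) < i ↔ (g.1 r : ℕ) < i := by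
        intro r
        have := Finset.ext_iff.mp hU r
        simpa using this
      have hval : ∀ r : Fin i, (f.1 r : ℕ) < i → f.1 r = g.1 r := by
        intro r hr
        have hr' : (g.1 r : ℕ) < i := (hmem r).1 hr
        have h2 := hab r (by simp [hr]) (by simp [hr'])
        exact Fin.ext (by simpa using congrArg Fin.val h2)
      set p : Fin j → Prop := fun x => (x : ℕ) < i ∨ ∃ r, f.1 r = x with hp
      set q : Fin j → Prop := fun x => (x : ℕ) < i ∨ ∃ r, g.1 r = x with hq
      have key : ∀ (x : Fin j) (hx : ¬ (x : ℕ) < i) (hpx : p x),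
          ∃ r : Fin i, f.1 r = x ∧ ¬ (f.1 r : ℕ) < i := by
        intro x hx hpx
        obtain ⟨r, hr⟩ := hpx.resolve_left hx
        exact ⟨r, hr, by rw [hr]; exact hx⟩
      -- construct the bijection on the subtypes
      let ψ : {x : Fin j // p x} → {x : Fin j // q x} := fun x =>
        if hx : (x.1 : ℕ) < i then ⟨x.1, Or.inl hx⟩
        else ⟨g.1 (Classical.choose (x.2.resolve_left hx)),
              Or.inr ⟨Classical.choose (x.2.resolve_left hx), rfl⟩⟩
      have hψ_lt : ∀ (x : Fin j) (hx : (x : ℕ) < i) (hpx : p x), ψ ⟨x, hpx⟩ = ⟨x, Or.inl hx⟩ := by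
        intro x hx hpx
        simp only [ψ, dif_pos hx]
      have hψ_ge : ∀ (r : Fin i) (hpx : p (f.1 r)) (hx : ¬ (f.1 r : ℕ) < i),
          ψ ⟨f.1 r, hpx⟩ = ⟨g.1 r, Or.inr ⟨r, rfl⟩⟩ := by
        intro r hpx hx
        simp only [ψ, dif_neg hx]
        have hspec := Classical.choose_spec (hpx.resolve_left hx)
        have : Classical.choose (hpx.resolve_left hx) = r := f.2 hspec
        simp [this]
      have hψ_inj : Function.Injective ψ := by
        intro x y hxy
        by_cases hx : (x.1 : ℕ) < i <;> by_cases hy : (y.1 : ℕ) < i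
        · rw [hψ_lt x.1 hx x.2, hψ_lt y.1 hy y.2] at hxy
          exact Subtype.ext (by simpa using congrArg Subtype.val hxy)
        · obtain ⟨r, hr, hrge⟩ := key y.1 hy y.2
          have hy2 : p (f.1 r) := hr ▸ y.2
          have : (⟨y.1, y.2⟩ : {x : Fin j // p x}) = ⟨f.1 r, hy2⟩ := by
            exact Subtype.ext hr.symm
          rw [hψ_lt x.1 hx x.2] at hxy
          rw [show y = ⟨f.1 r, hy2⟩ from Subtype.ext hr.symm, hψ_ge r hy2 hrge] at hxy
          have hxval : x.1 = g.1 r := congrArg Subtype.val hxy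
          have : (g.1 r : ℕ) < i := hxval ▸ hx
          exact absurd (f.1 r).2 (by rw [hr]; exact fun _ => hrge ((hmem r).2 this))
        · obtain ⟨r, hr, hrge⟩ := key x.1 hx x.2
          have hx2 : p (f.1 r) := hr ▸ x.2
          rw [hψ_lt y.1 hy y.2] at hxy
          rw [show x = ⟨f.1 r, hx2⟩ from Subtype.ext hr.symm, hψ_ge r hx2 hrge] at hxy
          have hyval : g.1 r = y.1 := congrArg Subtype.val hxy
          have : (g.1 r : ℕ) < i := hyval ▸ hy
          exact absurd this (fun hh => hrge ((hmem r).2 hh))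
        · obtain ⟨r, hr, hrge⟩ := key x.1 hx x.2
          obtain ⟨s, hs, hsge⟩ := key y.1 hy y.2
          have hx2 : p (f.1 r) := hr ▸ x.2
          have hy2 : p (f.1 s) := hs ▸ y.2
          rw [show x = ⟨f.1 r, hx2⟩ from Subtype.ext hr.symm, hψ_ge r hx2 hrge,
              show y = ⟨f.1 s, hy2⟩ from Subtype.ext hs.symm, hψ_ge s hy2 hsge] at hxy
          have : r = s := g.2 (congrArg Subtype.val hxy)
          exact Subtype.ext (by rw [← hr, ← hs, this])
      have hψ_surj : Function.Surjective ψ := by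
        intro y
        by_cases hy : (y.1 : ℕ) < i
        · exact ⟨⟨y.1, Or.inl hy⟩, hψ_lt y.1 hy _⟩
        · obtain ⟨r, hr⟩ := y.2.resolve_left hy
          have hgr : ¬ (g.1 r : ℕ) < i := by rw [hr]; exact hy
          have hfr : ¬ (f.1 r : ℕ) < i := fun hh => hgr ((hmem r).1 hh)
          refine ⟨⟨f.1 r, Or.inr ⟨r, rfl⟩⟩, ?_⟩
          rw [hψ_ge r (Or.inr ⟨r, rfl⟩) hfr]
          exact Subtype.ext hr
      let e : {x : Fin j // p x} ≃ {x : Fin j // q x} := Equiv.ofBijective ψ ⟨hψ_inj, hψ_surj⟩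
      refine ⟨e.extendSubtype, ?_, ?_⟩
      · intro r
        have hlt : ((Fin.castLE hij r : Fin j) : ℕ) < i := r.2
        have hpx : p (Fin.castLE hij r) := Or.inl hlt
        have := Equiv.extendSubtype_apply_of_mem e _ hpx
        rw [this]
        have := hψ_lt (Fin.castLE hij r) hlt hpx
        show ((e ⟨Fin.castLE hij r, hpx⟩ : {x : Fin j // q x}) : Fin j) = _
        have he : e ⟨Fin.castLE hij r, hpx⟩ = ψ ⟨Fin.castLE hij r, hpx⟩ := rfl
        rw [he, this]
      · funext r
        have hpx : p (f.1 r) := Or.inr ⟨r, rfl⟩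
        show e.extendSubtype (f.1 r) = g.1 r
        rw [Equiv.extendSubtype_apply_of_mem e _ hpx]
        have he : e ⟨f.1 r, hpx⟩ = ψ ⟨f.1 r, hpx⟩ := rfl
        by_cases hlt : (f.1 r : ℕ) < i
        · rw [he, hψ_lt (f.1 r) hlt hpx]
          exact hval r hlt
        · rw [he, hψ_ge r hpx hlt]
    · rintro ⟨σ, hfix, hcomp⟩
      have hcomp' : ∀ r, σ (f.1 r) = g.1 r := fun r => congrFun hcomp r
      have hval : ∀ r : Fin i, (f.1 r : ℕ) < i → f.1 r = g.1 r := by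
        intro r hr
        have h1 : f.1 r = Fin.castLE hij ⟨(f.1 r : ℕ), hr⟩ := Fin.ext rfl
        rw [← hcomp' r, h1, hfix]
      have hmem : ∀ r : Fin i, (f.1 r : ℕ) < i ↔ (g.1 r : ℕ) < i := by
        intro r
        constructor
        · intro hr; rw [← hval r hr]; exact hr
        · intro hr
          have h1 : g.1 r = Fin.castLE hij ⟨(g.1 r : ℕ), hr⟩ := Fin.ext rfl
          have h2 : σ (Fin.castLE hij ⟨(g.1 r : ℕ), hr⟩)
              = Fin.castLE hij ⟨(g.1 r : ℕ), hr⟩ := hfix _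
          have h3 : σ (f.1 r) = σ (Fin.castLE hij ⟨(g.1 r : ℕ), hr⟩) := by
            rw [h2, hcomp' r]; exact h1
          have h4 : f.1 r = Fin.castLE hij ⟨(g.1 r : ℕ), hr⟩ := σ.injective h3
          rw [h4]; exact hr
      refine pairs_mk_eq ?_ ?_
      · ext r
        simp only [Finset.mem_filter, Finset.mem_univ, true_and]
        exact hmem r
      · intro x hx hx'
        have hxlt : (f.1 x : ℕ) < i := (Finset.mem_filter.mp hx).2
        exact Fin.ext (by simpa using congrArg Fin.val (hval x hxlt))
  · rintro ⟨U, a⟩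
    let f : Fin i → Fin j := fun r =>
      if h : r ∈ U then Fin.castLE hij (a.1 ⟨r, h⟩)
      else ⟨i + (r : ℕ), by have := r.2; omega⟩
    have hf_mem : ∀ (r : Fin i) (h : r ∈ U), f r = Fin.castLE hij (a.1 ⟨r, h⟩) := by
      intro r h; simp only [f, dif_pos h]
    have hf_not : ∀ (r : Fin i) (h : r ∉ U), (f r : ℕ) = i + (r : ℕ) := by
      intro r h; simp only [f, dif_neg h]
    have hf_lt : ∀ (r : Fin i), (f r : ℕ) < i ↔ r ∈ U := by
      intro r
      by_cases h : r ∈ U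
      · simp only [h, iff_true]
        rw [hf_mem r h]
        exact (a.1 ⟨r, h⟩).2
      · simp only [h, iff_false, not_lt]
        rw [hf_not r h]; omega
    have hf_inj : Function.Injective f := by
      intro r s hrs
      by_cases hr : r ∈ U <;> by_cases hs : s ∈ U
      · rw [hf_mem r hr, hf_mem s hs] at hrs
        have : a.1 ⟨r, hr⟩ = a.1 ⟨s, hs⟩ := Fin.ext (by simpa using congrArg Fin.val hrs)
        simpa using congrArg Subtype.val (a.2 this)
      · have h1 : (f r : ℕ) < i := (hf_lt r).2 hr
        have h2 : ¬ (f s : ℕ) < i := fun hh => hs ((hf_lt s).1 hh)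
        exact absurd (hrs ▸ h1) h2
      · have h1 : (f s : ℕ) < i := (hf_lt s).2 hs
        have h2 : ¬ (f r : ℕ) < i := fun hh => hr ((hf_lt r).1 hh)
        exact absurd (hrs ▸ h1) h2
      · have := congrArg Fin.val hrs
        rw [hf_not r hr, hf_not s hs] at this
        exact Fin.ext (by omega)
    refine ⟨⟨f, hf_inj⟩, ?_⟩
    refine pairs_mk_eq ?_ ?_
    · ext r
      simp only [Finset.mem_filter, Finset.mem_univ, true_and]
      exact hf_lt r
    · intro x hx hx'
      refine Fin.ext ?_
      show (f x : ℕ) = ((a.1 ⟨x, hx'⟩ : Fin i) : ℕ)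
      rw [hf_mem x hx']
      rfl
end

section
/- Let q be a prime power, i ≤ j, and let α : F_q^i → F_q^j be the standard inclusion. Let H_{i,j} = Stab_{GL_j(F_q)}(α) be the subgroup of matrices of the form [[I_i, X],[0, Y]] with Y invertible. When j ≥ 2i, the set of H_{i,j}-orbits on injective linear maps F_q^i → F_q^j is in bijection with the set of pairs (U, f) where U is a subspace of F_q^i and f : F_q^i → F_q^i/U is a surjective linear map. -/
/-- The standard inclusion `F^i → F^j` (extension by zero). -/
def stdInc (F : Type) [Field F] (i j : ℕ) : (Fin i → F) →ₗ[F] (Fin j → F) where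
  toFun v x := if h : (x : ℕ) < i then v ⟨x, h⟩ else 0
  map_add' u v := by funext x; by_cases h : (x : ℕ) < i <;> simp [h]
  map_smul' c v := by funext x; by_cases h : (x : ℕ) < i <;> simp [h]

/-- The `r`-th row of (the matrix of) a linear map `A : F^i → F^j`. -/
def rowOf {F : Type} [Field F] {i j : ℕ} (A : (Fin i → F) →ₗ[F] (Fin j → F))
    (r : Fin j) : Fin i → F :=
  fun s => A (Pi.single s 1) r

/-- `U_A`: the span of the last `j - i` rows of `A`. -/
def UofA {F : Type} [Field F] {i j : ℕ} (A : (Fin i → F) →ₗ[F] (Fin j → F)) :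
    Submodule F (Fin i → F) :=
  Submodule.span F (rowOf A '' {r : Fin j | i ≤ (r : ℕ)})

/-- `f_A : F^i → F^i / U_A`, sending the `r`-th standard basis vector to the
`r`-th row of `A` modulo `U_A`. -/
noncomputable def fofA {F : Type} [Field F] {i j : ℕ} (hij : i ≤ j)
    (A : (Fin i → F) →ₗ[F] (Fin j → F)) :
    (Fin i → F) →ₗ[F] ((Fin i → F) ⧸ UofA A) :=
  (Pi.basisFun F (Fin i)).constr F (fun r => (UofA A).mkQ (rowOf A (Fin.castLE hij r)))

/-- The invariant `A ↦ (U_A, f_A)`. -/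
noncomputable def invOf {F : Type} [Field F] {i j : ℕ} (hij : i ≤ j)
    (A : (Fin i → F) →ₗ[F] (Fin j → F)) :
    Σ U : Submodule F (Fin i → F), (Fin i → F) →ₗ[F] ((Fin i → F) ⧸ U) :=
  ⟨UofA A, fofA hij A⟩

namespace Stmt6

open Submodule LinearMap Matrix Module

variable {F : Type} [Field F]

section Fin

variable {i j : ℕ}

/-- The inclusion of the "bottom" indices. -/
def idxn (hij : i ≤ j) (k : Fin (j - i)) : Fin j := ⟨i + (k : ℕ), by omega⟩

lemma set_ge_eq (hij : i ≤ j) : {r : Fin j | i ≤ (r : ℕ)} = Set.range (idxn hij) := by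
  ext r
  simp only [Set.mem_setOf_eq, Set.mem_range]
  constructor
  · intro hr
    refine ⟨⟨(r : ℕ) - i, by omega⟩, ?_⟩
    simp only [idxn, Fin.ext_iff]
    omega
  · rintro ⟨k, rfl⟩
    simp [idxn]

lemma sum_split {M : Type*} [AddCommMonoid M] (hij : i ≤ j) (f : Fin j → M) :
    ∑ t, f t = (∑ u : Fin i, f (Fin.castLE hij u)) + ∑ k : Fin (j - i), f (idxn hij k) := by
  rw [← Equiv.sum_comp (finSumFinEquiv.trans (finCongr (by omega : i + (j - i) = j))) f,
    Fintype.sum_sum_type]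
  congr 1

end Fin

section Rows

variable {i j : ℕ}

lemma rowOf_toMatrix' (A : (Fin i → F) →ₗ[F] (Fin j → F)) :
    rowOf A = fun r => LinearMap.toMatrix' A r := by
  classical
  funext r s
  rw [rowOf, LinearMap.toMatrix'_apply]

lemma rowOf_mulVecLin (M : Matrix (Fin j) (Fin i) F) :
    rowOf (M.mulVecLin) = fun r => M r := by
  classical
  funext r s
  simp [rowOf, Matrix.mulVecLin_apply]

/-- Injectivity of `A` is equivalent to its rows spanning `F^i`. -/
lemma span_rowOf_eq_top_iff (A : (Fin i → F) →ₗ[F] (Fin j → F)) :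
    Submodule.span F (Set.range (rowOf A)) = ⊤ ↔ Function.Injective A := by
  classical
  set M := LinearMap.toMatrix' A with hM
  have hA : A = M.mulVecLin := by
    rw [hM, ← Matrix.toLin'_apply', Matrix.toLin'_toMatrix']
  have hrow : Set.range (rowOf A) = Set.range (fun r : Fin j => M r) := by
    rw [rowOf_toMatrix']
  have hrank : M.rank = finrank F (Submodule.span F (Set.range (rowOf A))) := by
    rw [hrow]; exact M.rank_eq_finrank_span_row
  have hrn := LinearMap.finrank_range_add_finrank_ker M.mulVecLin
  have hfr : finrank F (Fin i → F) = i := by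
    simp [Module.finrank_pi]
  constructor
  · intro h
    rw [← LinearMap.ker_eq_bot] at *
    rw [h, finrank_top, hfr] at hrank
    have : M.rank = finrank F (LinearMap.range M.mulVecLin) := rfl
    rw [hA]
    rw [← Submodule.finrank_eq_zero (R := F)]
    rw [hfr] at hrn
    omega
  · intro h
    rw [hA, ← LinearMap.ker_eq_bot, ← Submodule.finrank_eq_zero (R := F)] at h
    have : M.rank = finrank F (LinearMap.range M.mulVecLin) := rfl
    rw [hfr] at hrn
    apply Submodule.eq_top_of_finrank_eq
    rw [← hrank, hfr, this]
    omega

lemma UofA_eq (hij : i ≤ j) (A : (Fin i → F) →ₗ[F] (Fin j → F)) :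
    UofA A = Submodule.span F (Set.range (fun k => rowOf A (idxn hij k))) := by
  rw [UofA, set_ge_eq hij, ← Set.range_comp]
  rfl

end Rows

section Char

variable {i j : ℕ}

/-- The "top rows" linear map `F^i → F^i`. -/
noncomputable def LofA (hij : i ≤ j) (A : (Fin i → F) →ₗ[F] (Fin j → F)) :
    (Fin i → F) →ₗ[F] (Fin i → F) :=
  (Pi.basisFun F (Fin i)).constr F (fun r => rowOf A (Fin.castLE hij r))

lemma LofA_single (hij : i ≤ j) (A : (Fin i → F) →ₗ[F] (Fin j → F)) (r : Fin i) :
    LofA hij A (Pi.single r 1) = rowOf A (Fin.castLE hij r) := by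
  classical
  have := (Pi.basisFun F (Fin i)).constr_basis F (fun r => rowOf A (Fin.castLE hij r)) r
  rwa [Pi.basisFun_apply] at this

lemma fofA_eq (hij : i ≤ j) (A : (Fin i → F) →ₗ[F] (Fin j → F)) :
    fofA hij A = (UofA A).mkQ ∘ₗ LofA hij A := by
  classical
  refine (Pi.basisFun F (Fin i)).ext fun r => ?_
  rw [fofA, Basis.constr_basis, LinearMap.comp_apply, Pi.basisFun_apply, LofA_single]

/-- Extraction lemma for sigma equality of quotient data. -/
lemma sigma_extract {W X : Type*} [AddCommGroup W] [Module F W] [AddCommGroup X] [Module F X]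
    {U V : Submodule F W} (hUV : U = V) {f g : X →ₗ[F] W}
    (h : (⟨U, U.mkQ ∘ₗ f⟩ : Σ U' : Submodule F W, X →ₗ[F] (W ⧸ U')) = ⟨V, V.mkQ ∘ₗ g⟩) :
    ∀ x, g x - f x ∈ U := by
  subst hUV
  have h2 : U.mkQ ∘ₗ f = U.mkQ ∘ₗ g := by
    exact eq_of_heq (Sigma.ext_iff.mp h).2
  intro x
  have := LinearMap.congr_fun h2 x
  simp only [LinearMap.comp_apply, Submodule.mkQ_apply] at this
  rw [← Submodule.Quotient.eq U] at *
  exact this.symm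

/-- Construction lemma for sigma equality of quotient data. -/
lemma sigma_make {W X : Type*} [AddCommGroup W] [Module F W] [AddCommGroup X] [Module F X]
    {U V : Submodule F W} (hUV : U = V) {f g : X →ₗ[F] W}
    (h : ∀ x, g x - f x ∈ U) :
    (⟨U, U.mkQ ∘ₗ f⟩ : Σ U' : Submodule F W, X →ₗ[F] (W ⧸ U')) = ⟨V, V.mkQ ∘ₗ g⟩ := by
  subst hUV
  congr 1
  ext x
  simp only [LinearMap.comp_apply, Submodule.mkQ_apply]
  rw [Submodule.Quotient.eq U]
  simpa using neg_mem (h x)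

/-- Sigma equality from an equality of submodules and compatibility through
`quotEquivOfEq`. -/
lemma sigma_make' {W X : Type*} [AddCommGroup W] [Module F W] [AddCommGroup X] [Module F X]
    {U V : Submodule F W} (hUV : U = V) (f : X →ₗ[F] (W ⧸ U)) (g : X →ₗ[F] (W ⧸ V))
    (h : (Submodule.quotEquivOfEq U V hUV).toLinearMap ∘ₗ f = g) :
    (⟨U, f⟩ : Σ U' : Submodule F W, X →ₗ[F] (W ⧸ U')) = ⟨V, g⟩ := by
  subst hUV
  congr 1
  rw [← h]
  ext x
  have : ∀ z : W ⧸ U, (Submodule.quotEquivOfEq U U rfl) z = z := by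
    intro z
    obtain ⟨w, rfl⟩ := Submodule.mkQ_surjective U z
    simp
  simp [this]

/-- Characterization of equality of invariants. -/
lemma invOf_eq_iff' (hij : i ≤ j) (A B : (Fin i → F) →ₗ[F] (Fin j → F)) :
    invOf hij A = invOf hij B ↔
      (UofA A = UofA B ∧
        ∀ r : Fin i, rowOf B (Fin.castLE hij r) - rowOf A (Fin.castLE hij r) ∈ UofA A) := by
  classical
  constructor
  · intro h
    have hU : UofA A = UofA B := congrArg Sigma.fst h
    refine ⟨hU, fun r => ?_⟩
    have h' : (⟨UofA A, (UofA A).mkQ ∘ₗ LofA hij A⟩ :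
        Σ U' : Submodule F (Fin i → F), (Fin i → F) →ₗ[F] ((Fin i → F) ⧸ U')) =
        ⟨UofA B, (UofA B).mkQ ∘ₗ LofA hij B⟩ := by
      rw [← fofA_eq, ← fofA_eq]; exact h
    have := sigma_extract hU h' (Pi.single r 1)
    rwa [LofA_single, LofA_single] at this
  · rintro ⟨hU, hrow⟩
    have h' : (⟨UofA A, (UofA A).mkQ ∘ₗ LofA hij A⟩ :
        Σ U' : Submodule F (Fin i → F), (Fin i → F) →ₗ[F] ((Fin i → F) ⧸ U')) =
        ⟨UofA B, (UofA B).mkQ ∘ₗ LofA hij B⟩ := by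
      refine sigma_make hU fun x => ?_
      have key : (⊤ : Submodule F (Fin i → F)) ≤
          (UofA A).comap (LofA hij B - LofA hij A) := by
        rw [← (Pi.basisFun F (Fin i)).span_eq]
        refine Submodule.span_le.2 ?_
        rintro y ⟨r, rfl⟩
        simp only [Pi.basisFun_apply, SetLike.mem_coe, Submodule.mem_comap,
          LinearMap.sub_apply, LofA_single]
        exact hrow r
      have := key (Submodule.mem_top (x := x))
      simpa using this
    rw [invOf, invOf, fofA_eq, fofA_eq]
    exact h'

end Char

section Parts23

variable {i j : ℕ}

lemma map_mkQ_self {W : Type*} [AddCommGroup W] [Module F W] (U : Submodule F W) :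
    Submodule.map U.mkQ U = ⊥ := by
  rw [eq_bot_iff]
  rintro x ⟨y, hy, rfl⟩
  simp only [Submodule.mem_bot, Submodule.mkQ_apply, Submodule.Quotient.mk_eq_zero]
  exact hy

lemma eq_top_of_map_mkQ {W : Type*} [AddCommGroup W] [Module F W]
    {U V : Submodule F W} (hUV : U ≤ V) (h : Submodule.map U.mkQ V = ⊤) : V = ⊤ := by
  have := congrArg (Submodule.comap U.mkQ) h
  rwa [Submodule.comap_map_mkQ, Submodule.comap_top, sup_eq_right.mpr hUV] at this

lemma span_range_comp_single {V : Type*} [AddCommGroup V] [Module F V]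
    (g : (Fin i → F) →ₗ[F] V) :
    Submodule.span F (Set.range fun r : Fin i => g (Pi.single r 1)) = LinearMap.range g := by
  classical
  rw [LinearMap.range_eq_map, ← (Pi.basisFun F (Fin i)).span_eq, Submodule.map_span]
  congr 1
  rw [← Set.range_comp]
  refine congrArg _ ?_
  funext r
  simp [Function.comp]

lemma range_rowOf_split (hij : i ≤ j) (A : (Fin i → F) →ₗ[F] (Fin j → F)) :
    Set.range (rowOf A) =
      (Set.range fun r : Fin i => rowOf A (Fin.castLE hij r)) ∪
        (rowOf A '' {r : Fin j | i ≤ (r : ℕ)}) := by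
  ext v
  constructor
  · rintro ⟨r, rfl⟩
    by_cases hr : (r : ℕ) < i
    · exact Or.inl ⟨⟨(r : ℕ), hr⟩, rfl⟩
    · exact Or.inr ⟨r, by simpa using not_lt.mp hr, rfl⟩
  · rintro (⟨u, rfl⟩ | ⟨r, _, rfl⟩) <;> exact ⟨_, rfl⟩

lemma fofA_surjective (hij : i ≤ j) (A : (Fin i → F) →ₗ[F] (Fin j → F))
    (hA : Function.Injective A) : Function.Surjective (fofA hij A) := by
  classical
  rw [← LinearMap.range_eq_top, fofA, Basis.constr_range]
  have h1 : Set.range (fun r : Fin i => (UofA A).mkQ (rowOf A (Fin.castLE hij r)))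
      = (UofA A).mkQ '' (Set.range fun r : Fin i => rowOf A (Fin.castLE hij r)) := by
    rw [← Set.range_comp]; rfl
  rw [h1, Submodule.span_image]
  have htop : Submodule.span F (Set.range (rowOf A)) = ⊤ := (span_rowOf_eq_top_iff A).2 hA
  have hUdef : Submodule.span F (rowOf A '' {r : Fin j | i ≤ (r : ℕ)}) = UofA A := rfl
  have := congrArg (Submodule.map (UofA A).mkQ) htop
  rw [range_rowOf_split hij A, Submodule.span_union, Submodule.map_sup, Submodule.map_top,
    Submodule.range_mkQ, hUdef, map_mkQ_self, sup_bot_eq] at this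
  exact this

lemma part3 (hij : i ≤ j) (h2i : 2 * i ≤ j) (U : Submodule F (Fin i → F))
    (f : (Fin i → F) →ₗ[F] ((Fin i → F) ⧸ U)) (hf : Function.Surjective f) :
    ∃ A : (Fin i → F) →ₗ[F] (Fin j → F),
      Function.Injective A ∧ invOf hij A = ⟨U, f⟩ := by
  classical
  choose v hv using fun r : Fin i => Submodule.mkQ_surjective U (f (Pi.single r 1))
  set d := finrank F U with hdd
  have hd : d ≤ i := by
    have h1 := U.finrank_le
    have h2 : finrank F (Fin i → F) = i := by simp [Module.finrank_pi]
    omega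
  set b := Module.finBasis F U with hb
  set w : Fin (j - i) → (Fin i → F) :=
    fun k => if h : (k : ℕ) < d then (b ⟨(k : ℕ), h⟩ : Fin i → F) else 0 with hw
  set M : Matrix (Fin j) (Fin i) F :=
    Matrix.of (fun r s => if h : (r : ℕ) < i then v ⟨(r : ℕ), h⟩ s
      else w ⟨(r : ℕ) - i, by omega⟩ s) with hM
  set A := M.mulVecLin with hA
  have hrow : rowOf A = fun r => M r := rowOf_mulVecLin M
  have hrow_top : ∀ r : Fin i, rowOf A (Fin.castLE hij r) = v r := by
    intro r
    funext s
    rw [hrow]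
    show (if h : ((Fin.castLE hij r : Fin j) : ℕ) < i then v ⟨_, h⟩ s else _) = v r s
    rw [dif_pos (by simp [Fin.castLE] : ((Fin.castLE hij r : Fin j) : ℕ) < i)]
    rfl
  have hrow_bot : ∀ k : Fin (j - i), rowOf A (idxn hij k) = w k := by
    intro k
    funext s
    rw [hrow]
    show (if h : ((idxn hij k : Fin j) : ℕ) < i then v ⟨_, h⟩ s else
      w ⟨((idxn hij k : Fin j) : ℕ) - i, _⟩ s) = w k s
    rw [dif_neg (by simp [idxn] : ¬ ((idxn hij k : Fin j) : ℕ) < i)]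
    congr 1
    simp [idxn, Fin.ext_iff]
  -- U_A = U
  have hwmem : ∀ k : Fin (j - i), w k ∈ U := by
    intro k
    simp only [hw]
    split_ifs with h
    · exact (b ⟨(k : ℕ), h⟩).2
    · exact U.zero_mem
  have hwval : ∀ m : Fin (finrank F U),
      w ⟨(m : ℕ), by omega⟩ = U.subtype (b m) := by
    intro m
    simp only [hw]
    split_ifs with h
    · exact congrArg _ (congrArg b (Fin.ext rfl))
    · exact absurd m.2 h
  have hspanw : Submodule.span F (Set.range w) = U := by
    apply le_antisymm
    · rw [Submodule.span_le]
      rintro x ⟨k, rfl⟩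
      exact hwmem k
    · have hU2 : U = Submodule.map U.subtype ⊤ := by
        rw [Submodule.map_top, Submodule.range_subtype]
      nth_rewrite 1 [hU2]
      rw [← b.span_eq, Submodule.map_span]
      refine Submodule.span_le.2 ?_
      rintro x ⟨y, ⟨m, rfl⟩, rfl⟩
      exact Submodule.subset_span ⟨⟨(m : ℕ), by omega⟩, hwval m⟩
  have hU : UofA A = U := by
    rw [UofA_eq hij A]
    have : (fun k => rowOf A (idxn hij k)) = w := funext hrow_bot
    rw [this, hspanw]
  refine ⟨A, ?_, ?_⟩
  · rw [← span_rowOf_eq_top_iff]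
    set W := Submodule.span F (Set.range (rowOf A)) with hW
    have hUW : U ≤ W := by
      rw [← hU, UofA]
      exact Submodule.span_mono (Set.image_subset_range _ _)
    refine eq_top_of_map_mkQ hUW ?_
    have hsub : Submodule.span F (Set.range fun r : Fin i => rowOf A (Fin.castLE hij r)) ≤ W := by
      refine Submodule.span_mono ?_
      rintro x ⟨u, rfl⟩
      exact ⟨_, rfl⟩
    have h2 : Submodule.map U.mkQ
        (Submodule.span F (Set.range fun r : Fin i => rowOf A (Fin.castLE hij r))) = ⊤ := by
      rw [← Submodule.span_image, ← Set.range_comp]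
      have : (U.mkQ ∘ fun r : Fin i => rowOf A (Fin.castLE hij r))
          = fun r : Fin i => f (Pi.single r 1) := by
        funext r
        simp [Function.comp, hrow_top r, hv r]
      rw [this, span_range_comp_single f, LinearMap.range_eq_top.mpr hf]
    rw [eq_top_iff, ← h2]
    exact Submodule.map_mono hsub
  · rw [invOf]
    refine sigma_make' hU (fofA hij A) f ?_
    refine (Pi.basisFun F (Fin i)).ext fun r => ?_
    rw [Pi.basisFun_apply, LinearMap.comp_apply, fofA_eq, LinearMap.comp_apply, LofA_single,
      hrow_top r, LinearEquiv.coe_coe]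
    rw [Submodule.mkQ_apply, Submodule.quotEquivOfEq_mk, ← hv r]
    rfl

end Parts23

section Core

variable {n : ℕ}

/-- Two surjective linear maps from `F^n` onto the same space differ by an
automorphism of `F^n`. -/
lemma exists_equiv_comp {V : Type*} [AddCommGroup V] [Module F V]
    (p q : (Fin n → F) →ₗ[F] V) (hp : LinearMap.range p = ⊤) (hq : LinearMap.range q = ⊤) :
    ∃ e : (Fin n → F) ≃ₗ[F] (Fin n → F),
      p ∘ₗ (e : (Fin n → F) →ₗ[F] (Fin n → F)) = q := by
  classical
  obtain ⟨s, hs⟩ := p.exists_rightInverse_of_surjective hp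
  obtain ⟨t, ht⟩ := q.exists_rightInverse_of_surjective hq
  have hps : ∀ v, p (s v) = v := fun v => LinearMap.congr_fun hs v
  have hqt : ∀ v, q (t v) = v := fun v => LinearMap.congr_fun ht v
  have hker : finrank F (LinearMap.ker q) = finrank F (LinearMap.ker p) := by
    have h1 := p.finrank_range_add_finrank_ker
    have h2 := q.finrank_range_add_finrank_ker
    rw [hp] at h1
    rw [hq] at h2
    omega
  let κ : (LinearMap.ker q) ≃ₗ[F] (LinearMap.ker p) := LinearEquiv.ofFinrankEq _ _ hker
  let πp : (Fin n → F) →ₗ[F] LinearMap.ker p :=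
    (LinearMap.id - s ∘ₗ p).codRestrict (LinearMap.ker p) (fun x => by
      simp [LinearMap.mem_ker, hps])
  let πq : (Fin n → F) →ₗ[F] LinearMap.ker q :=
    (LinearMap.id - t ∘ₗ q).codRestrict (LinearMap.ker q) (fun x => by
      simp [LinearMap.mem_ker, hqt])
  let f : (Fin n → F) →ₗ[F] (Fin n → F) :=
    s ∘ₗ q + (LinearMap.ker p).subtype ∘ₗ (κ : LinearMap.ker q →ₗ[F] LinearMap.ker p) ∘ₗ πq
  let g : (Fin n → F) →ₗ[F] (Fin n → F) :=
    t ∘ₗ p + (LinearMap.ker q).subtype ∘ₗ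
      (κ.symm : LinearMap.ker p →ₗ[F] LinearMap.ker q) ∘ₗ πp
  have hπp : ∀ x, (πp x : Fin n → F) = x - s (p x) := fun x => rfl
  have hπq : ∀ x, (πq x : Fin n → F) = x - t (q x) := fun x => rfl
  have hfval : ∀ x, f x = s (q x) + (κ (πq x) : Fin n → F) := fun x => rfl
  have hgval : ∀ x, g x = t (p x) + ((κ.symm (πp x) : LinearMap.ker q) : Fin n → F) :=
    fun x => rfl
  have hpf : ∀ x, p (f x) = q x := by
    intro x
    rw [hfval, map_add, hps, LinearMap.mem_ker.mp (κ (πq x)).2, add_zero]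
  have hqg : ∀ x, q (g x) = p x := by
    intro x
    rw [hgval, map_add, hqt, LinearMap.mem_ker.mp (κ.symm (πp x)).2, add_zero]
  have hπpf : ∀ x, πp (f x) = κ (πq x) := by
    intro x
    apply Subtype.ext
    rw [hπp, hpf x, hfval]
    abel
  have hπqg : ∀ x, πq (g x) = κ.symm (πp x) := by
    intro x
    apply Subtype.ext
    rw [hπq, hqg x, hgval]
    abel
  have hgf : ∀ x, g (f x) = x := by
    intro x
    rw [hgval, hpf, hπpf, κ.symm_apply_apply, hπq]
    abel
  have hfg : ∀ x, f (g x) = x := by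
    intro x
    rw [hfval, hqg, hπqg, κ.apply_symm_apply, hπp]
    abel
  refine ⟨LinearEquiv.ofLinear f g (LinearMap.ext hfg) (LinearMap.ext hgf), ?_⟩
  exact LinearMap.ext hpf

/-- Two spanning families of the same subspace are related by an automorphism
of the coefficient space. -/
lemma exists_equiv_lincomb {m : ℕ} (g h : Fin n → (Fin m → F))
    (hsp : Submodule.span F (Set.range g) = Submodule.span F (Set.range h)) :
    ∃ e : (Fin n → F) ≃ₗ[F] (Fin n → F),
      ∀ c : Fin n → F, ∑ l, e c l • g l = ∑ l, c l • h l := by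
  classical
  have hrg : LinearMap.range (Fintype.linearCombination F g)
      = Submodule.span F (Set.range g) := Fintype.range_linearCombination F g
  have hrh : LinearMap.range (Fintype.linearCombination F h)
      = Submodule.span F (Set.range h) := Fintype.range_linearCombination F h
  have hgW : ∀ c, Fintype.linearCombination F g c ∈ Submodule.span F (Set.range g) :=
    fun c => by rw [← hrg]; exact ⟨c, rfl⟩
  have hhW : ∀ c, Fintype.linearCombination F h c ∈ Submodule.span F (Set.range g) :=
    fun c => by rw [hsp, ← hrh]; exact ⟨c, rfl⟩
  set p := LinearMap.codRestrict (Submodule.span F (Set.range g))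
    (Fintype.linearCombination F g) hgW with hp
  set q := LinearMap.codRestrict (Submodule.span F (Set.range g))
    (Fintype.linearCombination F h) hhW with hq
  have hps : LinearMap.range p = ⊤ := by
    rw [LinearMap.range_eq_top]
    rintro ⟨x, hx⟩
    have hx' : x ∈ LinearMap.range (Fintype.linearCombination F g) := by
      rw [hrg]; exact hx
    obtain ⟨c, hc⟩ := hx'
    exact ⟨c, Subtype.ext hc⟩
  have hqs : LinearMap.range q = ⊤ := by
    rw [LinearMap.range_eq_top]
    rintro ⟨x, hx⟩
    have hx' : x ∈ LinearMap.range (Fintype.linearCombination F h) := by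
      rw [hrh, ← hsp]; exact hx
    obtain ⟨c, hc⟩ := hx'
    exact ⟨c, Subtype.ext hc⟩
  obtain ⟨e, he⟩ := exists_equiv_comp p q hps hqs
  refine ⟨e, fun c => ?_⟩
  have := congrArg Subtype.val (LinearMap.congr_fun he c)
  simp only [LinearMap.comp_apply, LinearMap.codRestrict_apply] at this
  exact this

end Core

section EasyDir

variable {i j : ℕ}

lemma stdInc_single (hij : i ≤ j) (t : Fin j) (ht : (t : ℕ) < i) :
    stdInc F i j (Pi.single (⟨(t : ℕ), ht⟩ : Fin i) 1) = Pi.single t 1 := by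
  funext x
  have h0 : stdInc F i j (Pi.single (⟨(t : ℕ), ht⟩ : Fin i) 1) x
      = if h : (x : ℕ) < i
        then (Pi.single (⟨(t : ℕ), ht⟩ : Fin i) (1 : F) : Fin i → F) ⟨(x : ℕ), h⟩
        else 0 := rfl
  rw [h0]
  by_cases hx : (x : ℕ) < i
  · rw [dif_pos hx]
    simp only [Pi.single_apply, Fin.ext_iff]
  · rw [dif_neg hx]
    rw [Pi.single_apply, if_neg (by rw [Fin.ext_iff] at *; omega)]

lemma fix_single (hij : i ≤ j) (e : (Fin j → F) ≃ₗ[F] (Fin j → F))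
    (hst : e.toLinearMap ∘ₗ stdInc F i j = stdInc F i j) (t : Fin j) (ht : (t : ℕ) < i) :
    e.toLinearMap (Pi.single t 1) = Pi.single t 1 := by
  have h0 := LinearMap.congr_fun hst (Pi.single (⟨(t : ℕ), ht⟩ : Fin i) 1)
  rw [LinearMap.comp_apply, stdInc_single hij t ht] at h0
  exact h0

lemma rowOf_comp (e : (Fin j → F) ≃ₗ[F] (Fin j → F)) (A : (Fin i → F) →ₗ[F] (Fin j → F))
    (r : Fin j) :
    rowOf (e.toLinearMap ∘ₗ A) r
      = ∑ t, LinearMap.toMatrix' (e.toLinearMap) r t • rowOf A t := by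
  classical
  funext s
  have hME : LinearMap.toMatrix' (e.toLinearMap ∘ₗ A)
      = LinearMap.toMatrix' (e.toLinearMap) * LinearMap.toMatrix' A :=
    LinearMap.toMatrix'_comp _ _
  have h1 : rowOf (e.toLinearMap ∘ₗ A) r s = LinearMap.toMatrix' (e.toLinearMap ∘ₗ A) r s := by
    rw [rowOf_toMatrix']
  rw [h1, hME, Matrix.mul_apply, Finset.sum_apply]
  refine Finset.sum_congr rfl fun t _ => ?_
  rw [Pi.smul_apply, smul_eq_mul, rowOf_toMatrix']

lemma toMatrix'_fix (hij : i ≤ j) (e : (Fin j → F) ≃ₗ[F] (Fin j → F))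
    (hst : e.toLinearMap ∘ₗ stdInc F i j = stdInc F i j) (r : Fin j) (u : Fin i) :
    LinearMap.toMatrix' (e.toLinearMap) r (Fin.castLE hij u)
      = if r = Fin.castLE hij u then 1 else 0 := by
  classical
  rw [LinearMap.toMatrix'_apply]
  have h1 : (fun j' => if j' = Fin.castLE hij u then (1 : F) else 0)
      = Pi.single (Fin.castLE hij u) 1 := by
    funext k
    simp [Pi.single_apply]
  rw [fix_single hij e hst _ (by simpa using u.2)]
  simp [Pi.single_apply]

lemma easy_dir (hij : i ≤ j) (A : (Fin i → F) →ₗ[F] (Fin j → F))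
    (e : (Fin j → F) ≃ₗ[F] (Fin j → F))
    (hst : e.toLinearMap ∘ₗ stdInc F i j = stdInc F i j) :
    UofA (e.toLinearMap ∘ₗ A) ≤ UofA A ∧
      ∀ r : Fin i, rowOf (e.toLinearMap ∘ₗ A) (Fin.castLE hij r)
        - rowOf A (Fin.castLE hij r) ∈ UofA A := by
  classical
  set B := e.toLinearMap ∘ₗ A with hB
  have hrow : ∀ r : Fin j, rowOf B r
      = (∑ u : Fin i, LinearMap.toMatrix' (e.toLinearMap) r (Fin.castLE hij u)
          • rowOf A (Fin.castLE hij u))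
        + ∑ k : Fin (j - i), LinearMap.toMatrix' (e.toLinearMap) r (idxn hij k)
          • rowOf A (idxn hij k) := by
    intro r
    rw [rowOf_comp, sum_split hij]
  have hbotmem : ∀ r : Fin j,
      (∑ k : Fin (j - i), LinearMap.toMatrix' (e.toLinearMap) r (idxn hij k)
        • rowOf A (idxn hij k)) ∈ UofA A := by
    intro r
    refine Submodule.sum_smul_mem _ _ fun k _ => ?_
    rw [UofA_eq hij A]
    exact Submodule.subset_span ⟨k, rfl⟩
  constructor
  · rw [UofA_eq hij B]
    refine Submodule.span_le.2 ?_
    rintro x ⟨k, rfl⟩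
    show rowOf B (idxn hij k) ∈ UofA A
    have h1 : ∀ u : Fin i, LinearMap.toMatrix' (e.toLinearMap) (idxn hij k) (Fin.castLE hij u)
        • rowOf A (Fin.castLE hij u) = 0 := by
      intro u
      have hne : (idxn hij k : Fin j) ≠ Fin.castLE hij u := by
        intro hc
        have h2 := congrArg Fin.val hc
        have h3 := u.isLt
        simp only [idxn, Fin.coe_castLE] at h2
        omega
      rw [toMatrix'_fix hij e hst, if_neg hne, zero_smul]
    rw [hrow (idxn hij k), Finset.sum_congr rfl fun u _ => h1 u, Finset.sum_const_zero, zero_add]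
    exact hbotmem _
  · intro r
    have h2 : (∑ u : Fin i, LinearMap.toMatrix' (e.toLinearMap) (Fin.castLE hij r)
        (Fin.castLE hij u) • rowOf A (Fin.castLE hij u)) = rowOf A (Fin.castLE hij r) := by
      rw [Finset.sum_eq_single r]
      · rw [toMatrix'_fix hij e hst, if_pos rfl, one_smul]
      · intro u _ hu
        have hne : (Fin.castLE hij r : Fin j) ≠ Fin.castLE hij u := by
          intro hc
          have h3 := congrArg Fin.val hc
          simp only [Fin.coe_castLE] at h3
          exact hu (Fin.ext h3.symm)
        rw [toMatrix'_fix hij e hst, if_neg hne, zero_smul]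
      · intro hr
        exact absurd (Finset.mem_univ r) hr
    rw [hrow (Fin.castLE hij r), h2, add_sub_cancel_left]
    exact hbotmem _

end EasyDir

section HardDir

variable {i j : ℕ}

/-- Inclusion of the bottom block `F^{j-i} → F^j`. -/
def botInc (hij : i ≤ j) : (Fin (j - i) → F) →ₗ[F] (Fin j → F) where
  toFun w x := if h : i ≤ (x : ℕ) then w ⟨(x : ℕ) - i, by omega⟩ else 0
  map_add' u v := by funext x; by_cases h : i ≤ (x : ℕ) <;> simp [h]
  map_smul' c v := by funext x; by_cases h : i ≤ (x : ℕ) <;> simp [h]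

/-- Restriction to the top block. -/
def res1 (hij : i ≤ j) : (Fin j → F) →ₗ[F] (Fin i → F) :=
  LinearMap.funLeft F F (Fin.castLE hij)

/-- Restriction to the bottom block. -/
def res2 (hij : i ≤ j) : (Fin j → F) →ₗ[F] (Fin (j - i) → F) :=
  LinearMap.funLeft F F (idxn hij)

lemma hsplit1 (hij : i ≤ j) (x : Fin j → F) :
    stdInc F i j (res1 hij x) + botInc hij (res2 hij x) = x := by
  funext t
  show (if h : (t : ℕ) < i then res1 hij x ⟨(t : ℕ), h⟩ else 0)
    + (if h : i ≤ (t : ℕ) then res2 hij x ⟨(t : ℕ) - i, by omega⟩ else 0) = x t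
  by_cases ht : (t : ℕ) < i
  · rw [dif_pos ht, dif_neg (by omega)]
    show x (Fin.castLE hij ⟨(t : ℕ), ht⟩) + 0 = x t
    rw [add_zero]
    congr 1
  · rw [dif_neg ht, dif_pos (by omega)]
    show 0 + x (idxn hij ⟨(t : ℕ) - i, _⟩) = x t
    rw [zero_add]
    congr 1
    simp only [idxn, Fin.ext_iff]
    omega

lemma hsplit2 (hij : i ≤ j) (u : Fin i → F) : res1 hij (stdInc F i j u) = u := by
  funext u₀
  show (if h : ((Fin.castLE hij u₀ : Fin j) : ℕ) < i then u ⟨_, h⟩ else 0) = u u₀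
  rw [dif_pos (by simpa using u₀.2)]
  rfl

lemma hsplit3 (hij : i ≤ j) (u : Fin i → F) : res2 hij (stdInc F i j u) = 0 := by
  funext k
  show (if h : ((idxn hij k : Fin j) : ℕ) < i then u ⟨_, h⟩ else 0) = (0 : Fin (j - i) → F) k
  rw [dif_neg (by simp [idxn])]
  rfl

lemma hsplit4 (hij : i ≤ j) (w : Fin (j - i) → F) : res1 hij (botInc hij w) = 0 := by
  funext u₀
  show (if h : i ≤ ((Fin.castLE hij u₀ : Fin j) : ℕ) then w ⟨_, by omega⟩ else 0)
    = (0 : Fin i → F) u₀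
  rw [dif_neg (by simpa using u₀.2)]
  rfl

lemma hsplit5 (hij : i ≤ j) (w : Fin (j - i) → F) : res2 hij (botInc hij w) = w := by
  funext k
  show (if h : i ≤ ((idxn hij k : Fin j) : ℕ) then w ⟨((idxn hij k : Fin j) : ℕ) - i, by omega⟩
    else 0) = w k
  rw [dif_pos (by simp [idxn])]
  congr 1
  simp only [idxn, Fin.ext_iff]
  omega

/-- The splitting of `F^j` into the top and bottom blocks. -/
noncomputable def splitE (hij : i ≤ j) :
    (Fin j → F) ≃ₗ[F] (Fin i → F) × (Fin (j - i) → F) :=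
  LinearEquiv.ofLinear (LinearMap.prod (res1 hij) (res2 hij))
    (stdInc F i j ∘ₗ LinearMap.fst F _ _ + botInc hij ∘ₗ LinearMap.snd F _ _)
    (by
      apply LinearMap.ext
      rintro ⟨u, w⟩
      show (res1 hij (stdInc F i j u + botInc hij w), res2 hij (stdInc F i j u + botInc hij w))
        = (u, w)
      rw [map_add, map_add, hsplit2, hsplit3, hsplit4, hsplit5, add_zero, zero_add])
    (by
      apply LinearMap.ext
      intro x
      show stdInc F i j (res1 hij x) + botInc hij (res2 hij x) = x
      exact hsplit1 hij x)

lemma splitE_apply (hij : i ≤ j) (x : Fin j → F) :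
    splitE hij x = (res1 hij x, res2 hij x) := rfl

lemma splitE_symm (hij : i ≤ j) (x : Fin j → F)
    (p : (Fin i → F) × (Fin (j - i) → F)) (h : splitE hij x = p) :
    (splitE hij).symm p = x := by
  rw [← h, LinearEquiv.symm_apply_apply]

/-- The hard direction: equal invariants imply the maps lie in the same orbit. -/
lemma hard_dir (hij : i ≤ j) (A B : (Fin i → F) →ₗ[F] (Fin j → F))
    (hU : UofA A = UofA B)
    (hrow : ∀ r : Fin i,
      rowOf B (Fin.castLE hij r) - rowOf A (Fin.castLE hij r) ∈ UofA A) :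
    ∃ e : (Fin j → F) ≃ₗ[F] (Fin j → F),
      e.toLinearMap ∘ₗ stdInc F i j = stdInc F i j ∧ e.toLinearMap ∘ₗ A = B := by
  classical
  set gA : Fin (j - i) → (Fin i → F) := fun k => rowOf A (idxn hij k) with hgA
  set gB : Fin (j - i) → (Fin i → F) := fun k => rowOf B (idxn hij k) with hgB
  have hspan : Submodule.span F (Set.range gA) = Submodule.span F (Set.range gB) := by
    rw [hgA, hgB, ← UofA_eq hij A, ← UofA_eq hij B]
    exact hU
  obtain ⟨eY, heY⟩ := exists_equiv_lincomb gA gB hspan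
  have hmem : ∀ r : Fin i,
      rowOf B (Fin.castLE hij r) - rowOf A (Fin.castLE hij r)
        ∈ Submodule.span F (Set.range gA) := by
    intro r
    rw [hgA, ← UofA_eq hij A]
    exact hrow r
  choose c hc using fun r => (mem_span_range_iff_exists_fun F).mp (hmem r)
  set X : (Fin (j - i) → F) →ₗ[F] (Fin i → F) := (Matrix.of c).mulVecLin with hX
  set Yl : (Fin (j - i) → F) →ₗ[F] (Fin (j - i) → F) :=
    ((LinearMap.toMatrix' (eY.toLinearMap))ᵀ).mulVecLin with hYl
  set Yl' : (Fin (j - i) → F) →ₗ[F] (Fin (j - i) → F) :=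
    ((LinearMap.toMatrix' (eY.symm.toLinearMap))ᵀ).mulVecLin with hYl'
  have hYcomp1 : Yl ∘ₗ Yl' = LinearMap.id := by
    rw [hYl, hYl', ← Matrix.mulVecLin_mul, ← Matrix.transpose_mul, ← LinearMap.toMatrix'_comp]
    have h0 : eY.symm.toLinearMap ∘ₗ eY.toLinearMap = LinearMap.id := by
      apply LinearMap.ext; intro x; simp
    rw [h0, LinearMap.toMatrix'_id, Matrix.transpose_one, Matrix.mulVecLin_one]
  have hYcomp2 : Yl' ∘ₗ Yl = LinearMap.id := by
    rw [hYl, hYl', ← Matrix.mulVecLin_mul, ← Matrix.transpose_mul, ← LinearMap.toMatrix'_comp]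
    have h0 : eY.toLinearMap ∘ₗ eY.symm.toLinearMap = LinearMap.id := by
      apply LinearMap.ext; intro x; simp
    rw [h0, LinearMap.toMatrix'_id, Matrix.transpose_one, Matrix.mulVecLin_one]
  have hYlYl' : ∀ w, Yl (Yl' w) = w := fun w => LinearMap.congr_fun hYcomp1 w
  have hYl'Yl : ∀ w, Yl' (Yl w) = w := fun w => LinearMap.congr_fun hYcomp2 w
  set shear : ((Fin i → F) × (Fin (j - i) → F)) ≃ₗ[F] ((Fin i → F) × (Fin (j - i) → F)) :=
    LinearEquiv.ofLinear
      (LinearMap.prod (LinearMap.fst F _ _ + X ∘ₗ LinearMap.snd F _ _)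
        (Yl ∘ₗ LinearMap.snd F _ _))
      (LinearMap.prod (LinearMap.fst F _ _ - X ∘ₗ Yl' ∘ₗ LinearMap.snd F _ _)
        (Yl' ∘ₗ LinearMap.snd F _ _))
      (by
        apply LinearMap.ext
        rintro ⟨u, w⟩
        show (u - X (Yl' w) + X (Yl' w), Yl (Yl' w)) = (u, w)
        rw [sub_add_cancel, hYlYl'])
      (by
        apply LinearMap.ext
        rintro ⟨u, w⟩
        show (u + X w - X (Yl' (Yl w)), Yl' (Yl w)) = (u, w)
        rw [hYl'Yl, add_sub_cancel_right]) with hshear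
  have hshear_apply : ∀ p : (Fin i → F) × (Fin (j - i) → F),
      shear p = (p.1 + X p.2, Yl p.2) := fun p => rfl
  set E : (Fin j → F) ≃ₗ[F] (Fin j → F) :=
    ((splitE hij).trans shear).trans (splitE hij).symm with hE
  have hEapp : ∀ x, E x = (splitE hij).symm (shear (splitE hij x)) := fun x => rfl
  have hstd : E.toLinearMap ∘ₗ stdInc F i j = stdInc F i j := by
    apply LinearMap.ext
    intro v
    have h1 : splitE hij (stdInc F i j v) = (v, 0) := by
      rw [splitE_apply, hsplit2, hsplit3]
    have h2 : shear ((v, 0) : (Fin i → F) × (Fin (j - i) → F)) = (v, 0) := by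
      rw [hshear_apply]
      show (v + X 0, Yl 0) = (v, 0)
      rw [map_zero, map_zero, add_zero]
    show E (stdInc F i j v) = stdInc F i j v
    rw [hEapp, h1, h2]
    exact splitE_symm hij _ _ h1
  have hcomp : E.toLinearMap ∘ₗ A = B := by
    refine (Pi.basisFun F (Fin i)).ext fun s => ?_
    rw [Pi.basisFun_apply]
    show E (A (Pi.single s 1)) = B (Pi.single s 1)
    have h1 : splitE hij (A (Pi.single s 1))
        = (fun u => rowOf A (Fin.castLE hij u) s, fun k => gA k s) := rfl
    have h3 : splitE hij (B (Pi.single s 1))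
        = (fun u => rowOf B (Fin.castLE hij u) s, fun k => gB k s) := rfl
    have hXval : X (fun k => gA k s)
        = fun u => rowOf B (Fin.castLE hij u) s - rowOf A (Fin.castLE hij u) s := by
      funext u
      have h4 : X (fun k => gA k s) u = ∑ k, c u k * gA k s := by
        rw [hX]
        simp [Matrix.mulVecLin_apply, Matrix.mulVec, dotProduct]
      have h5 := congrFun (hc u) s
      simp only [Finset.sum_apply, Pi.smul_apply, smul_eq_mul, Pi.sub_apply] at h5
      rw [h4, h5]
    have hYval : Yl (fun k => gA k s) = fun m => gB m s := by
      funext m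
      have h6 : Yl (fun k => gA k s) m
          = ∑ l, LinearMap.toMatrix' (eY.toLinearMap) l m * gA l s := by
        rw [hYl]
        rw [Matrix.mulVecLin_apply, Matrix.mulVec_transpose]
        simp only [Matrix.vecMul, dotProduct]
        exact Finset.sum_congr rfl fun l _ => mul_comm _ _
      have h7 := congrFun (heY (Pi.single m 1)) s
      simp only [Finset.sum_apply, Pi.smul_apply, smul_eq_mul] at h7
      have h8 : ∑ l, (Pi.single m (1 : F) : Fin (j - i) → F) l * gB l s = gB m s := by
        rw [Finset.sum_eq_single m]
        · simp
        · intro l _ hl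
          simp [Pi.single_apply, hl]
        · intro hm
          exact absurd (Finset.mem_univ m) hm
      have h9 : ∀ l, LinearMap.toMatrix' (eY.toLinearMap) l m = eY (Pi.single m 1) l := by
        intro l
        rw [LinearMap.toMatrix'_apply]
        have h10 : (fun j' => if j' = m then (1 : F) else 0) = Pi.single m 1 := by
          funext k'
          simp [Pi.single_apply]
        rfl
      calc Yl (fun k => gA k s) m
          = ∑ l, LinearMap.toMatrix' (eY.toLinearMap) l m * gA l s := h6
        _ = ∑ l, eY (Pi.single m 1) l * gA l s := by
            refine Finset.sum_congr rfl fun l _ => ?_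
            rw [h9 l]
        _ = ∑ l, (Pi.single m (1 : F) : Fin (j - i) → F) l * gB l s := h7
        _ = gB m s := h8
    have h2 : shear (fun u => rowOf A (Fin.castLE hij u) s, fun k => gA k s)
        = (fun u => rowOf B (Fin.castLE hij u) s, fun k => gB k s) := by
      rw [hshear_apply]
      show ((fun u => rowOf A (Fin.castLE hij u) s) + X (fun k => gA k s),
        Yl (fun k => gA k s)) = _
      rw [hXval, hYval]
      refine congrArg₂ Prod.mk ?_ rfl
      funext u
      show rowOf A (Fin.castLE hij u) s
          + (rowOf B (Fin.castLE hij u) s - rowOf A (Fin.castLE hij u) s)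
        = rowOf B (Fin.castLE hij u) s
      ring
    rw [hEapp, h1, h2]
    exact splitE_symm hij _ _ h3
  exact ⟨E, hstd, hcomp⟩

end HardDir

end Stmt6

/-- for `j ≥ 2i`, the assignment `A ↦ (U_A, f_A)` induces a
bijection from the `H_{i,j}`-orbits of injective linear maps `F_q^i → F_q^j`
(`H_{i,j}` being the stabilizer of the standard inclusion in `GL_j(F_q)`,
acting by postcomposition) onto the pairs `(U, f)` with `U ⊆ F_q^i` a subspace
and `f : F_q^i → F_q^i/U` surjective linear. -/
theorem stmt_6 (F : Type) [Field F] [Fintype F] (i j : ℕ) (hij : i ≤ j)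
    (h2i : 2 * i ≤ j) :
    (∀ A B : (Fin i → F) →ₗ[F] (Fin j → F),
      Function.Injective A → Function.Injective B →
        (invOf hij A = invOf hij B ↔
          ∃ e : (Fin j → F) ≃ₗ[F] (Fin j → F),
            e.toLinearMap ∘ₗ stdInc F i j = stdInc F i j ∧
            e.toLinearMap ∘ₗ A = B)) ∧
    (∀ A : (Fin i → F) →ₗ[F] (Fin j → F), Function.Injective A →
      Function.Surjective (fofA hij A)) ∧
    (∀ (U : Submodule F (Fin i → F)) (f : (Fin i → F) →ₗ[F] ((Fin i → F) ⧸ U)),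
      Function.Surjective f →
        ∃ A : (Fin i → F) →ₗ[F] (Fin j → F),
          Function.Injective A ∧ invOf hij A = ⟨U, f⟩) := by
  refine ⟨?_, ?_, ?_⟩
  · intro A B hA hB
    constructor
    · intro h
      obtain ⟨hU, hrow⟩ := (Stmt6.invOf_eq_iff' hij A B).mp h
      exact Stmt6.hard_dir hij A B hU hrow
    · rintro ⟨e, hst, hcomp⟩
      refine (Stmt6.invOf_eq_iff' hij A B).mpr ?_
      have h1 := Stmt6.easy_dir hij A e hst
      have hst' : e.symm.toLinearMap ∘ₗ stdInc F i j = stdInc F i j := by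
        conv_lhs => rw [← hst]
        apply LinearMap.ext
        intro v
        simp
      have hcomp' : e.symm.toLinearMap ∘ₗ B = A := by
        rw [← hcomp]
        apply LinearMap.ext
        intro v
        simp
      have h2 := Stmt6.easy_dir hij B e.symm hst'
      rw [hcomp] at h1
      rw [hcomp'] at h2
      exact ⟨le_antisymm h2.1 h1.1, h1.2⟩
  · intro A hA
    exact Stmt6.fofA_surjective hij A hA
  · intro U f hf
    exact Stmt6.part3 hij h2i U f hf
end

section
/- Let C be a locally finite EI category of type A∞ satisfying the transitivity condition, i.e., for each i the automorphism group G_{i+1} = C(i+1,i+1) acts transitively on C(i,i+1) by postcomposition. Then for any i < j, the group G_j acts transitively on C(i,j) by postcomposition. -/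
/-- A skeletal locally finite EI category with objects the non-negative
integers and `Hom i j` nonempty iff `i ≤ j`. -/
structure EICat where
  Hom : ℕ → ℕ → Type
  idm : ∀ i, Hom i i
  comp : ∀ {i j l : ℕ}, Hom j l → Hom i j → Hom i l
  id_comp : ∀ {i j : ℕ} (f : Hom i j), comp (idm j) f = f
  comp_id : ∀ {i j : ℕ} (f : Hom i j), comp f (idm i) = f
  assoc : ∀ {i j l m : ℕ} (f : Hom l m) (g : Hom j l) (h : Hom i j),
    comp (comp f g) h = comp f (comp g h)
  homFinite : ∀ i j, Finite (Hom i j)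
  ei : ∀ (i : ℕ) (f : Hom i i), ∃ g : Hom i i, comp f g = idm i ∧ comp g f = idm i
  nonempty_iff : ∀ i j, Nonempty (Hom i j) ↔ i ≤ j

/-- A morphism is an isomorphism. -/
def EICat.IsIso (C : EICat) {i j : ℕ} (f : C.Hom i j) : Prop :=
  ∃ g : C.Hom j i, C.comp f g = C.idm j ∧ C.comp g f = C.idm i

/-- A morphism is unfactorizable. -/
def EICat.Unfact (C : EICat) {i j : ℕ} (f : C.Hom i j) : Prop :=
  ¬ C.IsIso f ∧ ∀ (l : ℕ) (b₂ : C.Hom i l) (b₁ : C.Hom l j),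
    f = C.comp b₁ b₂ → C.IsIso b₁ ∨ C.IsIso b₂

/-- `C` is of type `A∞`: the underlying quiver of unfactorizable morphisms is
`0 → 1 → 2 → ⋯`. -/
def EICat.TypeAInf (C : EICat) : Prop :=
  ∀ i j : ℕ, (∃ f : C.Hom i j, C.Unfact f) ↔ j = i + 1

/-- The transitivity condition: `G_{i+1}` acts transitively on `C(i, i+1)`. -/
def EICat.TransCond (C : EICat) : Prop :=
  ∀ (i : ℕ) (f g : C.Hom i (i + 1)), ∃ e : C.Hom (i + 1) (i + 1), C.comp e f = g


lemma EICat.notIso (C : EICat) {i j : ℕ} (h : i < j) (f : C.Hom i j) : ¬ C.IsIso f := by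
  rintro ⟨g, _, _⟩
  exact absurd ((C.nonempty_iff j i).mp ⟨g⟩) (by omega)

lemma EICat.factor (C : EICat) (hA : C.TypeAInf) :
    ∀ n i j, j - i = n → i < j → ∀ f : C.Hom i j,
      ∃ (f' : C.Hom (i+1) j) (a : C.Hom i (i+1)), f = C.comp f' a := by
  intro n
  induction n using Nat.strong_induction_on with
  | _ n ih =>
    intro i j hn hij f
    by_cases hj : j = i + 1
    · subst hj
      exact ⟨C.idm (i+1), f, (C.id_comp f).symm⟩
    · have hnotiso := C.notIso hij f
      have hni : ¬ C.Unfact f := fun hu => hj ((hA i j).mp ⟨f, hu⟩)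
      rw [EICat.Unfact] at hni
      push_neg at hni
      obtain ⟨l, b₂, b₁, hf, hb⟩ := hni hnotiso
      have hl1 : i ≤ l := (C.nonempty_iff i l).mp ⟨b₂⟩
      have hl2 : l ≤ j := (C.nonempty_iff l j).mp ⟨b₁⟩
      have hli : i < l := by
        rcases lt_or_eq_of_le hl1 with h | h
        · exact h
        · exfalso; subst h; exact hb.2 (C.ei _ b₂)
      have hlj : l < j := by
        rcases lt_or_eq_of_le hl2 with h | h
        · exact h
        · exfalso; subst h; exact hb.1 (C.ei _ b₁)
      obtain ⟨b₂', a, hfa⟩ := ih (l - i) (by omega) i l rfl hli b₂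
      exact ⟨C.comp b₁ b₂', a, by rw [hf, hfa, C.assoc]⟩

/-- in a locally finite EI category of type `A∞` satisfying the
transitivity condition, `G_j` acts transitively on `C(i,j)` for all `i < j`. -/
theorem stmt_7 (C : EICat) (hA : C.TypeAInf) (hT : C.TransCond) :
    ∀ i j : ℕ, i < j → ∀ f g : C.Hom i j, ∃ e : C.Hom j j, C.comp e f = g := by
  suffices h : ∀ n i j, j - i = n → i < j →
      ∀ f g : C.Hom i j, ∃ e : C.Hom j j, C.comp e f = g by
    intro i j hij
    exact h (j - i) i j rfl hij
  intro n
  induction n using Nat.strong_induction_on with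
  | _ n ih =>
    intro i j hn hij f g
    by_cases hj : j = i + 1
    · subst hj; exact hT i f g
    · obtain ⟨f', a, hf⟩ := C.factor hA (j - i) i j rfl hij f
      obtain ⟨g', a', hg⟩ := C.factor hA (j - i) i j rfl hij g
      obtain ⟨e₁, he₁⟩ := hT i a a'
      have hij' : i + 1 < j := by
        rcases Nat.lt_or_ge (i+1) j with h | h
        · exact h
        · exact absurd (Nat.le_antisymm h hij) hj
      obtain ⟨e, he⟩ := ih (j - (i+1)) (by omega) (i+1) j rfl hij' f' (C.comp g' e₁)
      exact ⟨e, by rw [hf, ← C.assoc, he, C.assoc, he₁, ← hg]⟩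
end

section
/- Let C be a locally finite EI category of type A∞ satisfying the transitivity condition, with fixed morphisms α_j ∈ C(j, j+1) and α_{i,j} = α_{j−1} ⋯ α_i ∈ C(i,j), and H_{i,j} = Stab_{G_j}(α_{i,j}). If the induced map μ_{i,j} : H_{i,j}\C(i,j) → H_{i,j+1}\C(i,j+1) on orbit sets (sending the orbit of γ to the orbit of α_j γ) is injective, then the map m_{i,j} : C(i,j) → C(i,j+1), γ ↦ α_j γ, is injective. -/
/-- The chosen morphism `α_{i,j} = α_{j-1} ⋯ α_{i+1} α_i ∈ C(i,j)`, built from a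
choice of morphisms `α_j ∈ C(j, j+1)`. -/
def EICat.alph (C : EICat) (α : ∀ j, C.Hom j (j + 1)) (i : ℕ) :
    ∀ {j : ℕ}, i ≤ j → C.Hom i j :=
  fun {j} h => Nat.leRecOn h (fun {n} p => C.comp (α n) p) (C.idm i)

/-- `γ, γ' ∈ C(i,j)` lie in the same `H_{i,j}`-orbit, where
`H_{i,j} = Stab_{G_j}(α_{i,j})`. -/
def EICat.orbRel (C : EICat) (α : ∀ j, C.Hom j (j + 1)) {i j : ℕ} (hij : i ≤ j)
    (γ γ' : C.Hom i j) : Prop :=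
  ∃ h : C.Hom j j, C.comp h (C.alph α i hij) = C.alph α i hij ∧ C.comp h γ = γ'

/-- `δ, δ' ∈ C(i,j+1)` lie in the same `H_{i,j+1}`-orbit, where
`α_{i,j+1} = α_j α_{i,j}`. -/
def EICat.orbRelS (C : EICat) (α : ∀ j, C.Hom j (j + 1)) {i j : ℕ} (hij : i ≤ j)
    (δ δ' : C.Hom i (j + 1)) : Prop :=
  ∃ h : C.Hom (j + 1) (j + 1),
    C.comp h (C.comp (α j) (C.alph α i hij)) = C.comp (α j) (C.alph α i hij) ∧
    C.comp h δ = δ'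

lemma EICat.le_of_hom (C : EICat) {i j : ℕ} (f : C.Hom i j) : i ≤ j :=
  (C.nonempty_iff i j).mp ⟨f⟩

/-- Every morphism `i → j+1` factors through `j`. -/
lemma EICat.factor_top (C : EICat) (hA : C.TypeAInf) :
    ∀ (n i j : ℕ), i + n = j → ∀ γ : C.Hom i (j + 1),
      ∃ (f : C.Hom j (j + 1)) (γ' : C.Hom i j), γ = C.comp f γ' := by
  intro n
  induction n using Nat.strong_induction_on with
  | _ n ih =>
    intro i j hn γ
    by_cases hu : C.Unfact γ
    · have h1 : j + 1 = i + 1 := (hA i (j + 1)).mp ⟨γ, hu⟩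
      have hij : j = i := by omega
      subst hij
      exact ⟨γ, C.idm j, (C.comp_id γ).symm⟩
    · have hni : ¬ C.IsIso γ := by
        rintro ⟨g, -, -⟩
        have := C.le_of_hom g
        omega
      have h2 : ¬ ∀ (l : ℕ) (b₂ : C.Hom i l) (b₁ : C.Hom l (j + 1)),
          γ = C.comp b₁ b₂ → C.IsIso b₁ ∨ C.IsIso b₂ := fun h => hu ⟨hni, h⟩
      push_neg at h2
      obtain ⟨l, b₂, b₁, heq, hb1, hb2⟩ := h2
      have hil : i ≤ l := C.le_of_hom b₂
      have hlj : l ≤ j + 1 := C.le_of_hom b₁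
      have hil' : i ≠ l := by
        rintro rfl
        exact hb2 (C.ei i b₂)
      have hlj' : l ≠ j + 1 := by
        rintro rfl
        exact hb1 (C.ei _ b₁)
      obtain ⟨f, b₁', hf⟩ := ih (j - l) (by omega) l j (by omega) b₁
      exact ⟨f, C.comp b₁' b₂, by rw [heq, hf, C.assoc]⟩

lemma EICat.alph_self (C : EICat) (α : ∀ j, C.Hom j (j + 1)) (i : ℕ) (h : i ≤ i) :
    C.alph α i h = C.idm i := Nat.leRecOn_self _

lemma EICat.alph_succ (C : EICat) (α : ∀ j, C.Hom j (j + 1)) {i j : ℕ}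
    (hij : i ≤ j) (h2 : i ≤ j + 1) :
    C.alph α i h2 = C.comp (α j) (C.alph α i hij) := Nat.leRecOn_succ hij _

/-- `G_j` acts transitively on `C(i,j)`: every `γ` is `g · α_{i,j}`. -/
lemma EICat.trans_all (C : EICat) (hA : C.TypeAInf) (hT : C.TransCond)
    (α : ∀ j, C.Hom j (j + 1)) :
    ∀ {i j : ℕ} (hij : i ≤ j) (γ : C.Hom i j),
      ∃ g : C.Hom j j, γ = C.comp g (C.alph α i hij) := by
  intro i j hij
  induction j, hij using Nat.le_induction with
  | base =>
    intro γ
    exact ⟨γ, by rw [C.alph_self, C.comp_id]⟩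
  | succ j hij ih =>
    intro γ
    obtain ⟨f, γ', hf⟩ := C.factor_top hA (j - i) i j (by omega) γ
    obtain ⟨g, hg⟩ := ih γ'
    obtain ⟨e, he⟩ := hT j (α j) f
    obtain ⟨e', he'⟩ := hT j (α j) (C.comp (α j) g)
    refine ⟨C.comp e e', ?_⟩
    rw [C.alph_succ α hij, hf, hg, ← he, C.assoc, ← C.assoc (α j) g,
      ← he', C.assoc e' (α j), ← C.assoc e e']

/-- if the induced map `μ_{i,j}` on orbit sets is injective,
then `m_{i,j} : C(i,j) → C(i,j+1)`, `γ ↦ α_j γ`, is injective. -/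
theorem stmt_8 (C : EICat) (hA : C.TypeAInf) (hT : C.TransCond)
    (α : ∀ j, C.Hom j (j + 1)) (i j : ℕ) (hij : i ≤ j)
    (hμ : ∀ γ γ' : C.Hom i j,
      C.orbRelS α hij (C.comp (α j) γ) (C.comp (α j) γ') → C.orbRel α hij γ γ') :
    Function.Injective (fun γ : C.Hom i j => C.comp (α j) γ) := by
  intro γ γ' h
  have hmm : C.comp (α j) γ = C.comp (α j) γ' := h
  set a := C.alph α i hij with ha
  obtain ⟨g, hg⟩ := C.trans_all hA hT α hij γ
  obtain ⟨ginv, hg1, hg2⟩ := C.ei j g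
  obtain ⟨u, hu⟩ := hT j (α j) (C.comp (α j) ginv)
  set δ := C.comp ginv γ' with hδdef
  have key : C.comp (α j) δ = C.comp (α j) a := by
    calc C.comp (α j) (C.comp ginv γ')
        = C.comp (C.comp (α j) ginv) γ' := (C.assoc _ _ _).symm
      _ = C.comp (C.comp u (α j)) γ' := by rw [hu]
      _ = C.comp u (C.comp (α j) γ') := C.assoc _ _ _
      _ = C.comp u (C.comp (α j) γ) := by rw [hmm]
      _ = C.comp u (C.comp (α j) (C.comp g a)) := by rw [hg]
      _ = C.comp (C.comp (C.comp u (α j)) g) a := by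
          simp only [C.assoc]
      _ = C.comp (C.comp (C.comp (α j) ginv) g) a := by rw [hu]
      _ = C.comp (C.comp (α j) (C.comp ginv g)) a := by rw [C.assoc (α j) ginv g]
      _ = C.comp (α j) a := by rw [hg2, C.comp_id]
  have horb : C.orbRelS α hij (C.comp (α j) a) (C.comp (α j) δ) :=
    ⟨C.idm (j + 1), C.id_comp _, by rw [C.id_comp, key]⟩
  obtain ⟨k, hk1, hk2⟩ := hμ a δ horb
  have hδa : δ = a := by rw [← hk2, hk1]
  calc γ = C.comp g a := hg
    _ = C.comp g δ := by rw [hδa]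
    _ = C.comp (C.comp g ginv) γ' := by rw [hδdef, C.assoc]
    _ = γ' := by rw [hg1, C.id_comp]
end

section
/- Let C be a locally finite EI category of type A∞ satisfying the transitivity condition, with α_j ∈ C(j,j+1), α_{i,j} = α_{j−1}⋯α_i, and H_{i,j} = Stab_{G_j}(α_{i,j}). For any h ∈ H_{i,j} there exists g ∈ H_{i,j+1} such that g α_j γ = α_j h γ for all γ ∈ C(i,j). Consequently the map γ ↦ α_j γ sends each H_{i,j}-orbit in C(i,j) into a single H_{i,j+1}-orbit in C(i,j+1). -/
/-- for any `h ∈ H_{i,j}` there is `g ∈ H_{i,j+1}` with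
`g α_j γ = α_j h γ` for all `γ ∈ C(i,j)`; consequently `γ ↦ α_j γ` maps each
`H_{i,j}`-orbit into a single `H_{i,j+1}`-orbit. -/
theorem stmt_9 (C : EICat) (hA : C.TypeAInf) (hT : C.TransCond)
    (α : ∀ j, C.Hom j (j + 1)) (i j : ℕ) (hij : i ≤ j) :
    (∀ h : C.Hom j j, C.comp h (C.alph α i hij) = C.alph α i hij →
      ∃ g : C.Hom (j + 1) (j + 1),
        C.comp g (C.comp (α j) (C.alph α i hij)) = C.comp (α j) (C.alph α i hij) ∧
        ∀ γ : C.Hom i j, C.comp g (C.comp (α j) γ) = C.comp (α j) (C.comp h γ)) ∧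
    (∀ γ γ' : C.Hom i j, C.orbRel α hij γ γ' →
      C.orbRelS α hij (C.comp (α j) γ) (C.comp (α j) γ')) := by
  have key : ∀ h : C.Hom j j, C.comp h (C.alph α i hij) = C.alph α i hij →
      ∃ g : C.Hom (j + 1) (j + 1),
        C.comp g (C.comp (α j) (C.alph α i hij)) = C.comp (α j) (C.alph α i hij) ∧
        ∀ γ : C.Hom i j, C.comp g (C.comp (α j) γ) = C.comp (α j) (C.comp h γ) := by
    intro h hh
    obtain ⟨g, hg⟩ := hT j (α j) (C.comp (α j) h)
    refine ⟨g, ?_, fun γ => ?_⟩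
    · rw [← C.assoc, hg, C.assoc, hh]
    · rw [← C.assoc, hg, C.assoc]
  refine ⟨key, fun γ γ' ⟨h, hh, hγ⟩ => ?_⟩
  obtain ⟨g, hg1, hg2⟩ := key h hh
  exact ⟨g, hg1, by rw [hg2 γ, hγ]⟩
end

section
/- Let C be a strongly locally finite EI category. Then any morphism of C which is not an isomorphism can be written as a composition β₁ ⋯ β_r of unfactorizable morphisms. -/
open CategoryTheory

/-- A morphism is unfactorizable: not an isomorphism, and in any factorization
one of the two factors is an isomorphism. -/
def Unfact {C : Type} [SmallCategory C] {X Y : C} (f : X ⟶ Y) : Prop :=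
  ¬ IsIso f ∧ ∀ (Z : C) (b₂ : X ⟶ Z) (b₁ : Z ⟶ Y), f = b₂ ≫ b₁ → IsIso b₁ ∨ IsIso b₂

/-- The predicate of being a composition `β₁ ⋯ β_r` of unfactorizable
morphisms. -/
inductive CompOfUnfact {C : Type} [SmallCategory C] : ∀ {X Y : C}, (X ⟶ Y) → Prop
  | single {X Y : C} (f : X ⟶ Y) : Unfact f → CompOfUnfact f
  | comp {X Y Z : C} (f : X ⟶ Y) (g : Y ⟶ Z) :
      CompOfUnfact f → Unfact g → CompOfUnfact (f ≫ g)

theorem CompOfUnfact.append {C : Type} [SmallCategory C] {Y Z : C} {g : Y ⟶ Z}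
    (hg : CompOfUnfact g) : ∀ {X : C} (f : X ⟶ Y), CompOfUnfact f → CompOfUnfact (f ≫ g) := by
  induction hg with
  | single g hg => exact fun f hf => .comp f g hf hg
  | comp a b _ hb ih =>
    intro X f hf
    rw [← Category.assoc]
    exact .comp _ b (ih f hf) hb

/-- in a skeletal, strongly locally finite EI category, any
morphism which is not an isomorphism is a composition of unfactorizable
morphisms. -/
theorem stmt_10 {C : Type} [SmallCategory C]
    (hskel : Skeletal C)
    (hEI : ∀ (X : C) (f : X ⟶ X), IsIso f)
    (hfin : ∀ X Y : C, Finite (X ⟶ Y))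
    (hslf : ∀ X Y : C, {Z : C | Nonempty (X ⟶ Z) ∧ Nonempty (Z ⟶ Y)}.Finite)
    {X Y : C} (f : X ⟶ Y) (hf : ¬ IsIso f) : CompOfUnfact f := by
  -- In a skeletal EI category, morphisms in both directions force equality.
  have eqObj : ∀ {A B : C}, (A ⟶ B) → (B ⟶ A) → A = B := by
    intro A B g h
    have h1 : IsIso (g ≫ h) := hEI A _
    have h2 : IsIso (h ≫ g) := hEI B _
    have hr : g ≫ (h ≫ inv (g ≫ h)) = 𝟙 A := by
      rw [← Category.assoc]; exact IsIso.hom_inv_id _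
    have hl : (inv (h ≫ g) ≫ h) ≫ g = 𝟙 B := by
      rw [Category.assoc]; exact IsIso.inv_hom_id _
    have heq : (h ≫ inv (g ≫ h)) = (inv (h ≫ g) ≫ h) := by
      calc h ≫ inv (g ≫ h) = 𝟙 B ≫ (h ≫ inv (g ≫ h)) := by rw [Category.id_comp]
        _ = ((inv (h ≫ g) ≫ h) ≫ g) ≫ (h ≫ inv (g ≫ h)) := by rw [hl]
        _ = (inv (h ≫ g) ≫ h) ≫ (g ≫ (h ≫ inv (g ≫ h))) := by simp only [Category.assoc]
        _ = inv (h ≫ g) ≫ h := by rw [hr, Category.comp_id]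
    have : IsIso g := ⟨h ≫ inv (g ≫ h), hr, by rw [heq]; exact hl⟩
    exact hskel ⟨asIso g⟩
  have main : ∀ (n : ℕ) {X Y : C} (f : X ⟶ Y), ¬ IsIso f →
      (hslf X Y).toFinset.card ≤ n → CompOfUnfact f := by
    intro n
    induction n with
    | zero =>
      intro X Y f hf hc
      exfalso
      have hXmem : X ∈ (hslf X Y).toFinset := by
        rw [Set.Finite.mem_toFinset]; exact ⟨⟨𝟙 X⟩, ⟨f⟩⟩
      have := Finset.card_pos.mpr ⟨X, hXmem⟩
      omega
    | succ n ih =>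
      intro X Y f hf hc
      by_cases hu : Unfact f
      · exact .single f hu
      · rw [Unfact] at hu
        push_neg at hu
        obtain ⟨Z, b₂, b₁, hfac, hb₁, hb₂⟩ := hu hf
        -- strict inclusions of between-sets
        have hsub₂ : (hslf X Z).toFinset ⊆ (hslf X Y).toFinset := by
          intro W hW
          rw [Set.Finite.mem_toFinset] at hW ⊢
          exact ⟨hW.1, ⟨hW.2.some ≫ b₁⟩⟩
        have hYmem : Y ∈ (hslf X Y).toFinset := by
          rw [Set.Finite.mem_toFinset]; exact ⟨⟨f⟩, ⟨𝟙 Y⟩⟩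
        have hYnot : Y ∉ (hslf X Z).toFinset := by
          rw [Set.Finite.mem_toFinset]
          rintro ⟨-, ⟨g⟩⟩
          have : Z = Y := eqObj b₁ g
          subst this
          exact hb₁ (hEI Z b₁)
        have hc₂ : (hslf X Z).toFinset.card ≤ n := by
          have := Finset.card_lt_card
            ((Finset.ssubset_iff_of_subset hsub₂).mpr ⟨Y, hYmem, hYnot⟩)
          omega
        have hsub₁ : (hslf Z Y).toFinset ⊆ (hslf X Y).toFinset := by
          intro W hW
          rw [Set.Finite.mem_toFinset] at hW ⊢
          exact ⟨⟨b₂ ≫ hW.1.some⟩, hW.2⟩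
        have hXmem : X ∈ (hslf X Y).toFinset := by
          rw [Set.Finite.mem_toFinset]; exact ⟨⟨𝟙 X⟩, ⟨f⟩⟩
        have hXnot : X ∉ (hslf Z Y).toFinset := by
          rw [Set.Finite.mem_toFinset]
          rintro ⟨⟨g⟩, -⟩
          have : X = Z := eqObj b₂ g
          subst this
          exact hb₂ (hEI X b₂)
        have hc₁ : (hslf Z Y).toFinset.card ≤ n := by
          have := Finset.card_lt_card
            ((Finset.ssubset_iff_of_subset hsub₁).mpr ⟨X, hXmem, hXnot⟩)
          omega
        have c₂ := ih b₂ hb₂ hc₂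
        have c₁ := ih b₁ hb₁ hc₁
        rw [hfac]
        exact c₁.append b₂ c₂
  exact main (hslf X Y).toFinset.card f hf le_rfl
end

section
/- Let C be a locally finite EI category of type A∞ over a field k of characteristic 0, satisfying the transitivity and bijectivity conditions. Then every finitely generated kC-module is Noetherian, i.e., all of its kC-submodules are finitely generated. -/
set_option linter.unusedVariables false
set_option linter.unusedSectionVars false
set_option maxHeartbeats 1000000


/-- The bijectivity condition: for each `i`, the induced maps
`μ_{i,j} : H_{i,j}\C(i,j) → H_{i,j+1}\C(i,j+1)` are bijective for all
sufficiently large `j`. -/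
def EICat.BijCond (C : EICat) (α : ∀ j, C.Hom j (j + 1)) : Prop :=
  ∀ i : ℕ, ∃ N : ℕ, ∀ (j : ℕ) (hij : i ≤ j), N ≤ j →
    (∀ γ γ' : C.Hom i j,
      C.orbRelS α hij (C.comp (α j) γ) (C.comp (α j) γ') → C.orbRel α hij γ γ') ∧
    (∀ δ : C.Hom i (j + 1), ∃ γ : C.Hom i j, C.orbRelS α hij (C.comp (α j) γ) δ)

/-- A `kC`-module: a (covariant) functor from `C` to `k`-modules. -/
structure CMod (k : Type) [CommRing k] (C : EICat) where
  V : ℕ → Type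
  [acg : ∀ i, AddCommGroup (V i)]
  [mod : ∀ i, Module k (V i)]
  act : ∀ {i j : ℕ}, C.Hom i j → V i →ₗ[k] V j
  act_id : ∀ i : ℕ, act (C.idm i) = LinearMap.id
  act_comp : ∀ {i j l : ℕ} (f : C.Hom j l) (g : C.Hom i j),
    act (C.comp f g) = (act f).comp (act g)

attribute [instance] CMod.acg CMod.mod

variable {k : Type} [CommRing k] {C : EICat}

/-- A family of `k`-submodules `W i ⊆ V i` is a `kC`-submodule if it is closed
under the action of all morphisms of `C`. -/
def CMod.Closed (M : CMod k C) (W : ∀ i, Submodule k (M.V i)) : Prop :=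
  ∀ (i j : ℕ) (f : C.Hom i j) (x : M.V i), x ∈ W i → M.act f x ∈ W j

/-- The `kC`-module `M` is finitely generated: there is a finite family of
homogeneous elements contained in no proper `kC`-submodule. -/
def CMod.FG (M : CMod k C) : Prop :=
  ∃ (n : ℕ) (d : Fin n → ℕ) (v : ∀ m : Fin n, M.V (d m)),
    ∀ W : ∀ i, Submodule k (M.V i), M.Closed W →
      (∀ m : Fin n, v m ∈ W (d m)) → ∀ i, W i = ⊤

/-- A `kC`-submodule `W` of `M` is finitely generated: it contains a finite
family of homogeneous elements not all contained in any smaller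
`kC`-submodule. -/
def CMod.SubFG (M : CMod k C) (W : ∀ i, Submodule k (M.V i)) : Prop :=
  ∃ (n : ℕ) (d : Fin n → ℕ) (v : ∀ m : Fin n, M.V (d m)),
    (∀ m : Fin n, v m ∈ W (d m)) ∧
    ∀ W' : ∀ i, Submodule k (M.V i), M.Closed W' →
      (∀ m : Fin n, v m ∈ W' (d m)) → ∀ i, W i ≤ W' i

/-- The `kC`-module `M` is Noetherian: every `kC`-submodule is finitely
generated. -/
def CMod.Noetherian (M : CMod k C) : Prop :=
  ∀ W : ∀ i, Submodule k (M.V i), M.Closed W → M.SubFG W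


namespace EICat

variable {C : EICat}

noncomputable instance instFintypeHom (C : EICat) (i j : ℕ) : Fintype (C.Hom i j) :=
  @Fintype.ofFinite _ (C.homFinite i j)

noncomputable instance instGroupEnd (C : EICat) (j : ℕ) : Group (C.Hom j j) where
  mul a b := C.comp a b
  one := C.idm j
  inv a := (C.ei j a).choose
  mul_assoc a b c := C.assoc a b c
  one_mul := C.id_comp
  mul_one := C.comp_id
  inv_mul_cancel a := ((C.ei j a).choose_spec).2

lemma mul_def {j : ℕ} (a b : C.Hom j j) : a * b = C.comp a b := rfl

lemma one_def {j : ℕ} : (1 : C.Hom j j) = C.idm j := rfl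

lemma comp_one {i j : ℕ} (γ : C.Hom i j) : C.comp (1 : C.Hom j j) γ = γ := C.id_comp γ

lemma comp_mul {i j : ℕ} (a b : C.Hom j j) (γ : C.Hom i j) :
    C.comp (a * b) γ = C.comp a (C.comp b γ) := C.assoc a b γ

lemma inv_comp_comp {i j : ℕ} (a : C.Hom j j) (γ : C.Hom i j) :
    C.comp a⁻¹ (C.comp a γ) = γ := by
  rw [← comp_mul, inv_mul_cancel, comp_one]

lemma comp_inv_comp {i j : ℕ} (a : C.Hom j j) (γ : C.Hom i j) :
    C.comp a (C.comp a⁻¹ γ) = γ := by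
  rw [← comp_mul, mul_inv_cancel, comp_one]

lemma comp_left_injective {i j : ℕ} (e : C.Hom j j) :
    Function.Injective (fun γ : C.Hom i j => C.comp e γ) := by
  intro x y h
  have h2 := congrArg (C.comp e⁻¹) h
  simpa [inv_comp_comp] using h2

lemma alph_self_s11 (α : ∀ j, C.Hom j (j + 1)) (i : ℕ) :
    C.alph α i (le_refl i) = C.idm i := Nat.leRecOn_self _

lemma alph_succ_s11 (α : ∀ j, C.Hom j (j + 1)) {i j : ℕ} (h1 : i ≤ j) (h2 : i ≤ j + 1) :
    C.alph α i h2 = C.comp (α j) (C.alph α i h1) := Nat.leRecOn_succ h1 _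

lemma not_isIso_of_lt {i j : ℕ} (hij : i < j) (f : C.Hom i j) : ¬ C.IsIso f := by
  rintro ⟨g, -, -⟩
  have := (C.nonempty_iff j i).1 ⟨g⟩
  omega

lemma step_factor (hA : C.TypeAInf) : ∀ (n i j : ℕ), j = i + n → ∀ f : C.Hom i (j + 1),
    ∃ (g : C.Hom j (j + 1)) (h : C.Hom i j), f = C.comp g h := by
  intro n
  induction n using Nat.strong_induction_on with
  | _ n IH =>
    intro i j hj f
    rcases Nat.eq_zero_or_pos n with h0 | hpos
    · have : j = i := by omega
      subst this
      exact ⟨f, C.idm _, (C.comp_id f).symm⟩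
    · have hni : ¬ C.IsIso f := not_isIso_of_lt (by omega) f
      have hnu : ¬ C.Unfact f := by
        intro hu
        have := (hA i (j + 1)).1 ⟨f, hu⟩
        omega
      rw [Unfact] at hnu
      push_neg at hnu
      obtain ⟨l, b₂, b₁, hf, hb₁, hb₂⟩ := hnu hni
      have hil : i ≤ l := (C.nonempty_iff i l).1 ⟨b₂⟩
      have hlj : l ≤ j + 1 := (C.nonempty_iff l (j + 1)).1 ⟨b₁⟩
      have hil' : i < l := by
        rcases eq_or_lt_of_le hil with h | h
        · subst h; exact absurd (C.ei i b₂) hb₂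
        · exact h
      have hlj' : l < j + 1 := by
        rcases eq_or_lt_of_le hlj with h | h
        · subst h; exact absurd (C.ei (j+1) b₁) hb₁
        · exact h
      obtain ⟨g, h', hb₁eq⟩ := IH (j - l) (by omega) l j (by omega) b₁
      exact ⟨g, C.comp h' b₂, by rw [hf, hb₁eq, C.assoc]⟩

lemma exists_factor (hA : C.TypeAInf) (hT : C.TransCond) (α : ∀ j, C.Hom j (j + 1))
    {i j : ℕ} (hij : i ≤ j) :
    ∀ f : C.Hom i j, ∃ e : C.Hom j j, C.comp e (C.alph α i hij) = f := by
  induction j, hij using Nat.le_induction with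
  | base =>
    intro f
    exact ⟨f, by rw [alph_self_s11, C.comp_id]⟩
  | succ j hij IH =>
    intro f
    obtain ⟨g, h, hf⟩ := step_factor hA (j - i) i j (by omega) f
    obtain ⟨e', he'⟩ := IH h
    obtain ⟨e, he⟩ := hT j (α j) (C.comp g e')
    refine ⟨e, ?_⟩
    rw [alph_succ_s11 α hij, ← C.assoc, he, C.assoc, he', ← hf]

end EICat

namespace EICat

open Finset

section LinAlg

variable (k : Type) [Field k] [CharZero k] {C : EICat}

/-- The action of a morphism `f : j → l` on the free modules `kC(i,-)`. -/
noncomputable def LM {i j l : ℕ} (C : EICat) (f : C.Hom j l) :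
    ((C.Hom i j) →₀ k) →ₗ[k] ((C.Hom i l) →₀ k) :=
  Finsupp.lmapDomain k k (C.comp f)

variable {k}

lemma LM_apply {i j l : ℕ} (f : C.Hom j l) (x : C.Hom i j →₀ k) :
    LM k C f x = Finsupp.mapDomain (C.comp f) x := rfl

lemma LM_LM {i j l m : ℕ} (g : C.Hom l m) (f : C.Hom j l) (x : C.Hom i j →₀ k) :
    LM k C g (LM k C f x) = LM k C (C.comp g f) x := by
  simp only [LM, Finsupp.lmapDomain_apply]
  rw [← Finsupp.mapDomain_comp]
  congr 1
  funext a
  exact (C.assoc g f a).symm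

lemma LM_id {i j : ℕ} (x : C.Hom i j →₀ k) : LM k C (C.idm j) x = x := by
  simp only [LM, Finsupp.lmapDomain_apply]
  have : (C.comp (C.idm j) : C.Hom i j → C.Hom i j) = id := funext fun a => C.id_comp a
  rw [this, Finsupp.mapDomain_id]

lemma LM_unit_apply {i j : ℕ} (e : C.Hom j j) (x : C.Hom i j →₀ k) (γ : C.Hom i j) :
    (LM k C e x) (C.comp e γ) = x γ :=
  Finsupp.mapDomain_apply (comp_left_injective e) x γ

lemma LM_unit_apply' {i j : ℕ} (e : C.Hom j j) (x : C.Hom i j →₀ k) (δ : C.Hom i j) :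
    (LM k C e x) δ = x (C.comp e⁻¹ δ) := by
  conv_lhs => rw [show δ = C.comp e (C.comp e⁻¹ δ) from (comp_inv_comp e δ).symm]
  exact LM_unit_apply e x _

variable (k)

/-- Summing the action over a finite set of endomorphisms. -/
noncomputable def TS {i j : ℕ} (C : EICat) (S : Finset (C.Hom j j)) :
    ((C.Hom i j) →₀ k) →ₗ[k] ((C.Hom i j) →₀ k) :=
  ∑ h ∈ S, LM k C h

variable {k}

lemma TS_apply {i j : ℕ} (S : Finset (C.Hom j j)) (x : C.Hom i j →₀ k) :
    TS k C S x = ∑ h ∈ S, LM k C h x := by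
  simp [TS]

lemma TS_coeff {i j : ℕ} (S : Finset (C.Hom j j)) (x : C.Hom i j →₀ k) (γ : C.Hom i j) :
    (TS k C S x) γ = ∑ h ∈ S, x (C.comp h⁻¹ γ) := by
  rw [TS_apply, Finset.sum_apply']
  exact Finset.sum_congr rfl fun h _ => LM_unit_apply' h x γ

open Classical in
/-- The stabiliser of `α_{i,j}` in `G_j`, as a finset. -/
noncomputable def Hst (C : EICat) (α : ∀ j, C.Hom j (j + 1)) {i j : ℕ} (hij : i ≤ j) :
    Finset (C.Hom j j) :=
  Finset.univ.filter (fun h => C.comp h (C.alph α i hij) = C.alph α i hij)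

lemma mem_Hst {α : ∀ j, C.Hom j (j + 1)} {i j : ℕ} {hij : i ≤ j} {h : C.Hom j j} :
    h ∈ Hst C α hij ↔ C.comp h (C.alph α i hij) = C.alph α i hij := by
  classical
  simp [Hst]

lemma one_mem_Hst {α : ∀ j, C.Hom j (j + 1)} {i j : ℕ} (hij : i ≤ j) :
    (1 : C.Hom j j) ∈ Hst C α hij := mem_Hst.2 (comp_one _)

lemma inv_mem_Hst {α : ∀ j, C.Hom j (j + 1)} {i j : ℕ} {hij : i ≤ j} {h : C.Hom j j}
    (hh : h ∈ Hst C α hij) : h⁻¹ ∈ Hst C α hij := by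
  rw [mem_Hst] at hh ⊢
  conv_lhs => rw [← hh]
  exact inv_comp_comp _ _

lemma mul_mem_Hst {α : ∀ j, C.Hom j (j + 1)} {i j : ℕ} {hij : i ≤ j} {h g : C.Hom j j}
    (hh : h ∈ Hst C α hij) (hg : g ∈ Hst C α hij) : h * g ∈ Hst C α hij := by
  rw [mem_Hst] at hh hg ⊢
  rw [comp_mul, hg, hh]

/-- Elements in the image of `TS` over the stabiliser have orbit-constant
coefficients. -/
lemma TS_coeff_orbit {α : ∀ j, C.Hom j (j + 1)} {i j : ℕ} {hij : i ≤ j}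
    (x : C.Hom i j →₀ k) {h₀ : C.Hom j j} (hh₀ : h₀ ∈ Hst C α hij) (γ : C.Hom i j) :
    (TS k C (Hst C α hij) x) (C.comp h₀ γ) = (TS k C (Hst C α hij) x) γ := by
  rw [TS_coeff, TS_coeff]
  refine Finset.sum_nbij' (fun h => h₀⁻¹ * h) (fun h => h₀ * h) ?_ ?_ ?_ ?_ ?_
  · intro a ha; exact mul_mem_Hst (inv_mem_Hst hh₀) ha
  · intro a ha; exact mul_mem_Hst hh₀ ha
  · intro a _; simp [← mul_assoc]
  · intro a _; simp [← mul_assoc]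
  · intro a _
    rw [← comp_mul]
    congr 1
    rw [mul_inv_rev, inv_inv]

/-- Conversely, every orbit-constant element lies in the image of `TS`. -/
lemma orbitconst_mem_range_TS {α : ∀ j, C.Hom j (j + 1)} {i j : ℕ} {hij : i ≤ j}
    (w : C.Hom i j →₀ k)
    (hw : ∀ h ∈ Hst C α hij, ∀ γ, w (C.comp h γ) = w γ) :
    w ∈ LinearMap.range (TS k C (i := i) (Hst C α hij)) := by
  refine ⟨(((Hst C α hij).card : k)⁻¹) • w, ?_⟩
  have hcard : ((Hst C α hij).card : k) ≠ 0 := by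
    refine Nat.cast_ne_zero.2 ?_
    have : (1 : C.Hom j j) ∈ Hst C α hij := one_mem_Hst hij
    exact Finset.card_ne_zero_of_mem this
  ext γ
  rw [TS_coeff]
  have : ∀ h ∈ Hst C α hij, ((((Hst C α hij).card : k)⁻¹) • w) (C.comp h⁻¹ γ)
      = (((Hst C α hij).card : k)⁻¹) * w γ := by
    intro h hh
    rw [Finsupp.smul_apply, hw h⁻¹ (inv_mem_Hst hh) γ, smul_eq_mul]
  rw [Finset.sum_congr rfl this, Finset.sum_const, nsmul_eq_mul]
  field_simp

end LinAlg

end EICat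

namespace EICat

open Finset Module
open scoped Classical

section Crux

variable {k : Type} [Field k] [CharZero k] {C : EICat}

lemma LM_coeff {i j l : ℕ} (f : C.Hom j l) (x : C.Hom i j →₀ k) (δ : C.Hom i l) :
    (LM k C f x) δ = ∑ γ ∈ x.support, if C.comp f γ = δ then x γ else 0 := by
  classical
  rw [LM_apply, Finsupp.mapDomain, Finsupp.sum_apply, Finsupp.sum]
  exact Finset.sum_congr rfl fun γ _ => Finsupp.single_apply

lemma TS_mem {i j : ℕ} (S : Finset (C.Hom j j)) {U : Submodule k (C.Hom i j →₀ k)}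
    (hU : ∀ h : C.Hom j j, ∀ u ∈ U, LM k C h u ∈ U) {u : C.Hom i j →₀ k} (hu : u ∈ U) :
    TS k C S u ∈ U := by
  rw [TS_apply]
  exact Submodule.sum_mem _ fun h _ => hU h u hu

variable (α : ∀ j, C.Hom j (j + 1))

lemma mem_Hst_succ {i j : ℕ} {hij : i ≤ j} {h : C.Hom (j+1) (j+1)} :
    h ∈ Hst C α (hij.trans (Nat.le_succ j)) ↔
      C.comp h (C.comp (α j) (C.alph α i hij)) = C.comp (α j) (C.alph α i hij) := by
  rw [mem_Hst, alph_succ_s11 α hij]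

lemma exists_lift (hT : C.TransCond) {i j : ℕ} (hij : i ≤ j) {h : C.Hom j j}
    (hh : h ∈ Hst C α hij) :
    ∃ e ∈ Hst C α (hij.trans (Nat.le_succ j)), C.comp e (α j) = C.comp (α j) h := by
  obtain ⟨e, he⟩ := hT j (α j) (C.comp (α j) h)
  refine ⟨e, ?_, he⟩
  rw [mem_Hst_succ, ← C.assoc, he, C.assoc, mem_Hst.1 hh]

/-- Key injectivity: if `TS H x ≠ 0` then applying `α_j` and `TS H'` is still nonzero. -/
lemma theta_ne_zero {i j : ℕ} (hij : i ≤ j)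
    (hinj : ∀ γ γ' : C.Hom i j,
      C.orbRelS α hij (C.comp (α j) γ) (C.comp (α j) γ') → C.orbRel α hij γ γ')
    (x : C.Hom i j →₀ k) (hx : TS k C (Hst C α hij) x ≠ 0) :
    TS k C (Hst C α (hij.trans (Nat.le_succ j)))
      (LM k C (α j) (TS k C (Hst C α hij) x)) ≠ 0 := by
  classical
  set z := TS k C (Hst C α hij) x with hz
  obtain ⟨γ₀, hγ₀⟩ : ∃ γ₀, z γ₀ ≠ 0 := by
    by_contra hcon
    push_neg at hcon
    exact hx (Finsupp.ext hcon)
  set δ₀ := C.comp (α j) γ₀ with hδ₀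
  intro hw0
  have hcoeff : (TS k C (Hst C α (hij.trans (Nat.le_succ j))) (LM k C (α j) z)) δ₀ = 0 := by
    rw [hw0]; rfl
  rw [TS_coeff] at hcoeff
  have key : ∀ h' ∈ Hst C α (hij.trans (Nat.le_succ j)),
      (LM k C (α j) z) (C.comp h'⁻¹ δ₀) =
        ((z.support.filter fun γ => C.comp (α j) γ = C.comp h'⁻¹ δ₀).card) • z γ₀ := by
    intro h' hh'
    rw [LM_coeff, ← Finset.sum_filter]
    have hconst : ∀ γ ∈ z.support.filter fun γ => C.comp (α j) γ = C.comp h'⁻¹ δ₀,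
        z γ = z γ₀ := by
      intro γ hγ
      rw [Finset.mem_filter] at hγ
      have h1 : C.comp h' (C.comp (α j) γ) = δ₀ := by rw [hγ.2]; exact comp_inv_comp h' δ₀
      have hrel : C.orbRelS α hij (C.comp (α j) γ) (C.comp (α j) γ₀) :=
        ⟨h', mem_Hst_succ α |>.1 hh', h1⟩
      obtain ⟨h, hhα, hhγ⟩ := hinj γ γ₀ hrel
      have : z (C.comp h γ) = z γ := TS_coeff_orbit x (mem_Hst.2 hhα) γ
      rw [← hhγ, this]
    rw [Finset.sum_congr rfl hconst, Finset.sum_const]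
  rw [Finset.sum_congr rfl key, ← Finset.sum_smul] at hcoeff
  have hpos : 0 < ∑ h' ∈ Hst C α (hij.trans (Nat.le_succ j)),
      (z.support.filter fun γ => C.comp (α j) γ = C.comp h'⁻¹ δ₀).card := by
    have hγ₀mem : γ₀ ∈ z.support.filter
        fun γ => C.comp (α j) γ = C.comp (1 : C.Hom (j+1) (j+1))⁻¹ δ₀ := by
      rw [Finset.mem_filter]
      exact ⟨Finsupp.mem_support_iff.2 hγ₀, by rw [inv_one, comp_one]⟩
    have h1 : 0 < (z.support.filter
        fun γ => C.comp (α j) γ = C.comp (1 : C.Hom (j+1) (j+1))⁻¹ δ₀).card :=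
      Finset.card_pos.2 ⟨γ₀, hγ₀mem⟩
    calc 0 < _ := h1
      _ ≤ _ := Finset.single_le_sum (f := fun h' =>
          (z.support.filter fun γ => C.comp (α j) γ = C.comp h'⁻¹ δ₀).card)
          (fun _ _ => Nat.zero_le _) (one_mem_Hst (hij.trans (Nat.le_succ j)))
  rw [nsmul_eq_mul] at hcoeff
  exact (mul_ne_zero (Nat.cast_ne_zero.2 hpos.ne') hγ₀) hcoeff
/-- Restriction along `γ ↦ α_j ∘ γ`. -/
noncomputable def Rmap (k : Type) [Field k] (C : EICat) (α : ∀ j, C.Hom j (j + 1)) (i j : ℕ) :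
    (C.Hom i (j+1) →₀ k) →ₗ[k] (C.Hom i j →₀ k) :=
  (Finsupp.linearEquivFunOnFinite k k (C.Hom i j)).symm.toLinearMap ∘ₗ
    (LinearMap.funLeft k k (fun γ : C.Hom i j => C.comp (α j) γ)) ∘ₗ
    (Finsupp.linearEquivFunOnFinite k k (C.Hom i (j+1))).toLinearMap

lemma Rmap_coeff {i j : ℕ} (y : C.Hom i (j+1) →₀ k) (γ : C.Hom i j) :
    (Rmap k C α i j y) γ = y (C.comp (α j) γ) := rfl

lemma rank_range_TS_succ_le (hT : C.TransCond) {i j : ℕ} (hij : i ≤ j)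
    (hsurj : ∀ δ : C.Hom i (j + 1), ∃ γ, C.orbRelS α hij (C.comp (α j) γ) δ) :
    finrank k (LinearMap.range (TS k C (i := i) (Hst C α (hij.trans (Nat.le_succ j))))) ≤
      finrank k (LinearMap.range (TS k C (i := i) (Hst C α hij))) := by
  set p := LinearMap.range (TS k C (i := i) (Hst C α (hij.trans (Nat.le_succ j)))) with hp
  have h1 : ∀ w ∈ p, Rmap k C α i j w ∈ LinearMap.range (TS k C (i := i) (Hst C α hij)) := by
    rintro w ⟨y, rfl⟩
    apply orbitconst_mem_range_TS
    intro h hh γ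
    rw [Rmap_coeff, Rmap_coeff]
    obtain ⟨e, heH', he⟩ := exists_lift α hT hij hh
    have heq : C.comp (α j) (C.comp h γ) = C.comp e (C.comp (α j) γ) := by
      rw [← C.assoc, ← he, C.assoc]
    rw [heq]
    exact TS_coeff_orbit y heH' _
  have h2 : ∀ w ∈ p, Rmap k C α i j w = 0 → w = 0 := by
    rintro w ⟨y, rfl⟩ h0
    ext δ
    obtain ⟨γ, h, hstab, hδ⟩ := hsurj δ
    have hh : h ∈ Hst C α (hij.trans (Nat.le_succ j)) := (mem_Hst_succ α).2 hstab
    calc (TS k C (Hst C α (hij.trans (Nat.le_succ j))) y) δ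
        = (TS k C (Hst C α (hij.trans (Nat.le_succ j))) y) (C.comp h (C.comp (α j) γ)) := by
          rw [hδ]
      _ = (TS k C (Hst C α (hij.trans (Nat.le_succ j))) y) (C.comp (α j) γ) :=
          TS_coeff_orbit y hh _
      _ = (Rmap k C α i j (TS k C (Hst C α (hij.trans (Nat.le_succ j))) y)) γ :=
          (Rmap_coeff α _ _).symm
      _ = 0 := by rw [h0]; rfl
  set f := (Rmap k C α i j) ∘ₗ p.subtype with hf
  have hinjf : Function.Injective f := by
    intro a b hab
    have hab' : Rmap k C α i j a.1 = Rmap k C α i j b.1 := hab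
    have hsub : Rmap k C α i j (a.1 - b.1) = 0 := by
      rw [map_sub, hab', sub_self]
    have hmem : a.1 - b.1 ∈ p := p.sub_mem a.2 b.2
    have h4 := h2 _ hmem hsub
    exact Subtype.ext (sub_eq_zero.1 h4)
  calc finrank k p = finrank k (LinearMap.range f) := (LinearMap.finrank_range_of_inj hinjf).symm
    _ ≤ finrank k (LinearMap.range (TS k C (i := i) (Hst C α hij))) := by
        apply Submodule.finrank_mono
        rintro y ⟨⟨w, hw⟩, rfl⟩
        exact h1 w hw

lemma maschke_le (hA : C.TypeAInf) (hT : C.TransCond) {i j : ℕ} (hij : i ≤ j)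
    {A B : Submodule k (C.Hom i j →₀ k)} (hAB : A ≤ B)
    (hAst : ∀ g : C.Hom j j, ∀ a ∈ A, LM k C g a ∈ A)
    (hBst : ∀ g : C.Hom j j, ∀ b ∈ B, LM k C g b ∈ B)
    (hmap : Submodule.map (TS k C (Hst C α hij)) B ≤ Submodule.map (TS k C (Hst C α hij)) A) :
    B ≤ A := by
  classical
  obtain ⟨A', hcompl⟩ := Submodule.exists_isCompl A
  set q : (C.Hom i j →₀ k) →ₗ[k] (C.Hom i j →₀ k) :=
    A.subtype ∘ₗ Submodule.linearProjOfIsCompl A A' hcompl with hq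
  have hqA : ∀ x, q x ∈ A := fun x => (Submodule.linearProjOfIsCompl A A' hcompl x).2
  have hqid : ∀ a ∈ A, q a = a := by
    intro a ha
    have h1 : Submodule.linearProjOfIsCompl A A' hcompl a = ⟨a, ha⟩ :=
      Submodule.linearProjOfIsCompl_apply_left hcompl ⟨a, ha⟩
    show A.subtype (Submodule.linearProjOfIsCompl A A' hcompl a) = a
    rw [h1]
    rfl
  haveI : Nonempty (C.Hom j j) := ⟨C.idm j⟩
  set cG := Fintype.card (C.Hom j j) with hcG
  have hcGk : (cG : k) ≠ 0 := Nat.cast_ne_zero.2 Fintype.card_ne_zero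
  set pb : (C.Hom i j →₀ k) →ₗ[k] (C.Hom i j →₀ k) :=
    ∑ g : C.Hom j j, (LM k C g⁻¹) ∘ₗ q ∘ₗ (LM k C g) with hpb
  have pb_apply : ∀ x, pb x = ∑ g : C.Hom j j, LM k C g⁻¹ (q (LM k C g x)) := by
    intro x
    rw [hpb, LinearMap.sum_apply]
    rfl
  have pb_memA : ∀ x, pb x ∈ A := fun x => by
    rw [pb_apply]
    exact Submodule.sum_mem _ fun g _ => hAst _ _ (hqA _)
  have pb_A : ∀ a ∈ A, pb a = cG • a := by
    intro a ha
    rw [pb_apply]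
    have h3 : ∀ g : C.Hom j j, LM k C g⁻¹ (q (LM k C g a)) = a := by
      intro g
      rw [hqid _ (hAst g a ha), LM_LM]
      have h1 : C.comp g⁻¹ g = C.idm j := inv_mul_cancel g
      rw [h1, LM_id]
    rw [Finset.sum_congr rfl (fun g _ => h3 g), Finset.sum_const, Finset.card_univ]
  have pb_comm : ∀ (g₀ : C.Hom j j) x, pb (LM k C g₀ x) = LM k C g₀ (pb x) := by
    intro g₀ x
    rw [pb_apply, pb_apply, map_sum]
    refine Fintype.sum_equiv (Equiv.mulRight g₀) _ _ ?_
    intro g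
    show LM k C g⁻¹ (q (LM k C g (LM k C g₀ x)))
        = LM k C g₀ (LM k C (g * g₀)⁻¹ (q (LM k C (g * g₀) x)))
    rw [LM_LM g g₀ x, LM_LM g₀ (g * g₀)⁻¹]
    have e1 : C.comp g g₀ = g * g₀ := rfl
    have e2 : C.comp g₀ (g * g₀)⁻¹ = g⁻¹ := by
      show g₀ * (g * g₀)⁻¹ = g⁻¹
      rw [mul_inv_rev, ← mul_assoc, mul_inv_cancel, one_mul]
    rw [e1, e2]
  have hS : ∀ s, s ∈ B → pb s = 0 → s = 0 := by
    intro s hsB hs0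
    by_contra hs
    obtain ⟨δ, hδ⟩ : ∃ δ, s δ ≠ 0 := by
      by_contra hc
      push_neg at hc
      exact hs (Finsupp.ext hc)
    obtain ⟨e, he⟩ := exists_factor hA hT α hij δ
    set s' := LM k C e⁻¹ s with hs'
    have hs'B : s' ∈ B := hBst _ _ hsB
    have hs'0 : pb s' = 0 := by rw [hs', pb_comm, hs0, map_zero]
    have hs'α : s' (C.alph α i hij) = s δ := by
      rw [hs', LM_unit_apply', inv_inv, he]
    set w := TS k C (Hst C α hij) s' with hw
    have hwA : w ∈ A := by
      have hmem : w ∈ Submodule.map (TS k C (Hst C α hij)) B := ⟨s', hs'B, rfl⟩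
      obtain ⟨a, haA, hwa⟩ := hmap hmem
      rw [← hwa]
      exact TS_mem _ hAst haA
    have hw0 : pb w = 0 := by
      rw [hw, TS_apply, map_sum]
      refine Finset.sum_eq_zero fun h hh => ?_
      rw [pb_comm, hs'0, map_zero]
    have hwz : w = 0 := by
      have h5 : (cG : k) • w = 0 := by
        rw [Nat.cast_smul_eq_nsmul, ← pb_A w hwA, hw0]
      exact (smul_eq_zero.1 h5).resolve_left hcGk
    have hwα : w (C.alph α i hij) = (Hst C α hij).card • s δ := by
      rw [hw, TS_coeff]
      have h6 : ∀ h ∈ Hst C α hij, s' (C.comp h⁻¹ (C.alph α i hij)) = s δ := by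
        intro h hh
        rw [mem_Hst.1 (inv_mem_Hst hh), hs'α]
      rw [Finset.sum_congr rfl h6, Finset.sum_const]
    rw [hwz] at hwα
    have hcard : (Hst C α hij).card ≠ 0 := Finset.card_ne_zero_of_mem (one_mem_Hst hij)
    rw [nsmul_eq_mul] at hwα
    exact (mul_ne_zero (Nat.cast_ne_zero.2 hcard) hδ) hwα.symm
  intro b hb
  have h1 : pb b ∈ A := pb_memA b
  set s := (cG : k) • b - pb b with hsdef
  have hsB : s ∈ B := Submodule.sub_mem _ (Submodule.smul_mem _ _ hb) (hAB h1)
  have hs0 : pb s = 0 := by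
    rw [hsdef, map_sub, map_smul, pb_A _ h1, Nat.cast_smul_eq_nsmul, sub_self]
  have hsz := hS s hsB hs0
  have hb' : (cG : k) • b = pb b := by rwa [hsdef, sub_eq_zero] at hsz
  have hbeq : b = (cG : k)⁻¹ • ((cG : k) • b) := by
    rw [smul_smul, inv_mul_cancel₀ hcGk, one_smul]
  rw [hbeq, hb']
  exact Submodule.smul_mem _ _ h1

/-- A `kC`-submodule of the free module `kC(i,-)`. -/
def FreeClosed {k : Type} [Field k] {C : EICat} (i : ℕ)
    (U : ∀ j, Submodule k (C.Hom i j →₀ k)) : Prop :=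
  ∀ (j l : ℕ) (f : C.Hom j l) (u : C.Hom i j →₀ k), u ∈ U j → LM k C f u ∈ U l

/-- Generators of degree `j+1` coming from degree `j`. -/
def genSet (k : Type) [Field k] (C : EICat) (i j : ℕ) (Uj : Submodule k (C.Hom i j →₀ k)) :
    Set (C.Hom i (j+1) →₀ k) :=
  {y | ∃ (f : C.Hom j (j+1)) (u : C.Hom i j →₀ k), u ∈ Uj ∧ y = LM k C f u}

lemma genSpan_stable {i j : ℕ} (Uj : Submodule k (C.Hom i j →₀ k))
    (g : C.Hom (j+1) (j+1)) :
    ∀ a ∈ Submodule.span k (genSet k C i j Uj),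
      LM k C g a ∈ Submodule.span k (genSet k C i j Uj) := by
  intro a ha
  have h1 : LM k C g a ∈ Submodule.map (LM k C g) (Submodule.span k (genSet k C i j Uj)) :=
    Submodule.mem_map_of_mem ha
  rw [Submodule.map_span] at h1
  refine Submodule.span_le.2 ?_ h1
  rintro y ⟨x, ⟨f, u, hu, rfl⟩, rfl⟩
  exact Submodule.subset_span ⟨C.comp g f, u, hu, LM_LM g f u⟩

/-- The two step estimates and the equality criterion at level `j`. -/
lemma crux_step_mono (hA : C.TypeAInf) (hT : C.TransCond) {i j : ℕ} (hij : i ≤ j)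
    (hinj : ∀ γ γ' : C.Hom i j,
      C.orbRelS α hij (C.comp (α j) γ) (C.comp (α j) γ') → C.orbRel α hij γ γ')
    (U : ∀ l, Submodule k (C.Hom i l →₀ k)) (hU : FreeClosed i U) :
    finrank k (Submodule.map (TS k C (Hst C α hij)) (U j)) ≤
      finrank k (Submodule.map (TS k C (Hst C α (hij.trans (Nat.le_succ j))))
        (Submodule.span k (genSet k C i j (U j)))) := by
  classical
  set T := TS k C (i := i) (Hst C α hij)
  set T' := TS k C (i := i) (Hst C α (hij.trans (Nat.le_succ j)))
  set p := Submodule.map T (U j) with hp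
  set Θ : (C.Hom i j →₀ k) →ₗ[k] (C.Hom i (j+1) →₀ k) := T' ∘ₗ LM k C (α j) with hΘ
  set f := Θ ∘ₗ p.subtype with hf
  have h2 : ∀ w ∈ p, Θ w = 0 → w = 0 := by
    rintro w ⟨u, hu, rfl⟩ h0
    by_contra hne
    exact theta_ne_zero α hij hinj u hne h0
  have hinjf : Function.Injective f := by
    intro a b hab
    have hab' : Θ a.1 = Θ b.1 := hab
    have hsub : Θ (a.1 - b.1) = 0 := by rw [map_sub, hab', sub_self]
    have hmem : a.1 - b.1 ∈ p := p.sub_mem a.2 b.2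
    exact Subtype.ext (sub_eq_zero.1 (h2 _ hmem hsub))
  calc finrank k p = finrank k (LinearMap.range f) := (LinearMap.finrank_range_of_inj hinjf).symm
    _ ≤ _ := by
        apply Submodule.finrank_mono
        rintro y ⟨⟨w, hw⟩, rfl⟩
        obtain ⟨u, hu, rfl⟩ := hw
        have hTu : T u ∈ U j := TS_mem _ (fun h v hv => hU j j h v hv) hu
        have hgen : LM k C (α j) (T u) ∈ Submodule.span k (genSet k C i j (U j)) :=
          Submodule.subset_span ⟨α j, T u, hTu, rfl⟩
        exact ⟨LM k C (α j) (T u), hgen, rfl⟩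

lemma crux_step_eq (hA : C.TypeAInf) (hT : C.TransCond) {i j : ℕ} (hij : i ≤ j)
    (hinj : ∀ γ γ' : C.Hom i j,
      C.orbRelS α hij (C.comp (α j) γ) (C.comp (α j) γ') → C.orbRel α hij γ γ')
    (U : ∀ l, Submodule k (C.Hom i l →₀ k)) (hU : FreeClosed i U)
    (hrank : finrank k (Submodule.map (TS k C (Hst C α (hij.trans (Nat.le_succ j)))) (U (j+1))) ≤
      finrank k (Submodule.map (TS k C (Hst C α hij)) (U j))) :
    U (j+1) ≤ Submodule.span k (genSet k C i j (U j)) := by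
  classical
  set T' := TS k C (i := i) (Hst C α (hij.trans (Nat.le_succ j)))
  set Aj := Submodule.span k (genSet k C i j (U j)) with hAj
  have hAle : Aj ≤ U (j+1) := by
    rw [hAj, Submodule.span_le]
    rintro y ⟨f, u, hu, rfl⟩
    exact hU j (j+1) f u hu
  have e1 : Submodule.map T' Aj ≤ Submodule.map T' (U (j+1)) := Submodule.map_mono hAle
  have e2 : finrank k (Submodule.map T' (U (j+1))) ≤ finrank k (Submodule.map T' Aj) :=
    le_trans hrank (crux_step_mono α hA hT hij hinj U hU)
  have e3 : Submodule.map T' Aj = Submodule.map T' (U (j+1)) :=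
    Submodule.eq_of_le_of_finrank_le e1 e2
  refine maschke_le α hA hT (hij.trans (Nat.le_succ j)) hAle ?_ ?_ (le_of_eq e3.symm)
  · exact fun g a ha => genSpan_stable (U j) g a ha
  · exact fun g b hb => hU (j+1) (j+1) g b hb

lemma nat_stab (f : ℕ → ℕ) (B : ℕ) (hmono : ∀ t, f t ≤ f (t + 1)) (hbd : ∀ t, f t ≤ B) :
    ∃ T₀, ∀ t, T₀ ≤ t → f t = f T₀ := by
  have hf : Monotone f := monotone_nat_of_le_succ hmono
  set g := fun t => B - f t with hg
  obtain ⟨T₀, hT₀⟩ : ∃ T₀, g T₀ = sInf (Set.range g) := Nat.sInf_mem (Set.range_nonempty g)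
  refine ⟨T₀, fun t ht => ?_⟩
  have h1 : g t ≤ g T₀ := Nat.sub_le_sub_left (hf ht) B
  have h2 : g T₀ ≤ g t := hT₀ ▸ Nat.sInf_le ⟨t, rfl⟩
  have h3 : g t = g T₀ := le_antisymm h1 h2
  have h4 := hbd t
  have h5 := hbd T₀
  simp only [hg] at h3
  omega

/-- Main lemma for a single free module: submodules are eventually generated
in one lower degree. -/
lemma crux_single (hA : C.TypeAInf) (hT : C.TransCond) (hB : C.BijCond α) (i : ℕ)
    (U : ∀ j, Submodule k (C.Hom i j →₀ k)) (hU : FreeClosed i U) :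
    ∃ N, ∀ j, N ≤ j → U (j+1) ≤ Submodule.span k (genSet k C i j (U j)) := by
  classical
  obtain ⟨N₀, hN₀⟩ := hB i
  set N₁ := max i N₀ with hN₁
  have hle : ∀ t, i ≤ N₁ + t := fun t => le_trans (le_max_left i N₀) (Nat.le_add_right N₁ t)
  have hN₀le : ∀ t, N₀ ≤ N₁ + t := fun t => le_trans (le_max_right i N₀) (Nat.le_add_right N₁ t)
  set cs : ℕ → ℕ := fun t => finrank k (Submodule.map (TS k C (Hst C α (hle t))) (U (N₁ + t)))
    with hcs
  set Ks : ℕ → ℕ := fun t => finrank k (LinearMap.range (TS k C (i := i) (Hst C α (hle t))))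
    with hKs
  have hcK : ∀ t, cs t ≤ Ks t := by
    intro t
    apply Submodule.finrank_mono
    rintro y ⟨u, hu, rfl⟩
    exact ⟨u, rfl⟩
  have hKmono : ∀ t, Ks (t + 1) ≤ Ks t := by
    intro t
    exact rank_range_TS_succ_le α hT (hle t) ((hN₀ (N₁ + t) (hle t) (hN₀le t)).2)
  have hKbd : ∀ t, Ks t ≤ Ks 0 := by
    intro t
    induction t with
    | zero => exact le_refl _
    | succ n ih => exact le_trans (hKmono n) ih
  have hcmono : ∀ t, cs t ≤ cs (t + 1) := by
    intro t
    calc cs t ≤ finrank k (Submodule.map (TS k C (Hst C α ((hle t).trans (Nat.le_succ _))))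
          (Submodule.span k (genSet k C i (N₁ + t) (U (N₁ + t))))) :=
          crux_step_mono α hA hT (hle t) ((hN₀ (N₁ + t) (hle t) (hN₀le t)).1) U hU
      _ ≤ cs (t + 1) := by
          apply Submodule.finrank_mono
          apply Submodule.map_mono
          rw [Submodule.span_le]
          rintro y ⟨f, u, hu, rfl⟩
          exact hU (N₁ + t) (N₁ + t + 1) f u hu
  have hcbd : ∀ t, cs t ≤ Ks 0 := fun t => le_trans (hcK t) (hKbd t)
  obtain ⟨T₀, hT₀⟩ := nat_stab cs (Ks 0) hcmono hcbd
  refine ⟨N₁ + T₀, fun j hj => ?_⟩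
  obtain ⟨t, rfl⟩ : ∃ t, j = N₁ + t := ⟨j - N₁, by omega⟩
  have htT₀ : T₀ ≤ t := by omega
  have hceq : cs (t + 1) = cs t := by rw [hT₀ (t + 1) (by omega), hT₀ t htT₀]
  exact crux_step_eq α hA hT (hle t) ((hN₀ (N₁ + t) (hle t) (hN₀le t)).1) U hU (le_of_eq hceq)

end Crux

end EICat

namespace EICat

open Finset Module
open scoped Classical

section Pi

variable {k : Type} [Field k] [CharZero k] {C : EICat}

/-- Finite direct sums of the free modules `kC(d m, -)`. -/
abbrev PiF (k : Type) [Field k] (C : EICat) (n : ℕ) (d : Fin n → ℕ) (j : ℕ) : Type :=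
  ∀ m : Fin n, (C.Hom (d m) j →₀ k)

/-- The action on the direct sum. -/
noncomputable def LMn (k : Type) [Field k] (C : EICat) {n : ℕ} {d : Fin n → ℕ} {j l : ℕ}
    (f : C.Hom j l) : (PiF k C n d j) →ₗ[k] (PiF k C n d l) :=
  LinearMap.pi (fun m => (LM k C f) ∘ₗ LinearMap.proj m)

lemma LMn_apply {n : ℕ} {d : Fin n → ℕ} {j l : ℕ} (f : C.Hom j l) (u : PiF k C n d j)
    (m : Fin n) : (LMn k C f u) m = LM k C f (u m) := rfl

def PiClosed (k : Type) [Field k] (C : EICat) (n : ℕ) (d : Fin n → ℕ)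
    (U : ∀ j, Submodule k (PiF k C n d j)) : Prop :=
  ∀ (j l : ℕ) (f : C.Hom j l) (u : PiF k C n d j), u ∈ U j → LMn k C f u ∈ U l

def genSetPi (k : Type) [Field k] (C : EICat) (n : ℕ) (d : Fin n → ℕ) (j : ℕ)
    (Uj : Submodule k (PiF k C n d j)) : Set (PiF k C n d (j+1)) :=
  {y | ∃ (f : C.Hom j (j+1)) (u : PiF k C n d j), u ∈ Uj ∧ y = LMn k C f u}

/-- Inclusion of the first summand. -/
noncomputable def incl (k : Type) [Field k] (C : EICat) {n : ℕ} (d : Fin (n+1) → ℕ) (j : ℕ) :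
    (C.Hom (d 0) j →₀ k) →ₗ[k] PiF k C (n+1) d j where
  toFun a := Fin.cons a (fun _ => 0)
  map_add' a b := by
    funext m
    induction m using Fin.cases with
    | zero => simp
    | succ m => simp
  map_smul' c a := by
    funext m
    induction m using Fin.cases with
    | zero => simp
    | succ m => simp

/-- Projection away from the first summand. -/
noncomputable def prj (k : Type) [Field k] (C : EICat) {n : ℕ} (d : Fin (n+1) → ℕ) (j : ℕ) :
    PiF k C (n+1) d j →ₗ[k] PiF k C n (d ∘ Fin.succ) j :=
  LinearMap.pi (fun m => LinearMap.proj m.succ)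

lemma LMn_incl {n : ℕ} (d : Fin (n+1) → ℕ) {j l : ℕ} (f : C.Hom j l)
    (a : C.Hom (d 0) j →₀ k) :
    LMn k C f (incl k C d j a) = incl k C d l (LM k C f a) := by
  funext m
  induction m using Fin.cases with
  | zero => rfl
  | succ m =>
    show LM k C f ((Fin.cons a (fun _ => 0) : PiF k C (n+1) d j) m.succ) = _
    simp [incl, Fin.cons_succ]

lemma LMn_prj {n : ℕ} (d : Fin (n+1) → ℕ) {j l : ℕ} (f : C.Hom j l) (u : PiF k C (n+1) d j) :
    LMn k C f (prj k C d j u) = prj k C d l (LMn k C f u) := rfl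

lemma crux_pi (hA : C.TypeAInf) (hT : C.TransCond) (α : ∀ j, C.Hom j (j + 1))
    (hB : C.BijCond α) :
    ∀ (n : ℕ) (d : Fin n → ℕ) (U : ∀ j, Submodule k (PiF k C n d j)),
      PiClosed k C n d U →
      ∃ N, ∀ j, N ≤ j → U (j+1) ≤ Submodule.span k (genSetPi k C n d j (U j)) := by
  intro n
  induction n with
  | zero =>
    intro d U hU
    refine ⟨0, fun j _ => ?_⟩
    intro u _
    have : u = 0 := funext fun m => m.elim0
    rw [this]
    exact Submodule.zero_mem _
  | succ n IH =>
    intro d U hU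
    -- the first-summand piece
    set UA := fun j => Submodule.comap (incl k C d j) (U j) with hUA
    have hUAcl : FreeClosed (d 0) UA := by
      intro j l f u hu
      show incl k C d l (LM k C f u) ∈ U l
      rw [← LMn_incl]
      exact hU j l f _ hu
    obtain ⟨NA, hNA⟩ := crux_single α hA hT hB (d 0) UA hUAcl
    -- the quotient piece
    set Uπ := fun j => Submodule.map (prj k C d j) (U j) with hUπ
    have hUπcl : PiClosed k C n (d ∘ Fin.succ) Uπ := by
      rintro j l f u ⟨w, hw, rfl⟩
      exact ⟨LMn k C f w, hU j l f w hw, (LMn_prj d f w).symm⟩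
    obtain ⟨Nπ, hNπ⟩ := IH (d ∘ Fin.succ) Uπ hUπcl
    refine ⟨max NA Nπ, fun j hj => ?_⟩
    intro u hu
    set V := Submodule.span k (genSetPi k C (n+1) d j (U j)) with hV
    have hVle : V ≤ U (j+1) := by
      rw [hV, Submodule.span_le]
      rintro y ⟨f, w, hw, rfl⟩
      exact hU j (j+1) f w hw
    -- image of the span downstairs is contained in π(V)
    have hπspan : Submodule.span k (genSetPi k C n (d ∘ Fin.succ) j (Uπ j)) ≤
        Submodule.map (prj k C d (j+1)) V := by
      rw [Submodule.span_le]
      rintro y ⟨f, w, ⟨w', hw', rfl⟩, rfl⟩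
      refine ⟨LMn k C f w', ?_, (LMn_prj d f w').symm⟩
      exact Submodule.subset_span ⟨f, w', hw', rfl⟩
    have hπu : prj k C d (j+1) u ∈ Submodule.map (prj k C d (j+1)) V := by
      apply hπspan
      apply hNπ j (le_trans (le_max_right NA Nπ) hj)
      exact ⟨u, hu, rfl⟩
    obtain ⟨v, hvV, hπv⟩ := hπu
    -- the difference is in the first summand
    set w := u - v with hw
    have hwU : w ∈ U (j+1) := Submodule.sub_mem _ hu (hVle hvV)
    have hπw : ∀ m : Fin n, w m.succ = 0 := by
      intro m
      have : prj k C d (j+1) w = 0 := by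
        rw [hw, map_sub, hπv, sub_self]
      exact congrFun this m
    have hιw : incl k C d (j+1) (w 0) = w := by
      funext m
      induction m using Fin.cases with
      | zero => rfl
      | succ m =>
        show (0 : C.Hom (d m.succ) (j+1) →₀ k) = w m.succ
        rw [hπw m]
    have hwA : w 0 ∈ UA (j+1) := by
      show incl k C d (j+1) (w 0) ∈ U (j+1)
      rw [hιw]
      exact hwU
    have hwspan : w 0 ∈ Submodule.span k (genSet k C (d 0) j (UA j)) :=
      hNA j (le_trans (le_max_left NA Nπ) hj) hwA
    have hιspan : Submodule.map (incl k C d (j+1))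
        (Submodule.span k (genSet k C (d 0) j (UA j))) ≤ V := by
      rw [Submodule.map_span, Submodule.span_le]
      rintro y ⟨x, ⟨f, b, hb, rfl⟩, rfl⟩
      refine Submodule.subset_span ⟨f, incl k C d j b, hb, ?_⟩
      rw [LMn_incl]
    have hwV : w ∈ V := by
      rw [← hιw]
      exact hιspan ⟨w 0, hwspan, rfl⟩
    have : u = w + v := by rw [hw, sub_add_cancel]
    rw [this]
    exact Submodule.add_mem _ hwV hvV

end Pi

end EICat

namespace EICat

open Finset Module
open scoped Classical

section Main

variable {k : Type} [Field k] [CharZero k] {C : EICat}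

/-- Evaluation of the free cover on a finitely generated module. -/
noncomputable def Phi (M : CMod k C) {n : ℕ} {d : Fin n → ℕ} (v : ∀ m, M.V (d m)) (j : ℕ) :
    PiF k C n d j →ₗ[k] M.V j :=
  ∑ m : Fin n,
    (Finsupp.linearCombination k (fun f : C.Hom (d m) j => M.act f (v m))) ∘ₗ LinearMap.proj m

lemma Phi_apply (M : CMod k C) {n : ℕ} {d : Fin n → ℕ} (v : ∀ m, M.V (d m)) (j : ℕ)
    (u : PiF k C n d j) :
    Phi M v j u = ∑ m : Fin n,
      Finsupp.linearCombination k (fun f : C.Hom (d m) j => M.act f (v m)) (u m) := by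
  rw [Phi, LinearMap.sum_apply]
  rfl

lemma Phi_equivariant (M : CMod k C) {n : ℕ} {d : Fin n → ℕ} (v : ∀ m, M.V (d m))
    {j l : ℕ} (g : C.Hom j l) (u : PiF k C n d j) :
    Phi M v l (LMn k C g u) = M.act g (Phi M v j u) := by
  rw [Phi_apply, Phi_apply, map_sum]
  refine Finset.sum_congr rfl fun m _ => ?_
  show Finsupp.linearCombination k (fun f : C.Hom (d m) l => M.act f (v m))
      (Finsupp.mapDomain (C.comp g) (u m)) = _
  rw [Finsupp.linearCombination_mapDomain, Finsupp.apply_linearCombination]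
  have hFG : ((fun f : C.Hom (d m) l => M.act f (v m)) ∘ C.comp g)
      = (⇑(M.act g) ∘ fun f : C.Hom (d m) j => M.act f (v m)) := by
    funext f
    show M.act (C.comp g f) (v m) = M.act g (M.act f (v m))
    rw [M.act_comp]
    rfl
  rw [hFG]

lemma Phi_single (M : CMod k C) {n : ℕ} {d : Fin n → ℕ} (v : ∀ m, M.V (d m)) (j : ℕ)
    (m : Fin n) (f : C.Hom (d m) j) :
    Phi M v j (Pi.single m (Finsupp.single f (1 : k))) = M.act f (v m) := by
  rw [Phi_apply, Finset.sum_eq_single m]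
  · rw [Pi.single_eq_same, Finsupp.linearCombination_single, one_smul]
  · intro b _ hb
    rw [Pi.single_eq_of_ne hb, map_zero]
  · intro h
    exact absurd (Finset.mem_univ m) h

end Main

end EICat
/-- Main theorem: let `C` be a locally finite EI category of
type `A∞` satisfying the transitivity and bijectivity conditions, and `k` a
field of characteristic 0. Then every finitely generated `kC`-module is
Noetherian. -/
theorem stmt_11 (k : Type) [Field k] [CharZero k]
    (C : EICat) (hA : C.TypeAInf) (hT : C.TransCond)
    (α : ∀ j, C.Hom j (j + 1)) (hB : C.BijCond α)
    (M : CMod k C) (hM : M.FG) : M.Noetherian := by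
  classical
  obtain ⟨n, d, v, hgen⟩ := hM
  intro W hW
  -- every degree is spanned by the images of the generators
  have hspan : ∀ j, (⊤ : Submodule k (M.V j)) = Submodule.span k
      {x : M.V j | ∃ (m : Fin n) (f : C.Hom (d m) j), x = M.act f (v m)} := by
    intro j
    set Wsp := fun l => Submodule.span k
      {x : M.V l | ∃ (m : Fin n) (f : C.Hom (d m) l), x = M.act f (v m)} with hWsp
    have hcl : M.Closed Wsp := by
      intro i' j' f x hx
      have h1 : M.act f x ∈ Submodule.map (M.act f) (Wsp i') := Submodule.mem_map_of_mem hx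
      rw [hWsp, Submodule.map_span] at h1
      refine Submodule.span_le.2 ?_ h1
      rintro y ⟨x', ⟨m, g, rfl⟩, rfl⟩
      refine Submodule.subset_span ⟨m, C.comp f g, ?_⟩
      rw [M.act_comp]
      rfl
    have hv : ∀ m, v m ∈ Wsp (d m) := fun m =>
      Submodule.subset_span ⟨m, C.idm (d m), by rw [M.act_id]; rfl⟩
    exact (hgen Wsp hcl hv j).symm
  have hsurj : ∀ j, LinearMap.range (EICat.Phi M v j) = ⊤ := by
    intro j
    rw [eq_top_iff, hspan j, Submodule.span_le]
    rintro x ⟨m, f, rfl⟩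
    exact ⟨Pi.single m (Finsupp.single f 1), EICat.Phi_single M v j m f⟩
  have hfin : ∀ j, Module.Finite k (M.V j) := fun j =>
    Module.Finite.of_surjective (EICat.Phi M v j)
      (by rw [← LinearMap.range_eq_top]; exact hsurj j)
  -- pull the submodule back to the free cover
  set U := fun j => Submodule.comap (EICat.Phi M v j) (W j) with hU
  have hUcl : EICat.PiClosed k C n d U := by
    intro j l f u hu
    show EICat.Phi M v l (EICat.LMn k C f u) ∈ W l
    rw [EICat.Phi_equivariant]
    exact hW j l f _ hu
  obtain ⟨N, hN⟩ := EICat.crux_pi hA hT α hB n d U hUcl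
  have hWmap : ∀ j, Submodule.map (EICat.Phi M v j) (U j) = W j := by
    intro j
    rw [hU, Submodule.map_comap_eq, hsurj j, top_inf_eq]
  have hcrux : ∀ j, N ≤ j → W (j+1) ≤ Submodule.span k
      {y : M.V (j+1) | ∃ (f : C.Hom j (j+1)) (x : M.V j), x ∈ W j ∧ y = M.act f x} := by
    intro j hj
    rw [← hWmap (j+1)]
    calc Submodule.map (EICat.Phi M v (j+1)) (U (j+1))
        ≤ Submodule.map (EICat.Phi M v (j+1))
            (Submodule.span k (EICat.genSetPi k C n d j (U j))) :=
          Submodule.map_mono (hN j hj)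
      _ ≤ _ := by
          rw [Submodule.map_span, Submodule.span_le]
          rintro y ⟨x, ⟨f, u, hu, rfl⟩, rfl⟩
          refine Submodule.subset_span ⟨f, EICat.Phi M v j u, ?_, ?_⟩
          · rw [← hWmap j]; exact Submodule.mem_map_of_mem hu
          · rw [EICat.Phi_equivariant]
  -- choose finite spanning sets in each degree
  have hfg : ∀ j, ∃ S : Finset (M.V j), (↑S : Set (M.V j)) ⊆ (W j : Set (M.V j)) ∧
      Submodule.span k (↑S : Set (M.V j)) = W j := by
    intro j
    haveI := hfin j
    obtain ⟨S, hS⟩ := IsNoetherian.noetherian (W j)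
    refine ⟨S, ?_, hS⟩
    intro x hx
    rw [← hS]
    exact Submodule.subset_span hx
  choose S hSsub hSspan using hfg
  let I := (j : Fin (N+1)) × {x : M.V (j : ℕ) // x ∈ S (j : ℕ)}
  let e : Fin (Fintype.card I) ≃ I := (Fintype.equivFin I).symm
  refine ⟨Fintype.card I, fun m => ((e m).1 : ℕ), fun m => ((e m).2 : M.V _), ?_, ?_⟩
  · intro m
    exact hSsub _ (e m).2.2
  · intro W' hW' hvW'
    have hgen' : ∀ j : Fin (N+1), ∀ x : M.V (j : ℕ), x ∈ S (j : ℕ) → x ∈ W' (j : ℕ) := by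
      have hall : ∀ q : I, ((q.snd : M.V (q.fst : ℕ)) ∈ W' (q.fst : ℕ)) := by
        intro q
        have h1 := hvW' (e.symm q)
        have key : e (e.symm q) = q := e.apply_symm_apply q
        exact key ▸ h1
      intro j x hx
      exact hall ⟨j, ⟨x, hx⟩⟩
    intro j
    induction j using Nat.strong_induction_on with
    | _ j IHj =>
      by_cases hj : j ≤ N
      · rw [← hSspan j, Submodule.span_le]
        intro x hx
        exact hgen' ⟨j, by omega⟩ x hx
      · obtain ⟨l, rfl⟩ : ∃ l, j = l + 1 := ⟨j - 1, by omega⟩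
        refine le_trans (hcrux l (by omega)) ?_
        rw [Submodule.span_le]
        rintro y ⟨f, x, hx, rfl⟩
        exact hW' l (l+1) f x (IHj l (by omega) hx)
end

section
/- Let C be a locally finite EI category of type A∞ satisfying the transitivity condition, and k any commutative ring. If V is a Noetherian kC-module, then for all sufficiently large j, the map V_j → V_{j+1} given by the action of α_j ∈ C(j,j+1) is injective. -/
variable {k : Type} [CommRing k] {C : EICat}

/-- if `V` is a Noetherian `kC`-module over a locally finite EI
category of type `A∞` satisfying the transitivity condition, then for all
sufficiently large `j` the map `α_j : V_j → V_{j+1}` is injective. -/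
theorem stmt_14 {k : Type} [CommRing k] (C : EICat) (hA : C.TypeAInf)
    (hT : C.TransCond) (α : ∀ j, C.Hom j (j + 1))
    (M : CMod k C) (hM : M.Noetherian) :
    ∃ N : ℕ, ∀ j : ℕ, N ≤ j → Function.Injective (M.act (α j)) := by
  classical
  -- Every morphism `i → j` with `i < j` factors through `α i`.
  have factor : ∀ j i (f : C.Hom i j), i < j →
      ∃ h : C.Hom (i+1) j, f = C.comp h (α i) := by
    intro j
    induction j using Nat.strong_induction_on with
    | _ j ih =>
      intro i f hij
      by_cases hu : C.Unfact f
      · have hj : j = i + 1 := (hA i j).mp ⟨f, hu⟩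
        subst hj
        obtain ⟨e, he⟩ := hT i (α i) f
        exact ⟨e, he.symm⟩
      · have hni : ¬ C.IsIso f := by
          rintro ⟨g, -, -⟩
          have : j ≤ i := (C.nonempty_iff j i).mp ⟨g⟩
          omega
        have hu' : ¬ ∀ (l : ℕ) (b₂ : C.Hom i l) (b₁ : C.Hom l j),
            f = C.comp b₁ b₂ → C.IsIso b₁ ∨ C.IsIso b₂ := fun h => hu ⟨hni, h⟩
        push_neg at hu'
        obtain ⟨l, b₂, b₁, hf, hb₁, hb₂⟩ := hu'
        have hil : i ≤ l := (C.nonempty_iff i l).mp ⟨b₂⟩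
        have hlj : l ≤ j := (C.nonempty_iff l j).mp ⟨b₁⟩
        have hil' : i < l := by
          rcases lt_or_eq_of_le hil with h | h
          · exact h
          · subst h; exact absurd (C.ei i b₂) hb₂
        have hlj' : l < j := by
          rcases lt_or_eq_of_le hlj with h | h
          · exact h
          · subst h; exact absurd (C.ei l b₁) hb₁
        obtain ⟨h₂, hh₂⟩ := ih l hlj' i b₂ hil'
        exact ⟨C.comp b₁ h₂, by rw [hf, hh₂, C.assoc]⟩
  -- Any two parallel morphisms differ by an endomorphism of the target.
  have parallel : ∀ d i j, j = i + d → ∀ f g : C.Hom i j,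
      ∃ u : C.Hom j j, f = C.comp u g := by
    intro d
    induction d with
    | zero =>
      intro i j hj f g
      subst hj
      obtain ⟨g', hg1, hg2⟩ := C.ei _ g
      exact ⟨C.comp f g', by rw [C.assoc, hg2, C.comp_id]⟩
    | succ d ihd =>
      intro i j hj f g
      subst hj
      have hij : i < i + (d+1) := by omega
      obtain ⟨hf, hhf⟩ := factor _ i f hij
      obtain ⟨hg, hhg⟩ := factor _ i g hij
      obtain ⟨u, hu⟩ := ihd (i+1) (i+(d+1)) (by omega) hf hg
      exact ⟨u, by rw [hhf, hhg, hu, C.assoc]⟩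
  -- pick a morphism between comparable objects
  have κ : ∀ {i j : ℕ}, i ≤ j → C.Hom i j :=
    fun h => Classical.choice ((C.nonempty_iff _ _).mpr h)
  -- killing propagates upwards
  have killAll : ∀ i (x : M.V i) (j : ℕ) (g : C.Hom i j), M.act g x = 0 →
      ∀ l, j ≤ l → ∀ f : C.Hom i l, M.act f x = 0 := by
    intro i x j g hg l hjl f
    have hij : i ≤ j := (C.nonempty_iff i j).mp ⟨g⟩
    obtain ⟨u, hu⟩ := parallel (l - i) i l (by omega) f (C.comp (κ hjl) g)
    rw [hu]; simp [M.act_comp, hg]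
  -- the torsion submodule
  have Wadd : ∀ i (a b : M.V i),
      (∃ j, ∃ f : C.Hom i j, i < j ∧ M.act f a = 0) →
      (∃ j, ∃ f : C.Hom i j, i < j ∧ M.act f b = 0) →
      (∃ j, ∃ f : C.Hom i j, i < j ∧ M.act f (a + b) = 0) := by
    rintro i a b ⟨j, f, hij, hf⟩ ⟨j', f', hij', hf'⟩
    have him : i ≤ max j j' := by omega
    refine ⟨max j j', κ him, by omega, ?_⟩
    rw [map_add]
    have h1 : M.act (κ him) a = 0 :=
      killAll i a j f hf _ (le_max_left j j') _
    have h2 : M.act (κ him) b = 0 :=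
      killAll i b j' f' hf' _ (le_max_right j j') _
    rw [h1, h2, add_zero]
  let W : ∀ i, Submodule k (M.V i) := fun i =>
    { carrier := {x | ∃ j, ∃ f : C.Hom i j, i < j ∧ M.act f x = 0}
      add_mem' := fun ha hb => Wadd i _ _ ha hb
      zero_mem' := ⟨i+1, α i, Nat.lt_succ_self i, map_zero _⟩
      smul_mem' := by
        rintro c x ⟨j, f, hij, hf⟩
        exact ⟨j, f, hij, by rw [map_smul, hf, smul_zero]⟩ }
  have Wmem : ∀ i (x : M.V i), x ∈ W i ↔ ∃ j, ∃ f : C.Hom i j, i < j ∧ M.act f x = 0 :=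
    fun i x => Iff.rfl
  have Wclosed : M.Closed W := by
    rintro i j f x hx
    obtain ⟨m, g, him, hg⟩ := (Wmem i x).mp hx
    have hjm : j ≤ max (j+1) m := by omega
    refine (Wmem j _).mpr ⟨max (j+1) m, κ hjm, by omega, ?_⟩
    have h0 : M.act (C.comp (κ hjm) f) x = 0 :=
      killAll i x m g hg _ (le_max_right _ _) _
    simpa [M.act_comp] using h0
  obtain ⟨n, d, v, hv, hmin⟩ := hM W Wclosed
  have hv' : ∀ m, ∃ j, ∃ f : C.Hom (d m) j, d m < j ∧ M.act f (v m) = 0 :=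
    fun m => (Wmem _ _).mp (hv m)
  choose e g he hg using hv'
  refine ⟨Finset.univ.sup e, ?_⟩
  set N := Finset.univ.sup e with hN
  let U : ∀ i, Submodule k (M.V i) := fun i =>
    { carrier := {x | ∀ l, N ≤ l → ∀ f : C.Hom i l, M.act f x = 0}
      add_mem' := fun ha hb l hl f => by rw [map_add, ha l hl f, hb l hl f, add_zero]
      zero_mem' := fun l hl f => map_zero _
      smul_mem' := fun c x hx l hl f => by rw [map_smul, hx l hl f, smul_zero] }
  have Umem : ∀ i (x : M.V i), x ∈ U i ↔ ∀ l, N ≤ l → ∀ f : C.Hom i l, M.act f x = 0 :=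
    fun i x => Iff.rfl
  have Uclosed : M.Closed U := by
    intro i j f x hx
    refine (Umem j _).mpr ?_
    intro l hl gg
    have h0 : M.act (C.comp gg f) x = 0 := (Umem i x).mp hx l hl _
    simpa [M.act_comp] using h0
  have hvU : ∀ m, v m ∈ U (d m) := by
    intro m
    refine (Umem _ _).mpr ?_
    intro l hl f
    exact killAll _ _ _ (g m) (hg m) l
      (le_trans (Finset.le_sup (f := e) (Finset.mem_univ m)) hl) f
  have hWU : ∀ i, W i ≤ U i := hmin U Uclosed hvU
  intro j hj a b hab
  have h0 : M.act (α j) (a - b) = 0 := by rw [map_sub, hab, sub_self]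
  have haW : (a - b) ∈ W j := (Wmem _ _).mpr ⟨j+1, α j, Nat.lt_succ_self j, h0⟩
  have haU := (Umem j _).mp (hWU j haW) j hj (C.idm j)
  rw [M.act_id] at haU
  exact sub_eq_zero.mp haU
end

section
/- Let C be a locally finite EI category of type A∞ satisfying the transitivity condition, k a commutative ring, and V a kC-module whose graded piece V_j is a finitely generated k-module for every j. Then V is finitely generated as a kC-module if and only if for all sufficiently large j, V_{j+1} is spanned by the images α·v with α ∈ C(j,j+1) and v ∈ V_j. -/
variable {k : Type} [CommRing k] {C : EICat}

lemma EICat.not_iso_of_lt (C : EICat) {i l : ℕ} (f : C.Hom i l) (h : i < l) :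
    ¬ C.IsIso f := by
  rintro ⟨g, -, -⟩
  have : l ≤ i := (C.nonempty_iff l i).mp ⟨g⟩
  omega

/-- Every morphism `i → l` with `i < l` factors through `i + 1`. -/
lemma EICat.fact1 (C : EICat) (hA : C.TypeAInf) :
    ∀ (l i : ℕ) (f : C.Hom i l), i < l →
      ∃ (b₁ : C.Hom (i + 1) l) (b₂ : C.Hom i (i + 1)), f = C.comp b₁ b₂ := by
  intro l
  induction l using Nat.strong_induction_on with
  | _ l IH =>
    intro i f hil
    by_cases hl : l = i + 1
    · subst hl
      exact ⟨C.idm _, f, (C.id_comp f).symm⟩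
    · have hniso : ¬ C.IsIso f := C.not_iso_of_lt f hil
      have hnunf : ¬ C.Unfact f := fun h => hl ((hA i l).mp ⟨f, h⟩)
      rw [EICat.Unfact, not_and] at hnunf
      have hfac := hnunf hniso
      push_neg at hfac
      obtain ⟨m, b₂, b₁, hfe, hb1, hb2⟩ := hfac
      have him : i ≤ m := (C.nonempty_iff i m).mp ⟨b₂⟩
      have hml : m ≤ l := (C.nonempty_iff m l).mp ⟨b₁⟩
      have him' : i < m := by
        rcases Nat.lt_or_ge i m with h | h
        · exact h
        · exfalso
          have : i = m := le_antisymm him h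
          subst this
          exact hb2 (C.ei i b₂)
      have hml' : m < l := by
        rcases Nat.lt_or_ge m l with h | h
        · exact h
        · exfalso
          have : m = l := le_antisymm hml h
          subst this
          exact hb1 (C.ei m b₁)
      obtain ⟨c₁, c₂, hc⟩ := IH m hml' i b₂ him'
      exact ⟨C.comp b₁ c₁, c₂, by rw [hfe, hc, ← C.assoc]⟩

/-- Every morphism `i → l` factors through any intermediate `j`. -/
lemma EICat.fact2 (C : EICat) (hA : C.TypeAInf) :
    ∀ (e i j l : ℕ), i + e = j → j ≤ l → ∀ f : C.Hom i l,
      ∃ (h : C.Hom j l) (g : C.Hom i j), f = C.comp h g := by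
  intro e
  induction e with
  | zero =>
    intro i j l hij hjl f
    have : i = j := by omega
    subst this
    exact ⟨f, C.idm i, (C.comp_id f).symm⟩
  | succ e IH =>
    intro i j l hij hjl f
    have hil : i < l := by omega
    obtain ⟨b₁, b₂, hb⟩ := C.fact1 hA l i f hil
    obtain ⟨h, g, hg⟩ := IH (i + 1) j l (by omega) hjl b₁
    exact ⟨h, C.comp g b₂, by rw [hb, hg, C.assoc]⟩

/-- a `kC`-module `V` with all `V_j` finitely generated over `k`
is finitely generated as a `kC`-module iff for all sufficiently large `j`,
`V_{j+1}` is spanned by the elements `α · v` with `α ∈ C(j, j+1)`, `v ∈ V_j`. -/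
theorem stmt_15 {k : Type} [CommRing k] (C : EICat) (hA : C.TypeAInf)
    (hT : C.TransCond) (M : CMod k C)
    (hfin : ∀ j : ℕ, Module.Finite k (M.V j)) :
    M.FG ↔ ∃ N : ℕ, ∀ j : ℕ, N ≤ j →
      Submodule.span k {y : M.V (j + 1) |
        ∃ (f : C.Hom j (j + 1)) (v : M.V j), y = M.act f v} = ⊤ := by
  classical
  constructor
  · rintro ⟨n, d, v, hgen⟩
    refine ⟨Finset.univ.sup d, fun j hj => ?_⟩
    set W : ∀ i, Submodule k (M.V i) := fun i =>
      if i ≤ j then ⊤ else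
        Submodule.span k {y : M.V i | ∃ (f : C.Hom j i) (w : M.V j), y = M.act f w}
      with hWdef
    have hWtop : ∀ i, i ≤ j → W i = ⊤ := fun i hi => by simp [hWdef, hi]
    have hWgt : ∀ i, ¬ i ≤ j → W i =
        Submodule.span k {y : M.V i | ∃ (f : C.Hom j i) (w : M.V j), y = M.act f w} :=
      fun i hi => by simp [hWdef, hi]
    have hcl : M.Closed W := by
      intro a b f x hx
      by_cases hb : b ≤ j
      · rw [hWtop b hb]; exact Submodule.mem_top
      · have hab : a ≤ b := (C.nonempty_iff a b).mp ⟨f⟩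
        rw [hWgt b hb]
        by_cases ha : a ≤ j
        · obtain ⟨h, g, hf⟩ := C.fact2 hA (j - a) a j b (by omega) (by omega) f
          have heq : M.act f x = M.act h (M.act g x) := by
            rw [hf, M.act_comp]; rfl
          rw [heq]
          exact Submodule.subset_span ⟨h, M.act g x, rfl⟩
        · rw [hWgt a ha] at hx
          refine Submodule.span_induction ?_ ?_ ?_ ?_ hx
          · rintro y ⟨g, w, rfl⟩
            exact Submodule.subset_span ⟨C.comp f g, w, by rw [M.act_comp]; rfl⟩
          · rw [map_zero]; exact Submodule.zero_mem _
          · intro y z _ _ hy hz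
            rw [map_add]; exact Submodule.add_mem _ hy hz
          · intro c y _ hy
            rw [map_smul]; exact Submodule.smul_mem _ _ hy
    have hmem : ∀ m, v m ∈ W (d m) := by
      intro m
      have : d m ≤ j := le_trans (Finset.le_sup (Finset.mem_univ m)) hj
      rw [hWtop _ this]
      exact Submodule.mem_top
    have hres := hgen W hcl hmem (j + 1)
    rw [hWgt (j + 1) (by omega)] at hres
    exact hres
  · rintro ⟨N, hN⟩
    have hex : ∀ j : ℕ, ∃ (n : ℕ) (s : Fin n → M.V j),
        Submodule.span k (Set.range s) = ⊤ := fun j =>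
      @Module.Finite.exists_fin k (M.V j) _ _ _ (hfin j)
    choose n g hg using hex
    set ι := Σ j : Fin (N + 1), Fin (n j) with hι
    set e : Fin (Fintype.card ι) ≃ ι := (Fintype.equivFin ι).symm with he
    refine ⟨Fintype.card ι, fun m => ((e m).1 : ℕ), fun m => g _ (e m).2, ?_⟩
    intro W hW hmem
    have hWle : ∀ j : ℕ, j ≤ N → W j = ⊤ := by
      intro j hj
      rw [eq_top_iff, ← hg j, Submodule.span_le]
      rintro x ⟨i, rfl⟩
      have hm := hmem (e.symm ⟨⟨j, by omega⟩, i⟩)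
      have h2 : e (e.symm ⟨⟨j, by omega⟩, i⟩) = ⟨⟨j, by omega⟩, i⟩ :=
        Equiv.apply_symm_apply _ _
      simp only at hm
      beta_reduce at hm
      rw [h2] at hm
      exact hm
    intro i
    induction i with
    | zero => exact hWle 0 (by omega)
    | succ i ih =>
      by_cases h : i + 1 ≤ N
      · exact hWle _ h
      · rw [eq_top_iff, ← hN i (by omega), Submodule.span_le]
        rintro y ⟨f, w, rfl⟩
        exact hW i (i + 1) f w (ih ▸ Submodule.mem_top)
end

section
/- Let q be a prime power, i a non-negative integer, and j ≥ 3i. Let H_{i,j} ≤ GL_j(F_q) be the subgroup of block-diagonal matrices diag(I_i, Y) with Y ∈ GL_{j−i}(F_q). Then the natural map from double cosets H_{i,j}\GL_j(F_q)/H_{i,j} to H_{i,j+1}\GL_{j+1}(F_q)/H_{i,j+1}, induced by the standard inclusion GL_j(F_q) ↪ GL_{j+1}(F_q) (extending a matrix by a 1 in position (j+1,j+1)), is surjective. -/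
/-- The standard inclusion of `j × j` matrices into `(j+1) × (j+1)` matrices,
extending by a `1` in position `(j+1, j+1)`. -/
def extMat {F : Type} [Field F] {j : ℕ} (M : Matrix (Fin j) (Fin j) F) :
    Matrix (Fin (j + 1)) (Fin (j + 1)) F :=
  fun r s =>
    if hr : (r : ℕ) < j then
      (if hs : (s : ℕ) < j then M ⟨r, hr⟩ ⟨s, hs⟩ else 0)
    else (if (s : ℕ) < j then 0 else 1)

/-- Membership in `H_{i,n} ≤ GL_n(F)`: block diagonal matrices `diag(I_i, Y)`,
i.e. matrices agreeing with the identity on all entries with row or column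
index `< i`. -/
def inHblock {F : Type} [Field F] {n : ℕ} (i : ℕ) (h : GL (Fin n) F) : Prop :=
  ∀ r s : Fin n, ((r : ℕ) < i ∨ (s : ℕ) < i) →
    (h : Matrix (Fin n) (Fin n) F) r s = if r = s then 1 else 0

open Matrix Module

variable {F : Type} [Field F]

def Esub (F : Type) [Field F] (i n : ℕ) : Submodule F (Fin n → F) where
  carrier := {x | ∀ r : Fin n, (r : ℕ) < i → x r = 0}
  add_mem' := by
    intro a b ha hb r hr
    simp only [Pi.add_apply, ha r hr, hb r hr, add_zero]
  zero_mem' := by intro r hr; rfl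
  smul_mem' := by
    intro c a ha r hr
    simp only [Pi.smul_apply, ha r hr, smul_zero]

lemma mem_Esub {i n : ℕ} {x : Fin n → F} :
    x ∈ Esub F i n ↔ ∀ r : Fin n, (r : ℕ) < i → x r = 0 := Iff.rfl

lemma abstractY (V : Type) [AddCommGroup V] [Module F V] [FiniteDimensional F V]
    (δ ε : V →ₗ[F] F) (w e : V) (hδw : δ w = 1) (hεe : ε e = 1) :
    ∃ Y : V →ₗ[F] V, Function.Bijective Y ∧ Y w = e ∧ ∀ x, ε (Y x) = δ x := by
  classical
  have hδsurj : Function.Surjective δ := by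
    intro a; exact ⟨a • w, by rw [δ.map_smul, hδw, smul_eq_mul, mul_one]⟩
  have hεsurj : Function.Surjective ε := by
    intro a; exact ⟨a • e, by rw [ε.map_smul, hεe, smul_eq_mul, mul_one]⟩
  have hrk : finrank F (LinearMap.ker δ) = finrank F (LinearMap.ker ε) := by
    have h1 := LinearMap.finrank_range_add_finrank_ker δ
    have h2 := LinearMap.finrank_range_add_finrank_ker ε
    rw [LinearMap.range_eq_top.2 hδsurj, finrank_top] at h1
    rw [LinearMap.range_eq_top.2 hεsurj, finrank_top] at h2
    omega
  set ψ : LinearMap.ker δ ≃ₗ[F] LinearMap.ker ε := LinearEquiv.ofFinrankEq _ _ hrk with hψ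
  set ρ0 : V →ₗ[F] V := LinearMap.id - δ.smulRight w with hρ0
  have hρ0mem : ∀ x : V, ρ0 x ∈ LinearMap.ker δ := by
    intro x
    simp [hρ0, LinearMap.mem_ker, map_sub, hδw, smul_eq_mul]
  set ρ : V →ₗ[F] LinearMap.ker δ := LinearMap.codRestrict _ ρ0 hρ0mem with hρ
  set Y : V →ₗ[F] V :=
    (LinearMap.ker ε).subtype ∘ₗ ψ.toLinearMap ∘ₗ ρ + δ.smulRight e with hY
  have hYapp : ∀ x : V, Y x = (ψ (ρ x) : V) + δ x • e := fun x => rfl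
  have hρw : ρ w = 0 := by
    apply Subtype.ext
    show ρ0 w = 0
    rw [hρ0]
    simp [hδw]
  have hYw : Y w = e := by
    rw [hYapp, hρw, map_zero, Submodule.coe_zero, zero_add, hδw, one_smul]
  have hYlast : ∀ x : V, ε (Y x) = δ x := by
    intro x
    rw [hYapp]
    have h0 : ε ((ψ (ρ x) : V)) = 0 := (ψ (ρ x)).2
    rw [map_add, h0, zero_add, ε.map_smul, hεe, smul_eq_mul, mul_one]
  have hYinj : Function.Injective Y := by
    rw [← LinearMap.ker_eq_bot, LinearMap.ker_eq_bot']
    intro x hx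
    have h1 : δ x = 0 := by rw [← hYlast x, hx, map_zero]
    rw [hYapp x, h1, zero_smul, add_zero] at hx
    have h3 : ψ (ρ x) = 0 := by apply Subtype.ext; exact_mod_cast hx
    have h4 : ρ x = 0 := ψ.map_eq_zero_iff.1 h3
    have h5 : ρ0 x = 0 := congrArg Subtype.val h4
    rw [hρ0] at h5
    have h6 : x - δ x • w = 0 := h5
    rw [h1, zero_smul, sub_zero] at h6
    exact h6
  exact ⟨Y, ⟨hYinj, LinearMap.injective_iff_surjective.1 hYinj⟩, hYw, hYlast⟩

lemma lemA (i j : ℕ) (hij : i ≤ j) (w d : Fin (j + 1) → F)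
    (hw : ∀ r : Fin (j + 1), (r : ℕ) < i → w r = 0)
    (hd : ∀ r : Fin (j + 1), (r : ℕ) < i → d r = 0)
    (hdw : d ⬝ᵥ w = 1) :
    ∃ h : GL (Fin (j + 1)) F, inHblock i h ∧
      (h : Matrix (Fin (j+1)) (Fin (j+1)) F) *ᵥ w = Pi.single (Fin.last j) 1 ∧
      ∀ s, (h : Matrix (Fin (j+1)) (Fin (j+1)) F) (Fin.last j) s = d s := by
  classical
  set E : Submodule F (Fin (j + 1) → F) := Esub F i (j + 1) with hEdef
  have hlastE : (Pi.single (Fin.last j) 1 : Fin (j+1) → F) ∈ E := by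
    intro r hr
    apply Pi.single_eq_of_ne
    intro hre
    rw [hre] at hr
    simp only [Fin.val_last] at hr
    omega
  set δ : E →ₗ[F] F :=
    { toFun := fun x => d ⬝ᵥ (x : Fin (j + 1) → F)
      map_add' := by intro x y; simp [dotProduct_add]
      map_smul' := by intro a x; simp [dotProduct_smul] } with hδdef
  set ε : E →ₗ[F] F :=
    { toFun := fun x => (x : Fin (j + 1) → F) (Fin.last j)
      map_add' := by intro x y; simp
      map_smul' := by intro a x; simp } with hεdef
  obtain ⟨Y, hYbij, hYw, hYlast⟩ :=
    abstractY (V := E) δ ε ⟨w, hw⟩ ⟨Pi.single (Fin.last j) 1, hlastE⟩ hdw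
      (Pi.single_eq_same _ _)
  -- the full-space endomorphism
  set lowP : (Fin (j + 1) → F) →ₗ[F] (Fin (j + 1) → F) :=
    { toFun := fun x r => if (r : ℕ) < i then x r else 0
      map_add' := by
        intro x y; funext r; by_cases h : (r : ℕ) < i <;> simp [h]
      map_smul' := by
        intro a x; funext r; by_cases h : (r : ℕ) < i <;> simp [h] } with hlowP
  set highP : (Fin (j + 1) → F) →ₗ[F] E :=
    { toFun := fun x => ⟨fun r => if (r : ℕ) < i then 0 else x r,
        fun r hr => if_pos hr⟩
      map_add' := by
        intro x y; apply Subtype.ext; funext r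
        by_cases h : (r : ℕ) < i <;> simp [h]
      map_smul' := by
        intro a x; apply Subtype.ext; funext r
        by_cases h : (r : ℕ) < i <;> simp [h] } with hhighP
  set T : (Fin (j + 1) → F) →ₗ[F] (Fin (j + 1) → F) :=
    lowP + E.subtype ∘ₗ Y ∘ₗ highP with hT
  have hTapp : ∀ x, T x = lowP x + ((Y (highP x) : E) : Fin (j + 1) → F) := fun x => rfl
  have hhighE : ∀ (x : Fin (j + 1) → F) (hx : x ∈ E), highP x = ⟨x, hx⟩ := by
    intro x hx
    apply Subtype.ext
    funext r
    show (if (r : ℕ) < i then 0 else x r) = x r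
    by_cases h : (r : ℕ) < i
    · rw [if_pos h, hx r h]
    · rw [if_neg h]
  have hlowE : ∀ (x : Fin (j + 1) → F), x ∈ E → lowP x = 0 := by
    intro x hx
    funext r
    show (if (r : ℕ) < i then x r else 0) = 0
    by_cases h : (r : ℕ) < i
    · rw [if_pos h, hx r h]
    · rw [if_neg h]
  have hTE : ∀ (x : Fin (j + 1) → F) (hx : x ∈ E),
      T x = ((Y ⟨x, hx⟩ : E) : Fin (j + 1) → F) := by
    intro x hx
    rw [hTapp, hlowE x hx, hhighE x hx, zero_add]
  have hTinj : Function.Injective T := by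
    rw [← LinearMap.ker_eq_bot, LinearMap.ker_eq_bot']
    intro x hx
    have hxE : x ∈ E := by
      intro r hr
      have h1 : T x r = 0 := by rw [hx]; rfl
      rw [hTapp] at h1
      have h2 : ((Y (highP x) : E) : Fin (j + 1) → F) r = 0 := (Y (highP x)).2 r hr
      have h3 : lowP x r = x r := if_pos hr
      rw [Pi.add_apply, h2, add_zero, h3] at h1
      exact h1
    have h4 : ((Y ⟨x, hxE⟩ : E) : Fin (j + 1) → F) = 0 := by
      rw [← hTE x hxE, hx]
    have h5 : (Y ⟨x, hxE⟩ : E) = 0 := Subtype.ext h4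
    have h6 : (⟨x, hxE⟩ : E) = 0 := by
      apply hYbij.1
      rw [h5, map_zero]
    exact congrArg Subtype.val h6
  have hTsurj : Function.Surjective T := LinearMap.injective_iff_surjective.1 hTinj
  set Teq : (Fin (j + 1) → F) ≃ₗ[F] (Fin (j + 1) → F) :=
    LinearEquiv.ofBijective T ⟨hTinj, hTsurj⟩ with hTeq
  have hTeqcoe : (Teq : (Fin (j + 1) → F) →ₗ[F] (Fin (j + 1) → F)) = T := rfl
  set M : Matrix (Fin (j + 1)) (Fin (j + 1)) F := LinearMap.toMatrix' T with hM
  set Minv : Matrix (Fin (j + 1)) (Fin (j + 1)) F :=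
    LinearMap.toMatrix' (Teq.symm : (Fin (j + 1) → F) →ₗ[F] (Fin (j + 1) → F)) with hMinv
  have hMM : M * Minv = 1 := by
    rw [hM, hMinv, ← LinearMap.toMatrix'_comp]
    have : T ∘ₗ (Teq.symm : (Fin (j + 1) → F) →ₗ[F] (Fin (j + 1) → F)) = LinearMap.id := by
      apply LinearMap.ext
      intro x
      show T (Teq.symm x) = x
      exact Teq.apply_symm_apply x
    rw [this, LinearMap.toMatrix'_id]
  have hMM' : Minv * M = 1 := by
    rw [hM, hMinv, ← LinearMap.toMatrix'_comp]
    have : (Teq.symm : (Fin (j + 1) → F) →ₗ[F] (Fin (j + 1) → F)) ∘ₗ T = LinearMap.id := by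
      apply LinearMap.ext
      intro x
      show Teq.symm (T x) = x
      exact Teq.symm_apply_apply x
    rw [this, LinearMap.toMatrix'_id]
  refine ⟨⟨M, Minv, hMM, hMM'⟩, ?_, ?_, ?_⟩
  · -- inHblock
    intro r s hrs
    have hMrs : M r s = T (fun k => if k = s then 1 else 0) r := by
      rw [hM, LinearMap.toMatrix'_apply]; exact congrArg (fun v => T v r) (by funext k; rw [Pi.single_apply])
    have hsingle : (fun k : Fin (j+1) => if k = s then (1:F) else 0) = Pi.single s 1 := by
      funext k
      rw [Pi.single_apply]
    by_cases hs : (s : ℕ) < i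
    · -- column s of T is e_s
      have h1 : highP (Pi.single s 1) = 0 := by
        apply Subtype.ext
        funext r'
        simp only [hhighP, LinearMap.coe_mk, AddHom.coe_mk, Submodule.coe_zero, Pi.zero_apply]
        by_cases h : (r' : ℕ) < i
        · rw [if_pos h]
        · rw [if_neg h]
          apply Pi.single_eq_of_ne
          intro hre
          rw [hre] at h
          exact h hs
      have h2 : lowP (Pi.single s 1) = Pi.single s 1 := by
        funext r'
        simp only [hlowP, LinearMap.coe_mk, AddHom.coe_mk]
        by_cases h : (r' : ℕ) < i
        · rw [if_pos h]
        · rw [if_neg h]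
          symm
          apply Pi.single_eq_of_ne
          intro hre
          rw [hre] at h
          exact h hs
      show M r s = _
      rw [hMrs, hsingle, hTapp, h1, map_zero, Submodule.coe_zero, h2]
      rw [Pi.add_apply, Pi.zero_apply, add_zero, Pi.single_apply]
    · -- here r < i and s ≥ i: entry is 0
      have hr : (r : ℕ) < i := hrs.resolve_right hs
      have h2 : lowP (Pi.single s 1) = 0 := by
        funext r'
        simp only [hlowP, LinearMap.coe_mk, AddHom.coe_mk, Pi.zero_apply]
        by_cases h : (r' : ℕ) < i
        · rw [if_pos h]
          apply Pi.single_eq_of_ne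
          intro hre
          rw [hre] at h
          exact hs h
        · rw [if_neg h]
      have hne : r ≠ s := by
        intro hre
        rw [hre] at hr
        exact hs hr
      show M r s = _
      rw [hMrs, hsingle, hTapp, h2, if_neg hne]
      rw [Pi.add_apply, Pi.zero_apply, zero_add]
      exact (Y (highP (Pi.single s 1))).2 r hr
  · -- mulVec fact
    show M *ᵥ w = Pi.single (Fin.last j) 1
    have h1 : M *ᵥ w = T w := by
      rw [← Matrix.toLin'_apply, hM, Matrix.toLin'_toMatrix']
    rw [h1, hTE w hw, hYw]
  · -- last row fact
    intro s
    show M (Fin.last j) s = d s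
    have hMrs : M (Fin.last j) s = T (fun k => if k = s then 1 else 0) (Fin.last j) := by
      rw [hM, LinearMap.toMatrix'_apply]; exact congrArg (fun v => T v (Fin.last j)) (by funext k; rw [Pi.single_apply])
    have hsingle : (fun k : Fin (j+1) => if k = s then (1:F) else 0) = Pi.single s 1 := by
      funext k
      rw [Pi.single_apply]
    have hlowlast : lowP (Pi.single s 1) (Fin.last j) = 0 := by
      simp only [hlowP, LinearMap.coe_mk, AddHom.coe_mk]
      rw [if_neg]
      simp only [Fin.val_last]
      omega
    have hεY : ((Y (highP (Pi.single s 1)) : E) : Fin (j+1) → F) (Fin.last j)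
        = δ (highP (Pi.single s 1)) := hYlast _
    rw [hMrs, hsingle, hTapp, Pi.add_apply, hlowlast, zero_add, hεY]
    show d ⬝ᵥ ((highP (Pi.single s 1) : E) : Fin (j+1) → F) = d s
    have : ∀ k : Fin (j+1), d k * ((highP (Pi.single s 1) : E) : Fin (j+1) → F) k
        = if k = s then d s else 0 := by
      intro k
      simp only [hhighP, LinearMap.coe_mk, AddHom.coe_mk]
      by_cases hks : k = s
      · subst hks
        by_cases h : (k : ℕ) < i
        · rw [if_pos h, if_pos rfl, hd k h, mul_zero]
        · rw [if_neg h, if_pos rfl, Pi.single_eq_same, mul_one]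
      · rw [if_neg hks]
        by_cases h : (k : ℕ) < i
        · rw [if_pos h, mul_zero]
        · rw [if_neg h, Pi.single_eq_of_ne hks, mul_zero]
    unfold dotProduct
    rw [Finset.sum_congr rfl (fun k _ => this k)]
    rw [Finset.sum_ite_eq' Finset.univ s (fun _ => d s)]
    rw [if_pos (Finset.mem_univ s)]

/-- Transpose of an invertible matrix, as a unit. -/
def GLtrans {n : ℕ} (u : GL (Fin n) F) : GL (Fin n) F where
  val := u.valᵀ
  inv := u.invᵀ
  val_inv := by rw [← Matrix.transpose_mul, u.inv_val, Matrix.transpose_one]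
  inv_val := by rw [← Matrix.transpose_mul, u.val_inv, Matrix.transpose_one]

lemma GLtrans_val {n : ℕ} (u : GL (Fin n) F) :
    (GLtrans u : Matrix (Fin n) (Fin n) F) = (u : Matrix (Fin n) (Fin n) F)ᵀ := rfl

lemma inHblock_GLtrans {n i : ℕ} (u : GL (Fin n) F) (hu : inHblock i u) :
    inHblock i (GLtrans u) := by
  intro r s hrs
  have h1 := hu s r hrs.symm
  rw [GLtrans_val]
  show (u : Matrix (Fin n) (Fin n) F) s r = _
  rw [h1]
  by_cases h : r = s
  · rw [if_pos h, if_pos h.symm]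
  · rw [if_neg h, if_neg (Ne.symm h)]

lemma inHblock_inv {n i : ℕ} (u : GL (Fin n) F) (hu : inHblock i u) :
    inHblock i u⁻¹ := by
  intro r s hrs
  have hval : ((u⁻¹ : GL (Fin n) F) : Matrix (Fin n) (Fin n) F) = u.inv := rfl
  rcases hrs with hr | hs
  · have h1 : (u : Matrix (Fin n) (Fin n) F) * u.inv = 1 := u.val_inv
    have h2 : ((u : Matrix (Fin n) (Fin n) F) * u.inv) r s = (1 : Matrix (Fin n) (Fin n) F) r s := by
      rw [h1]
    rw [Matrix.mul_apply] at h2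
    have h3 : ∀ k : Fin n, (u : Matrix (Fin n) (Fin n) F) r k * u.inv k s
        = if k = r then u.inv k s else 0 := by
      intro k
      rw [hu r k (Or.inl hr)]
      by_cases h : r = k
      · rw [if_pos h, if_pos h.symm, one_mul]
      · rw [if_neg h, if_neg (Ne.symm h), zero_mul]
    rw [Finset.sum_congr rfl (fun k _ => h3 k), Finset.sum_ite_eq' Finset.univ r _,
      if_pos (Finset.mem_univ r)] at h2
    rw [hval, h2, Matrix.one_apply]
  · have h1 : u.inv * (u : Matrix (Fin n) (Fin n) F) = 1 := u.inv_val
    have h2 : (u.inv * (u : Matrix (Fin n) (Fin n) F)) r s = (1 : Matrix (Fin n) (Fin n) F) r s := by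
      rw [h1]
    rw [Matrix.mul_apply] at h2
    have h3 : ∀ k : Fin n, u.inv r k * (u : Matrix (Fin n) (Fin n) F) k s
        = if k = s then u.inv r k else 0 := by
      intro k
      rw [hu k s (Or.inr hs)]
      by_cases h : k = s
      · rw [if_pos h, if_pos h, mul_one]
      · rw [if_neg h, if_neg h, mul_zero]
    rw [Finset.sum_congr rfl (fun k _ => h3 k), Finset.sum_ite_eq' Finset.univ s _,
      if_pos (Finset.mem_univ s)] at h2
    rw [hval, h2, Matrix.one_apply]

lemma exists_cd (i j : ℕ) (h3i : 3 * i ≤ j) (X : GL (Fin (j + 1)) F) :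
    ∃ c d : Fin (j + 1) → F,
      (∀ r : Fin (j + 1), (r : ℕ) < i → c r = 0) ∧
      (∀ r : Fin (j + 1), (r : ℕ) < i → d r = 0) ∧
      (∀ r : Fin (j + 1), (r : ℕ) < i → ((X : Matrix (Fin (j+1)) (Fin (j+1)) F) *ᵥ c) r = 0) ∧
      (∀ r : Fin (j + 1), (r : ℕ) < i →
        ((X : Matrix (Fin (j+1)) (Fin (j+1)) F)ᵀ *ᵥ d) r = 0) ∧
      d ⬝ᵥ ((X : Matrix (Fin (j+1)) (Fin (j+1)) F) *ᵥ c) = 1 := by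
  classical
  set XM : Matrix (Fin (j+1)) (Fin (j+1)) F := (X : Matrix (Fin (j+1)) (Fin (j+1)) F) with hXM
  have hin : i ≤ j + 1 := by omega
  set low : (Fin (j + 1) → F) →ₗ[F] (Fin i → F) :=
    LinearMap.funLeft F F (Fin.castLE hin) with hlow
  have hlowiff : ∀ v : Fin (j + 1) → F,
      low v = 0 ↔ ∀ r : Fin (j + 1), (r : ℕ) < i → v r = 0 := by
    intro v
    constructor
    · intro hv r hr
      have h1 := congrFun hv ⟨(r : ℕ), hr⟩
      have h2 : Fin.castLE hin ⟨(r : ℕ), hr⟩ = r := by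
        apply Fin.ext; rfl
      rw [hlow] at h1
      simpa [LinearMap.funLeft_apply, h2] using h1
    · intro hv
      funext t
      rw [hlow]
      simp only [LinearMap.funLeft_apply, Pi.zero_apply]
      exact hv _ t.isLt
  set Φ : (Fin (j + 1) → F) →ₗ[F] (Fin i → F) × (Fin i → F) :=
    LinearMap.prod low (low ∘ₗ XM.mulVecLin) with hΦ
  set Φ' : (Fin (j + 1) → F) →ₗ[F] (Fin i → F) × (Fin i → F) :=
    LinearMap.prod low (low ∘ₗ XMᵀ.mulVecLin) with hΦ'
  set K := LinearMap.ker Φ with hK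
  set K' := LinearMap.ker Φ' with hK'
  have hKmem : ∀ c, c ∈ K ↔
      ((∀ r : Fin (j + 1), (r : ℕ) < i → c r = 0) ∧
       (∀ r : Fin (j + 1), (r : ℕ) < i → (XM *ᵥ c) r = 0)) := by
    intro c
    rw [hK, LinearMap.mem_ker, hΦ]
    rw [LinearMap.prod_apply]
    rw [Prod.ext_iff]
    simp only [LinearMap.comp_apply, Matrix.mulVecLin_apply, Function.prod, Prod.fst_zero,
      Prod.snd_zero]
    rw [hlowiff, hlowiff]
  have hK'mem : ∀ d, d ∈ K' ↔
      ((∀ r : Fin (j + 1), (r : ℕ) < i → d r = 0) ∧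
       (∀ r : Fin (j + 1), (r : ℕ) < i → (XMᵀ *ᵥ d) r = 0)) := by
    intro d
    rw [hK', LinearMap.mem_ker, hΦ']
    rw [LinearMap.prod_apply]
    rw [Prod.ext_iff]
    simp only [LinearMap.comp_apply, Matrix.mulVecLin_apply, Function.prod, Prod.fst_zero,
      Prod.snd_zero]
    rw [hlowiff, hlowiff]
  have hfinpi : finrank F (Fin (j + 1) → F) = j + 1 := by
    rw [finrank_fin_fun]
  have hfinprod : finrank F ((Fin i → F) × (Fin i → F)) = i + i := by
    rw [finrank_prod, finrank_fin_fun]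
  have hrankK : i + 1 ≤ finrank F K := by
    have h1 := LinearMap.finrank_range_add_finrank_ker Φ
    have h2 : finrank F (LinearMap.range Φ) ≤ i + i := by
      calc finrank F (LinearMap.range Φ) ≤ finrank F ((Fin i → F) × (Fin i → F)) :=
            Submodule.finrank_le _
        _ = i + i := hfinprod
    rw [hfinpi, ← hK] at h1
    omega
  have key : ∃ c ∈ K, ∃ d ∈ K', d ⬝ᵥ (XM *ᵥ c) ≠ 0 := by
    by_contra hcon
    push_neg at hcon
    set up : (Fin i → F) →ₗ[F] (Fin (j + 1) → F) :=
      { toFun := fun a r => if h : (r : ℕ) < i then a ⟨(r : ℕ), h⟩ else 0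
        map_add' := by
          intro x y; funext r; by_cases h : (r : ℕ) < i <;> simp [h]
        map_smul' := by
          intro a x; funext r; by_cases h : (r : ℕ) < i <;> simp [h] } with hup
    have hupapply : ∀ (a : Fin i → F) (r : Fin (j + 1)),
        up a r = if h : (r : ℕ) < i then a ⟨(r : ℕ), h⟩ else 0 := fun a r => rfl
    have hupsingle : ∀ t : Fin i, up (Pi.single t 1) = Pi.single (Fin.castLE hin t) 1 := by
      intro t
      funext r
      rw [hupapply]
      by_cases h : (r : ℕ) < i
      · rw [dif_pos h]
        by_cases ht : (r : ℕ) = (t : ℕ)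
        · have h1 : (⟨(r : ℕ), h⟩ : Fin i) = t := Fin.ext ht
          have h2 : r = Fin.castLE hin t := Fin.ext ht
          rw [h1, h2, Pi.single_eq_same, Pi.single_eq_same]
        · have h1 : (⟨(r : ℕ), h⟩ : Fin i) ≠ t := fun hc => ht (congrArg Fin.val hc)
          have h2 : r ≠ Fin.castLE hin t := fun hc => ht (congrArg Fin.val hc)
          rw [Pi.single_eq_of_ne h1, Pi.single_eq_of_ne h2]
      · rw [dif_neg h]
        have h2 : r ≠ Fin.castLE hin t := by
          intro hc
          apply h
          rw [hc]
          exact t.isLt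
        rw [Pi.single_eq_of_ne h2]
    set θ : ((Fin i → F) × (Fin i → F)) →ₗ[F] (Fin (j + 1) → F) :=
      up ∘ₗ LinearMap.fst F (Fin i → F) (Fin i → F)
        + XM.mulVecLin ∘ₗ up ∘ₗ LinearMap.snd F (Fin i → F) (Fin i → F) with hθ
    have hθapply : ∀ a b, θ (a, b) = up a + XM *ᵥ (up b) := fun a b => rfl
    set V₀ := LinearMap.range θ with hV₀
    have hV₀rank : finrank F V₀ ≤ i + i := by
      calc finrank F V₀ ≤ finrank F ((Fin i → F) × (Fin i → F)) := LinearMap.finrank_range_le θ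
        _ = i + i := hfinprod
    -- every vector of the form X *ᵥ c with c ∈ K lies in V₀
    have hU : ∀ c ∈ K, XM *ᵥ c ∈ V₀ := by
      intro c hc
      by_contra hnot
      obtain ⟨φ, hφx, hφmap⟩ := V₀.exists_dual_map_eq_bot_of_notMem hnot inferInstance
      set dv : Fin (j + 1) → F := fun k => φ (Pi.single k 1) with hdv
      have hφd : ∀ v : Fin (j + 1) → F, φ v = dv ⬝ᵥ v := by
        intro v
        conv_lhs => rw [pi_eq_sum_univ v]
        rw [map_sum]
        unfold dotProduct
        apply Finset.sum_congr rfl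
        intro k _
        rw [φ.map_smul]
        have : (fun j' => if k = j' then (1:F) else 0) = Pi.single k 1 := by
          funext j'
          rw [Pi.single_apply]
          by_cases h : j' = k
          · rw [if_pos h, if_pos h.symm]
          · rw [if_neg h, if_neg (Ne.symm h)]
        rw [this, smul_eq_mul, mul_comm, hdv]
      have hφV : ∀ v ∈ V₀, φ v = 0 := by
        intro v hv
        have h1 : φ v ∈ V₀.map φ := Submodule.mem_map_of_mem hv
        rw [hφmap] at h1
        exact (Submodule.mem_bot F).1 h1
      have hdK' : dv ∈ K' := by
        rw [hK'mem]
        constructor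
        · intro r hr
          rw [hdv]
          apply hφV
          rw [hV₀]
          refine ⟨(Pi.single ⟨(r : ℕ), hr⟩ 1, 0), ?_⟩
          rw [hθapply, map_zero, Matrix.mulVec_zero, add_zero, hupsingle]
          congr 1
        · intro r hr
          have h1 : (XMᵀ *ᵥ dv) r = φ (XM *ᵥ Pi.single r 1) := by
            rw [hφd, Matrix.mulVec_single_one]
            show XMᵀ r ⬝ᵥ dv = dv ⬝ᵥ XMᵀ r
            rw [dotProduct_comm]
          rw [h1]
          apply hφV
          rw [hV₀]
          refine ⟨(0, Pi.single ⟨(r : ℕ), hr⟩ 1), ?_⟩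
          rw [hθapply, map_zero, zero_add, hupsingle]
          congr 2
      have h2 := hcon c hc dv hdK'
      rw [← hφd] at h2
      exact hφx h2
    -- the image of K lies in V₀ ⊓ Esub
    have hUle : K.map XM.mulVecLin ≤ V₀ ⊓ Esub F i (j + 1) := by
      rintro u ⟨c, hc, rfl⟩
      rw [Matrix.mulVecLin_apply]
      constructor
      · exact hU c hc
      · exact ((hKmem c).1 hc).2
    -- the subspace C = range up has dimension i and meets V₀ ⊓ Esub trivially
    have hupinj : Function.Injective up := by
      intro a b hab
      funext t
      have h1 := congrFun hab (Fin.castLE hin t)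
      rw [hupapply, hupapply] at h1
      have h2 : ((Fin.castLE hin t : Fin (j + 1)) : ℕ) < i := t.isLt
      rw [dif_pos h2, dif_pos h2] at h1
      have h3 : (⟨((Fin.castLE hin t : Fin (j + 1)) : ℕ), h2⟩ : Fin i) = t := Fin.ext rfl
      rw [h3] at h1
      exact h1
    set C := LinearMap.range up with hC
    have hCrank : finrank F C = i := by
      show finrank F (LinearMap.range up) = i
      have h1 := LinearMap.finrank_range_add_finrank_ker up
      rw [LinearMap.ker_eq_bot.2 hupinj, finrank_bot, finrank_fin_fun] at h1
      omega
    have hdisj : (V₀ ⊓ Esub F i (j + 1)) ⊓ C = ⊥ := by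
      rw [Submodule.eq_bot_iff]
      rintro x ⟨⟨_, hxE⟩, hxC⟩
      obtain ⟨a, rfl⟩ := hxC
      funext r
      by_cases h : (r : ℕ) < i
      · exact hxE r h
      · rw [hupapply, dif_neg h]; rfl
    have hCle : C ≤ V₀ := by
      rintro x ⟨a, rfl⟩
      rw [hV₀]
      exact ⟨(a, 0), by rw [hθapply, map_zero, Matrix.mulVec_zero, add_zero]⟩
    have hsup : (V₀ ⊓ Esub F i (j + 1)) ⊔ C ≤ V₀ := sup_le inf_le_left hCle
    have hsum := Submodule.finrank_sup_add_finrank_inf_eq (V₀ ⊓ Esub F i (j + 1)) C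
    rw [hdisj, finrank_bot, hCrank] at hsum
    have hsuprank : finrank F ((V₀ ⊓ Esub F i (j + 1)) ⊔ C : Submodule F (Fin (j+1) → F))
        ≤ finrank F V₀ := Submodule.finrank_mono hsup
    have hinfrank : finrank F (V₀ ⊓ Esub F i (j + 1) : Submodule F (Fin (j+1) → F)) ≤ i := by
      have e1 : finrank F ((V₀ ⊓ Esub F i (j + 1)) ⊔ C : Submodule F (Fin (j+1) → F)) ≤ i + i :=
        le_trans hsuprank hV₀rank
      have e2 : finrank F (V₀ ⊓ Esub F i (j + 1) : Submodule F (Fin (j+1) → F)) + i ≤ i + i := by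
        calc finrank F (V₀ ⊓ Esub F i (j + 1) : Submodule F (Fin (j+1) → F)) + i
            = finrank F ((V₀ ⊓ Esub F i (j + 1)) ⊔ C : Submodule F (Fin (j+1) → F)) + 0 :=
              hsum.symm
          _ ≤ i + i := by simpa using e1
      exact Nat.le_of_add_le_add_right e2
    -- finrank of the image of K equals finrank of K
    set eX : (Fin (j + 1) → F) ≃ₗ[F] (Fin (j + 1) → F) :=
      LinearEquiv.ofLinear XM.mulVecLin (X.inv).mulVecLin
        (by rw [← Matrix.mulVecLin_mul, hXM, X.val_inv, Matrix.mulVecLin_one])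
        (by rw [← Matrix.mulVecLin_mul, hXM, X.inv_val, Matrix.mulVecLin_one]) with heX
    have hfr : finrank F (K.map XM.mulVecLin) = finrank F K := by
      have := LinearEquiv.finrank_map_eq eX K
      exact this
    have hle2 : finrank F (K.map XM.mulVecLin)
        ≤ finrank F (V₀ ⊓ Esub F i (j + 1) : Submodule F (Fin (j+1) → F)) :=
      Submodule.finrank_mono hUle
    have hfinal : i + 1 ≤ i := by
      calc i + 1 ≤ finrank F K := hrankK
        _ = finrank F (K.map XM.mulVecLin) := hfr.symm
        _ ≤ finrank F (V₀ ⊓ Esub F i (j + 1) : Submodule F (Fin (j+1) → F)) := hle2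
        _ ≤ i := hinfrank
    omega
  obtain ⟨c, hc, d, hd, hpair⟩ := key
  set a : F := d ⬝ᵥ (XM *ᵥ c) with ha
  refine ⟨c, a⁻¹ • d, ((hKmem c).1 hc).1, ?_, ((hKmem c).1 hc).2, ?_, ?_⟩
  · intro r hr
    rw [Pi.smul_apply, ((hK'mem d).1 hd).1 r hr, smul_zero]
  · intro r hr
    rw [Matrix.mulVec_smul, Pi.smul_apply, ((hK'mem d).1 hd).2 r hr, smul_zero]
  · rw [smul_dotProduct, ← ha, smul_eq_mul, inv_mul_cancel₀ hpair]

/-- for `j ≥ 3i`, the natural map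
`H_{i,j}\GL_j(F_q)/H_{i,j} → H_{i,j+1}\GL_{j+1}(F_q)/H_{i,j+1}` induced by the
standard inclusion is surjective: every `X ∈ GL_{j+1}(F_q)` equals
`h ⬝ ι(g) ⬝ h'` for some `h, h' ∈ H_{i,j+1}` and `g ∈ GL_j(F_q)`. -/
theorem stmt_18 (F : Type) [Field F] [Fintype F] (i j : ℕ) (h3i : 3 * i ≤ j)
    (X : GL (Fin (j + 1)) F) :
    ∃ h h' : GL (Fin (j + 1)) F, inHblock i h ∧ inHblock i h' ∧
      ∃ g : GL (Fin j) F,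
        (X : Matrix (Fin (j + 1)) (Fin (j + 1)) F)
          = (h : Matrix (Fin (j + 1)) (Fin (j + 1)) F)
            * extMat (g : Matrix (Fin j) (Fin j) F)
            * (h' : Matrix (Fin (j + 1)) (Fin (j + 1)) F) := by
  classical
  have hij : i ≤ j := by omega
  set XM : Matrix (Fin (j+1)) (Fin (j+1)) F := (X : Matrix (Fin (j+1)) (Fin (j+1)) F) with hXM
  obtain ⟨c, d, hc_low, hd_low, hXc_low, hXd_low, hpair⟩ := exists_cd i j h3i X
  obtain ⟨h₀, hh₀block, hh₀w, hh₀row⟩ := lemA i j hij (XM *ᵥ c) d hXc_low hd_low hpair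
  have hpair2 : c ⬝ᵥ (XMᵀ *ᵥ d) = 1 := by
    rw [Matrix.dotProduct_mulVec, Matrix.vecMul_transpose, dotProduct_comm]
    exact hpair
  obtain ⟨p₀, hp₀block, hp₀w, hp₀row⟩ := lemA i j hij (XMᵀ *ᵥ d) c hXd_low hc_low hpair2
  set q : GL (Fin (j+1)) F := GLtrans p₀ with hq
  set U : GL (Fin (j+1)) F := h₀ * X * q with hU
  set M : Matrix (Fin (j+1)) (Fin (j+1)) F := (U : Matrix (Fin (j+1)) (Fin (j+1)) F) with hM
  have hMval : M = (h₀ : Matrix (Fin (j+1)) (Fin (j+1)) F) * XM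
      * (q : Matrix (Fin (j+1)) (Fin (j+1)) F) := by
    rw [hM, hU, Units.val_mul, Units.val_mul, hXM]
  have hcol : ∀ r, M r (Fin.last j) = (Pi.single (Fin.last j) 1 : Fin (j+1) → F) r := by
    intro r
    have h1 : (q : Matrix (Fin (j+1)) (Fin (j+1)) F) *ᵥ Pi.single (Fin.last j) 1 = c := by
      rw [hq, GLtrans_val, Matrix.mulVec_single_one]
      funext s; exact hp₀row s
    have h2 : M *ᵥ Pi.single (Fin.last j) 1 = Pi.single (Fin.last j) 1 := by
      rw [hMval, ← Matrix.mulVec_mulVec, ← Matrix.mulVec_mulVec, h1, hh₀w]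
    have h3 : M r (Fin.last j) = (M *ᵥ Pi.single (Fin.last j) 1) r := by
      rw [Matrix.mulVec_single_one]; rfl
    rw [h3, h2]
  have hrow : ∀ s, M (Fin.last j) s = (Pi.single (Fin.last j) 1 : Fin (j+1) → F) s := by
    intro s
    have h1 : Pi.single (Fin.last j) 1 ᵥ* (h₀ : Matrix (Fin (j+1)) (Fin (j+1)) F) = d := by
      rw [Matrix.single_one_vecMul]
      funext s'; exact hh₀row s'
    have h2 : d ᵥ* XM = XMᵀ *ᵥ d := (Matrix.mulVec_transpose XM d).symm
    have h3 : (XMᵀ *ᵥ d) ᵥ* (q : Matrix (Fin (j+1)) (Fin (j+1)) F)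
        = Pi.single (Fin.last j) 1 := by
      rw [hq, GLtrans_val, Matrix.vecMul_transpose]
      exact hp₀w
    have h4 : Pi.single (Fin.last j) 1 ᵥ* M = Pi.single (Fin.last j) 1 := by
      rw [hMval, ← Matrix.vecMul_vecMul, ← Matrix.vecMul_vecMul, h1, h2, h3]
    have h5 : M (Fin.last j) s = (Pi.single (Fin.last j) 1 ᵥ* M) s := by
      rw [Matrix.single_one_vecMul]; rfl
    rw [h5, h4]
  set Minv : Matrix (Fin (j+1)) (Fin (j+1)) F :=
    ((U⁻¹ : GL (Fin (j+1)) F) : Matrix (Fin (j+1)) (Fin (j+1)) F) with hMinv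
  have hMN : M * Minv = 1 := U.mul_inv
  have hNM : Minv * M = 1 := U.inv_mul
  set G := M.submatrix Fin.castSucc Fin.castSucc with hG
  set Ginv := Minv.submatrix Fin.castSucc Fin.castSucc with hGinv
  have hcastne : ∀ a : Fin j, Fin.castSucc a ≠ Fin.last j := by
    intro a
    exact (Fin.castSucc_lt_last a).ne
  have hGG : G * Ginv = 1 := by
    ext a b
    rw [Matrix.mul_apply]
    have h7 : (M * Minv) (Fin.castSucc a) (Fin.castSucc b)
        = (1 : Matrix (Fin (j+1)) (Fin (j+1)) F) (Fin.castSucc a) (Fin.castSucc b) := by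
      rw [hMN]
    rw [Matrix.mul_apply, Fin.sum_univ_castSucc] at h7
    have h8 : M (Fin.castSucc a) (Fin.last j) = 0 := by
      rw [hcol]
      exact Pi.single_eq_of_ne (hcastne a) 1
    rw [h8, zero_mul, add_zero] at h7
    calc (∑ k : Fin j, G a k * Ginv k b)
        = ∑ k : Fin j, M (Fin.castSucc a) (Fin.castSucc k)
            * Minv (Fin.castSucc k) (Fin.castSucc b) :=
          Finset.sum_congr rfl (fun k _ => rfl)
      _ = (1 : Matrix (Fin (j+1)) (Fin (j+1)) F) (Fin.castSucc a) (Fin.castSucc b) := h7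
      _ = (1 : Matrix (Fin j) (Fin j) F) a b := by
          rw [Matrix.one_apply, Matrix.one_apply]
          by_cases hab : a = b
          · rw [if_pos hab, if_pos (congrArg Fin.castSucc hab)]
          · rw [if_neg hab, if_neg (fun hc => hab (Fin.castSucc_injective j hc))]
  have hGinvG : Ginv * G = 1 := by
    ext a b
    rw [Matrix.mul_apply]
    have h7 : (Minv * M) (Fin.castSucc a) (Fin.castSucc b)
        = (1 : Matrix (Fin (j+1)) (Fin (j+1)) F) (Fin.castSucc a) (Fin.castSucc b) := by
      rw [hNM]
    rw [Matrix.mul_apply, Fin.sum_univ_castSucc] at h7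
    have h8 : M (Fin.last j) (Fin.castSucc b) = 0 := by
      rw [hrow]
      exact Pi.single_eq_of_ne (hcastne b) 1
    rw [h8, mul_zero, add_zero] at h7
    calc (∑ k : Fin j, Ginv a k * G k b)
        = ∑ k : Fin j, Minv (Fin.castSucc a) (Fin.castSucc k)
            * M (Fin.castSucc k) (Fin.castSucc b) :=
          Finset.sum_congr rfl (fun k _ => rfl)
      _ = (1 : Matrix (Fin (j+1)) (Fin (j+1)) F) (Fin.castSucc a) (Fin.castSucc b) := h7
      _ = (1 : Matrix (Fin j) (Fin j) F) a b := by
          rw [Matrix.one_apply, Matrix.one_apply]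
          by_cases hab : a = b
          · rw [if_pos hab, if_pos (congrArg Fin.castSucc hab)]
          · rw [if_neg hab, if_neg (fun hc => hab (Fin.castSucc_injective j hc))]
  have hext : extMat G = M := by
    funext r s
    show (extMat G) r s = M r s
    unfold extMat
    by_cases hr : (r : ℕ) < j
    · by_cases hs : (s : ℕ) < j
      · rw [dif_pos hr, dif_pos hs]
        show M (Fin.castSucc ⟨(r : ℕ), hr⟩) (Fin.castSucc ⟨(s : ℕ), hs⟩) = M r s
        congr 1
      · have hs' : s = Fin.last j := by
          apply Fin.ext
          have := s.isLt
          simp only [Fin.val_last]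
          omega
        rw [dif_pos hr, dif_neg hs, hs', hcol r]
        symm
        apply Pi.single_eq_of_ne
        intro hre
        rw [hre] at hr
        simp only [Fin.val_last] at hr
        omega
    · have hr' : r = Fin.last j := by
        apply Fin.ext
        have := r.isLt
        simp only [Fin.val_last]
        omega
      rw [dif_neg hr, hr']
      by_cases hs : (s : ℕ) < j
      · rw [if_pos hs, hrow s]
        symm
        apply Pi.single_eq_of_ne
        intro hse
        rw [hse] at hs
        simp only [Fin.val_last] at hs
        omega
      · have hs' : s = Fin.last j := by
          apply Fin.ext
          have := s.isLt
          simp only [Fin.val_last]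
          omega
        rw [if_neg hs, hs', hrow (Fin.last j), Pi.single_eq_same]
  refine ⟨h₀⁻¹, q⁻¹, inHblock_inv h₀ hh₀block,
    inHblock_inv q (hq ▸ inHblock_GLtrans p₀ hp₀block), ⟨G, Ginv, hGG, hGinvG⟩, ?_⟩
  have hXeq : X = h₀⁻¹ * U * q⁻¹ := by
    rw [hU]
    group
  show XM = _
  rw [hXM]
  have h10 := congrArg Units.val hXeq
  rw [Units.val_mul, Units.val_mul] at h10
  rw [h10]
  show (↑h₀⁻¹ : Matrix (Fin (j+1)) (Fin (j+1)) F) * M * (↑q⁻¹ : Matrix (Fin (j+1)) (Fin (j+1)) F)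
      = (↑h₀⁻¹ : Matrix (Fin (j+1)) (Fin (j+1)) F) * extMat G
        * (↑q⁻¹ : Matrix (Fin (j+1)) (Fin (j+1)) F)
  rw [hext]
end
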